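/- arXiv:2508.11585 — 6 statements merged into one kernel-verified Lean document; each statement's English description precedes it below -/
import Mathlib

section
/- Let n and k be positive integers and let 𝒦_{n,k} be the family of all graphs with at most n vertices that are disjoint unions of cliques each having at most k vertices. Then 𝒰(𝒦_{n,k}) = ∑_{i=1}^{k} ⌊n/i⌋, i.e., the minimum number of vertices of an induced-universal graph for 𝒦_{n,k} equals ∑_{i=1}^{k} ⌊n/i⌋. -/
/-- The minimum number of vertices of an induced-universal graph for a family `F`
of graphs (each graph given together with its number of vertices).  A graph `U` is
induced-universal for `F` if every graph of `F` is isomorphic to an induced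
subgraph of `U`, i.e. admits a graph embedding into `U`. -/
noncomputable def uNum (F : Set (Σ m : ℕ, SimpleGraph (Fin m))) : ℕ :=
  sInf {N | ∃ U : SimpleGraph (Fin N), ∀ G ∈ F, Nonempty (G.2 ↪g U)}

/-- The family `𝒦_{n,k}` of all graphs with at most `n` vertices that are disjoint
unions of cliques, each clique having at most `k` vertices: adjacency is
"transitive" (each connected component is a clique) and every connected component
has at most `k` vertices. -/
def cliqueUnionFamily (n k : ℕ) : Set (Σ m : ℕ, SimpleGraph (Fin m)) :=
  {G | G.1 ≤ n ∧
    (∀ u v w : Fin G.1, G.2.Adj u v → G.2.Adj v w → u ≠ w → G.2.Adj u w) ∧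
    (∀ v : Fin G.1, {w | G.2.Reachable v w}.ncard ≤ k)}

open Finset

def blocksGraph (i m : ℕ) : SimpleGraph (Fin m) where
  Adj u v := u.val / i = v.val / i ∧ u ≠ v
  symm := ⟨fun u v ⟨h1, h2⟩ => ⟨h1.symm, h2.symm⟩⟩
  loopless := ⟨fun u ⟨_, h2⟩ => h2 rfl⟩

lemma walk_eq_or_adj {V : Type*} (G : SimpleGraph V)
    (htr : ∀ u v w, G.Adj u v → G.Adj v w → u ≠ w → G.Adj u w) :
    ∀ {u v : V}, G.Reachable u v → u = v ∨ G.Adj u v := by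
  intro u v h
  obtain ⟨p⟩ := h
  induction p with
  | nil => exact Or.inl rfl
  | @cons a b c hab p ih =>
    rcases ih with rfl | h
    · exact Or.inr hab
    · rcases eq_or_ne a c with rfl | hac
      · exact Or.inl rfl
      · exact Or.inr (htr _ _ _ hab h hac)

lemma blocksGraph_mem (n k i : ℕ) (hi1 : 1 ≤ i) (hik : i ≤ k) :
    (⟨i * (n / i), blocksGraph i (i * (n / i))⟩ : Σ m : ℕ, SimpleGraph (Fin m)) ∈
      cliqueUnionFamily n k := by
  refine ⟨?_, ?_, ?_⟩
  · exact le_trans (le_of_eq (Nat.mul_comm i (n/i))) (Nat.div_mul_le_self n i)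
  · rintro u v w ⟨h1, _⟩ ⟨h2, _⟩ hne
    exact ⟨h1.trans h2, hne⟩
  · intro v
    have hsub : {w | (blocksGraph i (i * (n / i))).Reachable v w} ⊆
        {w : Fin (i * (n/i)) | w.val / i = v.val / i} := by
      intro w hw
      rcases walk_eq_or_adj (blocksGraph i (i * (n / i))) (fun a b c h1 h2 hne => ⟨h1.1.trans h2.1, hne⟩) hw with rfl | ha
      · rfl
      · exact ha.1.symm
    have : {w : Fin (i * (n/i)) | w.val / i = v.val / i}.ncard ≤ i := by
      have := Set.ncard_le_ncard_of_injOn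
        (s := {w : Fin (i * (n/i)) | w.val / i = v.val / i}) (t := (Set.univ : Set (Fin i)))
        (fun w : Fin (i * (n/i)) => (⟨w.val % i, Nat.mod_lt _ hi1⟩ : Fin i))
        (fun a _ => Set.mem_univ _) ?_ (Set.finite_univ)
      · calc {w : Fin (i * (n/i)) | w.val / i = v.val / i}.ncard
            ≤ (Set.univ : Set (Fin i)).ncard := this
          _ = i := by rw [Set.ncard_univ, Nat.card_eq_fintype_card, Fintype.card_fin]
      · intro a ha b hb hab
        simp only [Set.mem_setOf_eq] at ha hb
        have : a.val = b.val := by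
          have hmod : a.val % i = b.val % i := congrArg Fin.val hab
          calc a.val = i * (a.val / i) + a.val % i := (Nat.div_add_mod a.val i).symm
            _ = i * (b.val / i) + b.val % i := by rw [ha, hb, hmod]
            _ = b.val := Nat.div_add_mod b.val i
        exact Fin.ext this
    exact le_trans (le_trans (Set.ncard_le_ncard hsub (Set.toFinite _)) this) hik



lemma exists_sdr {V ι : Type*} [DecidableEq V] [DecidableEq ι] [Nonempty V]
    (U : SimpleGraph V) (sz : ι → ℕ) (C : ι → Finset V) :
    ∀ A : Finset ι,
    (∀ a ∈ A, 1 ≤ sz a) →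
    (∀ a ∈ A, sz a ≤ (C a).card) →
    (∀ a ∈ A, ∀ u ∈ C a, ∀ w ∈ C a, u ≠ w → U.Adj u w) →
    (∀ a ∈ A, ∀ b ∈ A, a ≠ b → sz a = sz b →
      ∀ u ∈ C a, ∀ w ∈ C b, u ≠ w ∧ ¬U.Adj u w) →
    ∃ f : ι → V, Set.InjOn f A ∧ ∀ a ∈ A, f a ∈ C a := by
  intro A
  induction A using Finset.strongInduction with
  | _ A ih =>
    intro hpos hcard hclique hsep
    rcases A.eq_empty_or_nonempty with rfl | hne
    · exact ⟨fun _ => Classical.arbitrary V, by simp, by simp⟩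
    obtain ⟨a, ha, hamax⟩ := A.exists_max_image sz hne
    set A' := A.erase a with hA'
    have hsub : A' ⊂ A := Finset.erase_ssubset ha
    obtain ⟨f, hinj, hmem⟩ := ih A' hsub
      (fun b hb => hpos b (Finset.mem_of_mem_erase hb))
      (fun b hb => hcard b (Finset.mem_of_mem_erase hb))
      (fun b hb => hclique b (Finset.mem_of_mem_erase hb))
      (fun b hb c hc => hsep b (Finset.mem_of_mem_erase hb) c (Finset.mem_of_mem_erase hc))
    -- the cliques of A' that f maps into C a
    set S := A'.filter (fun b => f b ∈ C a) with hS
    have hSsz : ∀ b ∈ S, sz b ∈ Finset.Ico 1 (sz a) := by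
      intro b hb
      rw [Finset.mem_filter] at hb
      obtain ⟨hb', hfb⟩ := hb
      have hbA : b ∈ A := Finset.mem_of_mem_erase hb'
      have hba : b ≠ a := Finset.ne_of_mem_erase hb'
      have hne' : sz b ≠ sz a := by
        intro hEq
        have := (hsep a ha b hbA (Ne.symm hba) hEq.symm (f b) hfb (f b) (hmem b hb')).1
        exact this rfl
      exact Finset.mem_Ico.mpr ⟨hpos b hbA, lt_of_le_of_ne (hamax b hbA) hne'⟩
    have hSinj : Set.InjOn sz S := by
      intro b hb c hc hbc
      simp only [S, Finset.coe_filter, Set.mem_setOf_eq] at hb hc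
      obtain ⟨hb', hfb⟩ := hb
      obtain ⟨hc', hfc⟩ := hc
      by_contra hne'
      have hbA : b ∈ A := Finset.mem_of_mem_erase hb'
      have hcA : c ∈ A := Finset.mem_of_mem_erase hc'
      have h1 := hsep b hbA c hcA hne' hbc (f b) (hmem b hb') (f c) (hmem c hc')
      exact h1.2 (hclique a ha (f b) hfb (f c) hfc h1.1)
    have hScard : S.card ≤ sz a - 1 := by
      calc S.card ≤ (Finset.Ico 1 (sz a)).card :=
            Finset.card_le_card_of_injOn sz (fun b hb => hSsz b hb) hSinj
        _ = sz a - 1 := by rw [Nat.card_Ico]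
    have hT : (S.image f).card < (C a).card := by
      calc (S.image f).card ≤ S.card := Finset.card_image_le
        _ ≤ sz a - 1 := hScard
        _ < sz a := Nat.sub_lt (hpos a ha) one_pos
        _ ≤ (C a).card := hcard a ha
    have : ∃ v ∈ C a, v ∉ S.image f := by
      by_contra h
      push_neg at h
      exact absurd (Finset.card_le_card h) (not_le.mpr hT)
    obtain ⟨v, hv, hvT⟩ := this
    refine ⟨Function.update f a v, ?_, ?_⟩
    · intro x hx y hy hxy
      simp only [Finset.coe_insert, Set.mem_insert_iff, Finset.mem_coe] at hx hy
      rcases eq_or_ne x a with rfl | hxa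
      · rcases eq_or_ne y x with rfl | hyx
        · rfl
        · exfalso
          have hy' : y ∈ A' := Finset.mem_erase.mpr ⟨hyx, hy⟩
          rw [Function.update_self, Function.update_of_ne hyx] at hxy
          have : y ∈ S := Finset.mem_filter.mpr ⟨hy', by rw [← hxy]; exact hv⟩
          exact hvT (by rw [hxy]; exact Finset.mem_image_of_mem f this)
      · rcases eq_or_ne y a with rfl | hya
        · exfalso
          have hx' : x ∈ A' := Finset.mem_erase.mpr ⟨hxa, hx⟩
          rw [Function.update_self, Function.update_of_ne hxa] at hxy
          have : x ∈ S := Finset.mem_filter.mpr ⟨hx', by rw [hxy]; exact hv⟩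
          exact hvT (hxy ▸ Finset.mem_image_of_mem f this)
        · rw [Function.update_of_ne hxa, Function.update_of_ne hya] at hxy
          exact hinj (Finset.mem_erase.mpr ⟨hxa, hx⟩) (Finset.mem_erase.mpr ⟨hya, hy⟩) hxy
    · intro b hb
      rcases eq_or_ne b a with rfl | hba
      · rw [Function.update_self]; exact hv
      · rw [Function.update_of_ne hba]
        exact hmem b (Finset.mem_erase.mpr ⟨hba, hb⟩)


lemma lower_bound (n k N : ℕ) (hn : 0 < n) (hk : 0 < k) (U : SimpleGraph (Fin N))
    (hU : ∀ G ∈ cliqueUnionFamily n k, Nonempty (G.2 ↪g U)) :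
    ∑ i ∈ Finset.Icc 1 k, n / i ≤ N := by
  classical
  have hemb : ∀ i ∈ Finset.Icc 1 k, Nonempty (blocksGraph i (i * (n/i)) ↪g U) := by
    intro i hi
    rw [Finset.mem_Icc] at hi
    exact hU _ (blocksGraph_mem n k i hi.1 hi.2)
  have h1k : (1 : ℕ) ∈ Finset.Icc 1 k := Finset.mem_Icc.mpr ⟨le_refl 1, hk⟩
  have hNne : Nonempty (Fin N) := by
    obtain ⟨e⟩ := hemb 1 h1k
    exact ⟨e ⟨0, by simpa using hn⟩⟩
  have φ : ∀ i ∈ Finset.Icc 1 k, (blocksGraph i (i * (n/i)) ↪g U) :=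
    fun i hi => (hemb i hi).some
  set A : Finset ((_ : ℕ) × ℕ) := (Finset.Icc 1 k).sigma (fun i => Finset.range (n / i))
    with hA
  have hposA : ∀ p ∈ A, 1 ≤ p.1 ∧ p.1 ≤ k ∧ p.2 < n / p.1 := by
    intro p hp
    rw [hA, Finset.mem_sigma, Finset.mem_Icc, Finset.mem_range] at hp
    exact ⟨hp.1.1, hp.1.2, hp.2⟩
  -- the vertex sets of the cliques
  have hbnd : ∀ (p : (_ : ℕ) × ℕ), p ∈ A → ∀ t : Fin p.1,
      p.2 * p.1 + t.val < p.1 * (n / p.1) := by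
    intro p hp t
    obtain ⟨h1, _, h3⟩ := hposA p hp
    have ha : p.2 * p.1 + t.val < (p.2 + 1) * p.1 := by
      rw [Nat.succ_mul]
      have := t.isLt
      omega
    have hb : (p.2 + 1) * p.1 ≤ (n / p.1) * p.1 := Nat.mul_le_mul_right _ h3
    calc p.2 * p.1 + t.val < (p.2 + 1) * p.1 := ha
      _ ≤ (n / p.1) * p.1 := hb
      _ = p.1 * (n / p.1) := Nat.mul_comm _ _
  set C : ((_ : ℕ) × ℕ) → Finset (Fin N) := fun p =>
    if h : p ∈ A then
      Finset.image (fun t : Fin p.1 => φ p.1 (Finset.mem_sigma.mp h).1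
        ⟨p.2 * p.1 + t.val, hbnd p h t⟩) Finset.univ
    else ∅ with hCdef
  have hdiv : ∀ (p : (_ : ℕ) × ℕ), p ∈ A → ∀ t : Fin p.1,
      (p.2 * p.1 + t.val) / p.1 = p.2 := by
    intro p hp t
    obtain ⟨h1, _, _⟩ := hposA p hp
    rw [Nat.mul_comm, Nat.mul_add_div h1, Nat.div_eq_of_lt t.isLt, Nat.add_zero]
  have hCcard : ∀ p ∈ A, p.1 ≤ (C p).card := by
    intro p hp
    rw [hCdef]
    simp only [dif_pos hp]
    rw [Finset.card_image_of_injective _ ?_, Finset.card_univ, Fintype.card_fin]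
    intro t s hts
    have := (φ p.1 (Finset.mem_sigma.mp hp).1).injective hts
    have h2 : p.2 * p.1 + t.val = p.2 * p.1 + s.val := congrArg Fin.val this
    exact Fin.ext (by omega)
  have hCmem : ∀ p (hp : p ∈ A), ∀ v ∈ C p, ∃ x : Fin (p.1 * (n / p.1)),
      v = φ p.1 (Finset.mem_sigma.mp hp).1 x ∧ x.val / p.1 = p.2 := by
    intro p hp v hv
    rw [hCdef] at hv
    simp only [dif_pos hp, Finset.mem_image, Finset.mem_univ, true_and] at hv
    obtain ⟨t, rfl⟩ := hv
    exact ⟨_, rfl, hdiv p hp t⟩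
  have hclique : ∀ p ∈ A, ∀ u ∈ C p, ∀ w ∈ C p, u ≠ w → U.Adj u w := by
    intro p hp u hu w hw huw
    obtain ⟨x, rfl, hx⟩ := hCmem p hp u hu
    obtain ⟨y, rfl, hy⟩ := hCmem p hp w hw
    have hxy : x ≠ y := fun h => huw (by rw [h])
    exact (φ p.1 (Finset.mem_sigma.mp hp).1).map_rel_iff.mpr ⟨hx.trans hy.symm, hxy⟩
  have hsep : ∀ p ∈ A, ∀ q ∈ A, p ≠ q → p.1 = q.1 →
      ∀ u ∈ C p, ∀ w ∈ C q, u ≠ w ∧ ¬U.Adj u w := by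
    rintro ⟨i, j⟩ hp ⟨i', j'⟩ hq hpq h1
    cases h1
    have hjj : j ≠ j' := fun h => hpq (by rw [h])
    intro u hu w hw
    obtain ⟨x, rfl, hx⟩ := hCmem _ hp u hu
    obtain ⟨y, rfl, hy⟩ := hCmem _ hq w hw
    have hxy : ¬ (blocksGraph i (i * (n/i))).Adj x y := by
      rintro ⟨hb, _⟩
      exact hjj (hx.symm.trans (hb.trans hy))
    have hxyne : x ≠ y := by
      intro h
      have hb : (x.val) / i = (y.val) / i := by rw [h]
      exact hjj (hx.symm.trans (hb.trans hy))
    constructor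
    · intro h
      exact hxyne ((φ i (Finset.mem_sigma.mp hp).1).injective h)
    · intro h
      exact hxy ((φ i (Finset.mem_sigma.mp hp).1).map_rel_iff.mp h)
  obtain ⟨f, hinj, hmem⟩ := exists_sdr U (fun p => p.1) C A
    (fun p hp => (hposA p hp).1) hCcard hclique hsep
  calc ∑ i ∈ Finset.Icc 1 k, n / i
      = A.card := by rw [hA, Finset.card_sigma]; simp
    _ = (A.image f).card := (Finset.card_image_of_injOn hinj).symm
    _ ≤ Fintype.card (Fin N) := Finset.card_le_univ _
    _ = N := Fintype.card_fin N


lemma upper_bound (n k : ℕ) (hn : 0 < n) (hk : 0 < k) :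
    ∃ U : SimpleGraph (Fin (∑ i ∈ Finset.Icc 1 k, n / i)),
      ∀ G ∈ cliqueUnionFamily n k, Nonempty (G.2 ↪g U) := by
  classical
  set A : Finset ((_ : ℕ) × ℕ) := (Finset.Icc 1 k).sigma (fun i => Finset.range (n / i))
    with hA
  have hcardA : A.card = ∑ i ∈ Finset.Icc 1 k, n / i := by
    rw [hA, Finset.card_sigma]; simp
  rw [← hcardA]
  set e : ↥A ≃ Fin A.card := A.equivFin with he
  refine ⟨{ Adj := fun x y => ((e.symm x) : (_ : ℕ) × ℕ).2 = ((e.symm y) : (_ : ℕ) × ℕ).2 ∧ x ≠ y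
            symm := ⟨fun x y h => ⟨h.1.symm, h.2.symm⟩⟩
            loopless := ⟨fun x h => h.2 rfl⟩ }, ?_⟩
  rintro ⟨m, Gm⟩ ⟨hm, htr, hcomp⟩
  simp only at hm htr hcomp ⊢
  haveI : Fintype Gm.ConnectedComponent := Fintype.ofFinite _
  set fs : Gm.ConnectedComponent → Finset (Fin m) :=
    fun c => (c.supp).toFinite.toFinset with hfs
  have hmemfs : ∀ v : Fin m, v ∈ fs (Gm.connectedComponentMk v) := by
    intro v
    rw [hfs, Set.Finite.mem_toFinset, SimpleGraph.ConnectedComponent.mem_supp_iff]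
  have hfs_eq : ∀ c : Gm.ConnectedComponent, ∀ w, w ∈ fs c ↔ Gm.connectedComponentMk w = c := by
    intro c w
    rw [hfs, Set.Finite.mem_toFinset, SimpleGraph.ConnectedComponent.mem_supp_iff]
  have hszpos : ∀ c : Gm.ConnectedComponent, 0 < (fs c).card := by
    intro c
    obtain ⟨v, hv⟩ := c.exists_rep
    exact Finset.card_pos.mpr ⟨v, (hfs_eq c v).mpr hv⟩
  have hszk : ∀ c : Gm.ConnectedComponent, (fs c).card ≤ k := by
    intro c
    obtain ⟨v, hv⟩ := c.exists_rep
    have hset : (c.supp : Set (Fin m)) = {w | Gm.Reachable v w} := by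
      ext w
      rw [SimpleGraph.ConnectedComponent.mem_supp_iff, Set.mem_setOf_eq, ← hv]
      constructor
      · intro h
        exact (SimpleGraph.ConnectedComponent.eq.mp h).symm
      · intro h
        exact SimpleGraph.ConnectedComponent.eq.mpr h.symm
    have : (fs c).card = {w | Gm.Reachable v w}.ncard := by
      rw [hfs, ← hset, Set.ncard_eq_toFinset_card _ (c.supp).toFinite]
    rw [this]
    exact hcomp v
  have hdisj : ∀ c d : Gm.ConnectedComponent, c ≠ d → Disjoint (fs c) (fs d) := by
    intro c d hcd
    rw [Finset.disjoint_left]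
    intro w hwc hwd
    exact hcd (((hfs_eq c w).mp hwc).symm.trans ((hfs_eq d w).mp hwd))
  have hsum : ∀ s : Finset Gm.ConnectedComponent, ∑ c ∈ s, (fs c).card ≤ m := by
    intro s
    rw [← Finset.card_biUnion (fun c _ d _ h => hdisj c d h)]
    calc (s.biUnion fs).card ≤ Fintype.card (Fin m) := Finset.card_le_univ _
      _ = m := Fintype.card_fin m
  -- Hall's condition for assigning blocks to components
  have hall : ∀ s : Finset Gm.ConnectedComponent,
      s.card ≤ (s.biUnion fun c => Finset.range (n / (fs c).card)).card := by
    intro s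
    rcases s.eq_empty_or_nonempty with rfl | hne
    · simp
    obtain ⟨c₀, hc₀, hmin⟩ := s.exists_min_image (fun c => (fs c).card) hne
    have h1 : s.card ≤ n / (fs c₀).card := by
      rw [Nat.le_div_iff_mul_le (hszpos c₀)]
      calc s.card * (fs c₀).card = ∑ _c ∈ s, (fs c₀).card := by
            rw [Finset.sum_const, smul_eq_mul]
        _ ≤ ∑ c ∈ s, (fs c).card := Finset.sum_le_sum (fun c hc => hmin c hc)
        _ ≤ m := hsum s
        _ ≤ n := hm
    calc s.card ≤ n / (fs c₀).card := h1
      _ = (Finset.range (n / (fs c₀).card)).card := (Finset.card_range _).symm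
      _ ≤ (s.biUnion fun c => Finset.range (n / (fs c).card)).card :=
          Finset.card_le_card
            (Finset.subset_biUnion_of_mem (fun c => Finset.range (n / (fs c).card)) hc₀)
  obtain ⟨φ, hφinj, hφmem⟩ :=
    (Finset.all_card_le_biUnion_card_iff_exists_injective
      (fun c : Gm.ConnectedComponent => Finset.range (n / (fs c).card))).mp hall
  -- index of a vertex within its component
  set idx : (v : Fin m) → ℕ :=
    fun v => ((fs (Gm.connectedComponentMk v)).filter (fun w => w < v)).card with hidx
  have hidxlt : ∀ v, idx v < (fs (Gm.connectedComponentMk v)).card := by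
    intro v
    apply Finset.card_lt_card
    rw [Finset.ssubset_iff_of_subset (Finset.filter_subset _ _)]
    exact ⟨v, hmemfs v, by simp⟩
  have hidxinj : ∀ u v : Fin m,
      Gm.connectedComponentMk u = Gm.connectedComponentMk v → idx u = idx v → u = v := by
    intro u v hc hiuv
    by_contra hne
    rcases lt_or_gt_of_ne hne with hlt | hlt
    · have : idx u < idx v := by
        apply Finset.card_lt_card
        constructor
        · intro w hw
          rw [Finset.mem_filter] at hw ⊢
          rw [← hc]
          exact ⟨hw.1, lt_trans hw.2 hlt⟩
        · intro hsub
          have : u ∈ (fs (Gm.connectedComponentMk u)).filter (fun w => w < u) := by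
            apply hsub
            rw [Finset.mem_filter, ← hc]
            exact ⟨hmemfs u, hlt⟩
          rw [Finset.mem_filter] at this
          exact absurd this.2 (lt_irrefl u)
      omega
    · have : idx v < idx u := by
        apply Finset.card_lt_card
        constructor
        · intro w hw
          rw [Finset.mem_filter] at hw ⊢
          rw [hc]
          exact ⟨hw.1, lt_trans hw.2 hlt⟩
        · intro hsub
          have : v ∈ (fs (Gm.connectedComponentMk v)).filter (fun w => w < v) := by
            apply hsub
            rw [Finset.mem_filter, hc]
            exact ⟨hmemfs v, hlt⟩
          rw [Finset.mem_filter] at this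
          exact absurd this.2 (lt_irrefl v)
      omega
  have hφlt : ∀ v : Fin m, φ (Gm.connectedComponentMk v) < n / (idx v + 1) := by
    intro v
    have h1 := Finset.mem_range.mp (hφmem (Gm.connectedComponentMk v))
    have h2 : n / (fs (Gm.connectedComponentMk v)).card ≤ n / (idx v + 1) :=
      Nat.div_le_div_left (hidxlt v) (Nat.succ_pos _)
    exact lt_of_lt_of_le h1 h2
  have hΦA : ∀ v : Fin m, (⟨idx v + 1, φ (Gm.connectedComponentMk v)⟩ : (_ : ℕ) × ℕ) ∈ A := by
    intro v
    rw [hA, Finset.mem_sigma, Finset.mem_Icc, Finset.mem_range]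
    refine ⟨⟨Nat.succ_le_succ (Nat.zero_le _), ?_⟩, hφlt v⟩
    exact le_trans (hidxlt v) (hszk _)
  set Φ : Fin m → ↥A := fun v => ⟨⟨idx v + 1, φ (Gm.connectedComponentMk v)⟩, hΦA v⟩ with hΦ
  have hΦinj : Function.Injective Φ := by
    intro u v h
    rw [hΦ, Subtype.mk_eq_mk] at h
    have h1 : idx u + 1 = idx v + 1 := congrArg Sigma.fst h
    have h2 : φ (Gm.connectedComponentMk u) = φ (Gm.connectedComponentMk v) := by
      have := congrArg Sigma.snd h
      simpa using this
    have hc : Gm.connectedComponentMk u = Gm.connectedComponentMk v := hφinj h2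
    exact hidxinj u v hc (by omega)
  have hadj : ∀ u v : Fin m, Gm.Adj u v ↔
      (φ (Gm.connectedComponentMk u) = φ (Gm.connectedComponentMk v) ∧ u ≠ v) := by
    intro u v
    constructor
    · intro h
      exact ⟨congrArg φ (SimpleGraph.ConnectedComponent.sound h.reachable), Gm.ne_of_adj h⟩
    · rintro ⟨h1, h2⟩
      have hc : Gm.connectedComponentMk u = Gm.connectedComponentMk v := hφinj h1
      have hr : Gm.Reachable u v := SimpleGraph.ConnectedComponent.exact hc
      rcases walk_eq_or_adj Gm htr hr with rfl | h
      · exact absurd rfl h2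
      · exact h
  refine ⟨⟨⟨fun v => e (Φ v), ?_⟩, ?_⟩⟩
  · intro a b h
    exact hΦinj (e.injective h)
  · intro u v
    simp only [Function.Embedding.coeFn_mk, Equiv.symm_apply_apply]
    rw [hadj u v]
    constructor
    · rintro ⟨h1, h2⟩
      exact ⟨by have h1' : ((e.symm (e (Φ u))) : (_ : ℕ) × ℕ).2 = ((e.symm (e (Φ v))) : (_ : ℕ) × ℕ).2 := h1; simpa [Φ] using h1', fun h => h2 (congrArg (fun w => e (Φ w)) h)⟩
    · rintro ⟨h1, h2⟩
      exact ⟨by show ((e.symm (e (Φ u))) : (_ : ℕ) × ℕ).2 = ((e.symm (e (Φ v))) : (_ : ℕ) × ℕ).2; simpa [Φ] using h1, fun h => h2 (hΦinj (e.injective h))⟩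


theorem stmt0 (n k : ℕ) (hn : 0 < n) (hk : 0 < k) :
    uNum (cliqueUnionFamily n k) = ∑ i ∈ Finset.Icc 1 k, n / i := by
  obtain ⟨U, hU⟩ := upper_bound n k hn hk
  apply le_antisymm
  · exact Nat.sInf_le ⟨U, hU⟩
  · refine le_csInf ⟨_, U, hU⟩ ?_
    rintro N ⟨U', hU'⟩
    exact lower_bound n k N hn hk U' hU'
end

section
/- Let F be an infinite graph family, and for each n let u_n be the number of isomorphism classes of n-vertex graphs in F. Suppose limsup_{n→∞} (u_n)^{1/n} ≥ g for some real g > e/2. Let c > 1 be the real solution of c^c/(c−1)^{c−1} = g. Then for every ε with 0 < ε < g/e − 1/2, the inequality 𝒰(F_n) > (c−ε)·n holds for infinitely many n, where F_n is the subfamily of n-vertex graphs of F. -/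
open Filter

/-- The setoid on `n`-vertex graphs whose equivalence classes are the
isomorphism classes. -/
def isoSetoid (n : ℕ) : Setoid (SimpleGraph (Fin n)) where
  r G H := Nonempty (G ≃g H)
  iseqv := ⟨fun _ => ⟨SimpleGraph.Iso.refl⟩, fun ⟨e⟩ => ⟨e.symm⟩,
    fun ⟨e⟩ ⟨f⟩ => ⟨e.trans f⟩⟩

/-- The number `u_n` of isomorphism classes of graphs in a family `F` of
`n`-vertex graphs. -/
noncomputable def numIsoClasses {n : ℕ} (F : Set (SimpleGraph (Fin n))) : ℕ :=
  ((fun G => Quotient.mk (isoSetoid n) G) '' F).ncard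

/-- The minimum number of vertices of an induced-universal graph for a family
of `n`-vertex graphs. -/
noncomputable def uNumN {n : ℕ} (F : Set (SimpleGraph (Fin n))) : ℕ :=
  sInf {N | ∃ U : SimpleGraph (Fin N), ∀ G ∈ F, Nonempty (G ↪g U)}

def bigU (n : ℕ) : SimpleGraph (SimpleGraph (Fin n) × Fin n) where
  Adj p q := p.1 = q.1 ∧ p.1.Adj p.2 q.2
  symm := ⟨by rintro ⟨G,i⟩ ⟨H,j⟩ ⟨rfl, h⟩; exact ⟨rfl, h.symm⟩⟩
  loopless := ⟨by rintro ⟨G,i⟩ ⟨_, h⟩; exact h.ne rfl⟩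

lemma exists_universal (n : ℕ) (F : Set (SimpleGraph (Fin n))) :
    ∃ N : ℕ, ∃ U : SimpleGraph (Fin N), ∀ G ∈ F, Nonempty (G ↪g U) := by
  classical
  obtain ⟨N, ⟨e⟩⟩ := Finite.exists_equiv_fin (SimpleGraph (Fin n) × Fin n)
  refine ⟨N, (bigU n).comap e.symm, fun G _ => ⟨?_⟩⟩
  refine ⟨⟨fun i => e (G, i), fun i j h => ?_⟩, ?_⟩
  · simpa using congrArg Prod.snd (e.injective h)
  · intro i j
    show (bigU n).Adj (e.symm (e (G, i))) (e.symm (e (G, j))) ↔ G.Adj i j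
    simp [bigU]
noncomputable def classOf {n N : ℕ} (U : SimpleGraph (Fin N)) (s : Finset (Fin N)) :
    Quotient (isoSetoid n) :=
  if h : s.card = n then
    Quotient.mk (isoSetoid n) (U.comap (fun i => (s.orderIsoOfFin h i : Fin N)))
  else Quotient.mk (isoSetoid n) ⊥

lemma count_le {n N : ℕ} (F : Set (SimpleGraph (Fin n))) (U : SimpleGraph (Fin N))
    (hU : ∀ G ∈ F, Nonempty (G ↪g U)) : numIsoClasses F ≤ N.choose n := by
  classical
  set T : Finset (Finset (Fin N)) := Finset.univ.powersetCard n with hT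
  have hsub : (fun G => Quotient.mk (isoSetoid n) G) '' F ⊆ ↑(T.image (classOf (n := n) U)) := by
    rintro q ⟨G, hG, rfl⟩
    obtain ⟨f⟩ := hU G hG
    set s : Finset (Fin N) := Finset.univ.map f.toEmbedding with hs
    have hcard : s.card = n := by simp [hs]
    have hsT : s ∈ T := by
      simp [hT, Finset.mem_powersetCard, hcard]
    refine Finset.mem_coe.mpr (Finset.mem_image.mpr ⟨s, hsT, ?_⟩)
    rw [classOf, dif_pos hcard]
    apply Quotient.sound
    have hmem : ∀ i : Fin n, f i ∈ s := by
      intro i; simp [hs]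
    let k : Fin n → Fin n := fun i => (s.orderIsoOfFin hcard).symm ⟨f i, hmem i⟩
    have hkinj : Function.Injective k := by
      intro i j hij
      apply f.injective
      have := congrArg (fun z => ((s.orderIsoOfFin hcard z : Fin N))) hij
      simpa [k] using this
    refine ⟨SimpleGraph.Iso.symm ⟨Equiv.ofBijective k ((Finite.injective_iff_bijective).mp hkinj), ?_⟩⟩
    intro i j
    simp only [Equiv.ofBijective_apply, SimpleGraph.comap_adj]
    have h1 : ((s.orderIsoOfFin hcard (k i) : Fin N)) = f i := by simp [k]
    have h2 : ((s.orderIsoOfFin hcard (k j) : Fin N)) = f j := by simp [k]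
    rw [h1, h2]
    exact f.map_adj_iff
  calc numIsoClasses F ≤ (↑(T.image (classOf (n := n) U)) : Set _).ncard :=
        Set.ncard_le_ncard hsub (Set.toFinite _)
    _ = (T.image (classOf (n := n) U)).card := Set.ncard_coe_finset _
    _ ≤ T.card := Finset.card_image_le
    _ = N.choose n := by simp [hT, Finset.card_powersetCard]
section An
open Real

lemma entMono : StrictMonoOn (fun x : ℝ => x * log x - (x - 1) * log (x - 1)) (Set.Ici 1) := by
  have hcont : Continuous fun x : ℝ => x * log x - (x - 1) * log (x - 1) :=
    Real.continuous_mul_log.sub (Real.continuous_mul_log.comp (continuous_id.sub continuous_const))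
  apply strictMonoOn_of_deriv_pos (convex_Ici 1) hcont.continuousOn
  intro x hx
  rw [interior_Ici] at hx
  have hx1 : (1:ℝ) < x := hx
  have h0 : x ≠ 0 := by linarith
  have h1 : x - 1 ≠ 0 := by intro h; rw [sub_eq_zero] at h; linarith
  have d1 : HasDerivAt (fun x : ℝ => x * log x) (log x + 1) x := Real.hasDerivAt_mul_log h0
  have d2 : HasDerivAt (fun x : ℝ => (x - 1) * log (x - 1)) (log (x - 1) + 1) x := by
    have := (Real.hasDerivAt_mul_log h1).comp x ((hasDerivAt_id x).sub_const 1)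
    simpa [Function.comp_def] using this
  rw [(show HasDerivAt (fun x : ℝ => x * log x - (x - 1) * log (x - 1)) (log x + 1 - (log (x - 1) + 1)) x from d1.sub d2).deriv]
  have : log (x - 1) < log x := Real.log_lt_log (by linarith) (by linarith)
  linarith

lemma phi_eq {x : ℝ} (hx : 1 < x) :
    x ^ x / (x - 1) ^ (x - 1) = Real.exp (x * log x - (x - 1) * log (x - 1)) := by
  rw [Real.rpow_def_of_pos (by linarith : (0:ℝ) < x),
    Real.rpow_def_of_pos (by linarith : (0:ℝ) < x - 1), ← Real.exp_sub]
  congr 1; ring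

lemma phi_lt {b c : ℝ} (hb : 1 ≤ b) (hbc : b < c) :
    b ^ b / (b - 1) ^ (b - 1) < c ^ c / (c - 1) ^ (c - 1) := by
  have hc1 : 1 < c := lt_of_le_of_lt hb hbc
  rw [phi_eq hc1]
  rcases eq_or_lt_of_le hb with h | h
  · subst h
    simp only [one_rpow, sub_self, Real.rpow_zero, div_one]
    rw [show (1:ℝ) = Real.exp 0 by simp]
    apply Real.exp_lt_exp.mpr
    have hlt := entMono (Set.self_mem_Ici) (Set.mem_Ici.mpr hc1.le) hc1
    simpa using hlt
  · rw [phi_eq h]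
    exact Real.exp_lt_exp.mpr (entMono (le_of_lt h) (Set.mem_Ici.mpr hc1.le) hbc)

lemma phi_ge_one {b : ℝ} (hb : 1 ≤ b) : 1 ≤ b ^ b / (b - 1) ^ (b - 1) := by
  rcases eq_or_lt_of_le hb with h | h
  · rw [← h]; norm_num
  · rw [phi_eq h]
    rw [show (1:ℝ) = Real.exp 0 by simp]
    apply Real.exp_le_exp.mpr
    have := entMono (Set.self_mem_Ici) (Set.mem_Ici.mpr h.le) h
    simpa using this.le

lemma choose_le_phi {n N : ℕ} {b : ℝ} (hb : 1 < b) (hnN : n ≤ N) (hN : (N : ℝ) ≤ b * n) :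
    (N.choose n : ℝ) ≤ (b ^ b / (b - 1) ^ (b - 1)) ^ n := by
  have hb0 : (0:ℝ) < b := by linarith
  have hb1 : (0:ℝ) < b - 1 := by linarith
  have hx : (0:ℝ) < 1 / b := by positivity
  have hy : (0:ℝ) < (b - 1) / b := by positivity
  have hxy : 1 / b + (b - 1) / b = 1 := by field_simp; ring
  have hbin : (N.choose n : ℝ) * (1/b) ^ n * ((b-1)/b) ^ (N - n) ≤ 1 := by
    calc (N.choose n : ℝ) * (1/b) ^ n * ((b-1)/b) ^ (N - n)
        = (1/b) ^ n * ((b-1)/b) ^ (N - n) * (N.choose n : ℝ) := by ring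
      _ ≤ ∑ k ∈ Finset.range (N+1), (1/b) ^ k * ((b-1)/b) ^ (N - k) * (N.choose k : ℝ) := by
          apply Finset.single_le_sum (f := fun k => (1/b) ^ k * ((b-1)/b) ^ (N - k) * (N.choose k : ℝ))
          · intro k _; positivity
          · exact Finset.mem_range.mpr (by omega)
      _ = (1/b + (b-1)/b) ^ N := (add_pow (1/b) ((b-1)/b) N).symm
      _ = 1 := by rw [hxy, one_pow]
  have hpos : (0:ℝ) < (1/b) ^ n * ((b-1)/b) ^ (N - n) := by positivity
  have hC : (N.choose n : ℝ) ≤ b ^ n * (b/(b-1)) ^ (N - n) := by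
    have h2 : (N.choose n : ℝ) ≤ 1 / ((1/b) ^ n * ((b-1)/b) ^ (N - n)) := by
      rw [le_div_iff₀ hpos]; calc (N.choose n : ℝ) * ((1/b) ^ n * ((b-1)/b) ^ (N-n))
          = (N.choose n : ℝ) * (1/b) ^ n * ((b-1)/b) ^ (N-n) := by ring
        _ ≤ 1 := hbin
    calc (N.choose n : ℝ) ≤ 1 / ((1/b) ^ n * ((b-1)/b) ^ (N - n)) := h2
      _ = b ^ n * (b/(b-1)) ^ (N - n) := by
          rw [div_pow, div_pow, div_pow, one_pow]
          field_simp
  have hr1 : (1:ℝ) ≤ b / (b - 1) := by rw [le_div_iff₀ hb1]; linarith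
  have hstep : (b/(b-1) : ℝ) ^ (N - n) ≤ ((b/(b-1)) ^ (b-1)) ^ n := by
    rw [← Real.rpow_natCast (b/(b-1)) (N-n), ← Real.rpow_natCast ((b/(b-1)) ^ (b-1:ℝ)) n,
      ← Real.rpow_mul (by positivity)]
    apply Real.rpow_le_rpow_of_exponent_le hr1
    rw [Nat.cast_sub hnN]
    nlinarith [hN]
  have hmul : b * (b/(b-1)) ^ (b-1:ℝ) = b ^ b / (b-1) ^ (b-1) := by
    rw [Real.div_rpow hb0.le hb1.le]
    have hbb : b ^ (b:ℝ) = b * b ^ (b-1:ℝ) := by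
      have h := Real.rpow_add hb0 1 (b-1)
      rw [Real.rpow_one, show (1:ℝ) + (b-1) = b by ring] at h
      exact h
    rw [hbb]; ring
  calc (N.choose n : ℝ) ≤ b ^ n * (b/(b-1)) ^ (N - n) := hC
    _ ≤ b ^ n * ((b/(b-1)) ^ (b-1:ℝ)) ^ n := by
        exact mul_le_mul_of_nonneg_left hstep (by positivity)
    _ = (b * (b/(b-1)) ^ (b-1:ℝ)) ^ n := by rw [mul_pow]
    _ = (b ^ b / (b-1) ^ (b-1)) ^ n := by rw [hmul]
end An
theorem stmt3 (F : ∀ n : ℕ, Set (SimpleGraph (Fin n))) (g c : ℝ)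
    (hg : Real.exp 1 / 2 < g)
    (hlimsup : g ≤ Filter.limsup
      (fun n : ℕ => ((numIsoClasses (F n) : ℝ)) ^ ((n : ℝ)⁻¹)) Filter.atTop)
    (hc : 1 < c) (hceq : c ^ c / (c - 1) ^ (c - 1) = g) :
    ∀ ε : ℝ, 0 < ε → ε < g / Real.exp 1 - 1 / 2 →
      ∀ m : ℕ, ∃ n : ℕ, m ≤ n ∧ (c - ε) * (n : ℝ) < (uNumN (F n) : ℝ) := by
  intro ε hε hε' m
  set b := c - ε with hbdef
  have hbc : b < c := by rw [hbdef]; linarith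
  have hg1 : (1:ℝ) < g := by
    have h1 : (2.7182818283 : ℝ) < Real.exp 1 := Real.exp_one_gt_d9
    linarith
  obtain ⟨a, ha1, hag, hkey⟩ : ∃ a : ℝ, 1 < a ∧ a < g ∧
      (1 < b → b ^ b / (b - 1) ^ (b - 1) < a) := by
    by_cases hb : b ≤ 1
    · exact ⟨(1 + g)/2, by linarith, by linarith, fun h => absurd h (not_lt.mpr hb)⟩
    · push_neg at hb
      have hphi : b ^ b / (b - 1) ^ (b - 1) < g := by rw [← hceq]; exact phi_lt hb.le hbc
      have hmax : max 1 (b ^ b / (b - 1) ^ (b - 1)) < g := max_lt hg1 hphi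
      refine ⟨(max 1 (b ^ b / (b - 1) ^ (b - 1)) + g)/2, ?_, by linarith, fun _ => ?_⟩
      · have := le_max_left 1 (b ^ b / (b - 1) ^ (b - 1)); linarith
      · have := le_max_right 1 (b ^ b / (b - 1) ^ (b - 1)); linarith
  have hcob : Filter.IsCoboundedUnder (· ≤ ·) Filter.atTop
      (fun n : ℕ => ((numIsoClasses (F n) : ℝ)) ^ ((n : ℝ)⁻¹)) :=
    Filter.isCoboundedUnder_le_of_le Filter.atTop
      (fun n => Real.rpow_nonneg (Nat.cast_nonneg _) _)
  have hfreq : ∃ᶠ n in Filter.atTop,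
      a < ((numIsoClasses (F n) : ℝ)) ^ ((n : ℝ)⁻¹) :=
    Filter.frequently_lt_of_lt_limsup hcob (lt_of_lt_of_le hag hlimsup)
  obtain ⟨n, hlt, hnm⟩ :=
    (hfreq.and_eventually (Filter.eventually_ge_atTop (max m 1))).exists
  have hm : m ≤ n := le_trans (le_max_left _ _) hnm
  have hn1 : 1 ≤ n := le_trans (le_max_right _ _) hnm
  refine ⟨n, hm, ?_⟩
  by_contra hcon
  push_neg at hcon
  set N := uNumN (F n) with hNdef
  have h0 : (0:ℝ) ≤ (numIsoClasses (F n) : ℝ) := Nat.cast_nonneg _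
  have hne : ((n:ℝ)) ≠ 0 := by
    simp only [ne_eq, Nat.cast_eq_zero]; omega
  have hupow : a ^ n < (numIsoClasses (F n) : ℝ) := by
    have h1 : a ^ n < ((numIsoClasses (F n) : ℝ) ^ ((n:ℝ)⁻¹)) ^ n :=
      pow_lt_pow_left₀ hlt (by linarith) (by omega)
    have h2 : ((numIsoClasses (F n) : ℝ) ^ ((n:ℝ)⁻¹)) ^ n = (numIsoClasses (F n) : ℝ) := by
      rw [← Real.rpow_natCast ((numIsoClasses (F n) : ℝ) ^ ((n:ℝ)⁻¹)) n,
        ← Real.rpow_mul h0, inv_mul_cancel₀ hne, Real.rpow_one]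
    rwa [h2] at h1
  have hu2 : 2 ≤ numIsoClasses (F n) := by
    have hgt : (1:ℝ) < (numIsoClasses (F n) : ℝ) :=
      lt_trans (one_lt_pow₀ ha1 (by omega)) hupow
    exact_mod_cast Nat.one_lt_cast.mp hgt
  have hNmem : N ∈ {M | ∃ U : SimpleGraph (Fin M), ∀ G ∈ F n, Nonempty (G ↪g U)} :=
    Nat.sInf_mem (exists_universal n (F n))
  obtain ⟨U, hU⟩ := hNmem
  have hcount : numIsoClasses (F n) ≤ N.choose n := count_le _ U hU
  rcases lt_or_ge N n with hNn | hNn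
  · rw [Nat.choose_eq_zero_of_lt hNn] at hcount; omega
  by_cases hb : b ≤ 1
  · have hle : (N:ℝ) ≤ (n:ℝ) := by
      refine le_trans hcon ?_
      nlinarith [Nat.cast_nonneg (α := ℝ) n]
    have hNn' : N ≤ n := by exact_mod_cast hle
    have hEq : N = n := le_antisymm hNn' hNn
    rw [hEq, Nat.choose_self] at hcount; omega
  · push_neg at hb
    have hphi := choose_le_phi hb hNn hcon
    have hlt2 : a ^ n < (b ^ b / (b - 1) ^ (b - 1)) ^ n :=
      lt_of_lt_of_le hupow (le_trans (by exact_mod_cast hcount) hphi)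
    have ha' := hkey hb
    have hle2 : (b ^ b / (b - 1) ^ (b - 1)) ^ n ≤ a ^ n := by
      apply pow_le_pow_left₀ ?_ ha'.le
      have := phi_ge_one hb.le; linarith
    linarith
end

section
/- The function f(x) = x^x/(x−1)^{x−1} is strictly increasing on the interval (1, ∞), and for every real x > 1 it satisfies f(x) ≤ e·x − e/2. Consequently, for every g > e/2, the real solution c > 1 of f(c) = g satisfies c ≥ g/e + 1/2. -/
open Real intervalIntegral

lemma key_log_ineq (x : ℝ) (hx : 1 < x) :
    x * Real.log x - (x - 1) * Real.log (x - 1) ≤ 1 + Real.log (x - 1/2) := by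
  set m : ℝ := x - 1/2 with hm
  have hm0 : 0 < m := by simp [hm]; linarith
  have hx1 : 0 < x - 1 := by linarith
  have hx0 : 0 < x := by linarith
  have hle : x - 1 ≤ x := by linarith
  -- integral of log
  have hI1 : ∫ t in (x-1)..x, Real.log t =
      x * Real.log x - (x - 1) * Real.log (x - 1) - 1 := by
    rw [integral_log]; ring
  -- integral of tangent bound
  have hI2 : (∫ t in (x-1)..x, (Real.log m + (t - m)/m)) = 1 + Real.log m - 1 := by
    have hfun : (fun t : ℝ => Real.log m + (t - m)/m)
        = fun t : ℝ => (1/m) * t + (Real.log m - 1) := by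
      funext t; field_simp; ring
    rw [hfun]
    rw [intervalIntegral.integral_add ((intervalIntegrable_id.const_mul _))
      (intervalIntegrable_const), intervalIntegral.integral_const_mul, integral_id,
      intervalIntegral.integral_const]
    have hmne : m ≠ 0 := ne_of_gt hm0
    field_simp
    ring
  have hmono : (∫ t in (x-1)..x, Real.log t)
      ≤ ∫ t in (x-1)..x, (Real.log m + (t - m)/m) := by
    apply intervalIntegral.integral_mono_on hle
    · exact intervalIntegrable_log (by simp [Set.uIcc_of_le hle]; intro h; linarith)
    · have hc : Continuous (fun t : ℝ => Real.log m + (t - m)/m) := by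
        fun_prop
      exact hc.intervalIntegrable _ _
    · intro t ht
      have ht0 : 0 < t := lt_of_lt_of_le hx1 ht.1
      have h1 : Real.log t - Real.log m ≤ (t - m)/m := by
        rw [← Real.log_div (ne_of_gt ht0) (ne_of_gt hm0)]
        have := Real.log_le_sub_one_of_pos (div_pos ht0 hm0)
        calc Real.log (t/m) ≤ t/m - 1 := this
          _ = (t - m)/m := by field_simp
      linarith
  rw [hI1, hI2] at hmono
  linarith

theorem stmt5 :
    StrictMonoOn (fun x : ℝ => x ^ x / (x - 1) ^ (x - 1)) (Set.Ioi (1 : ℝ)) ∧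
    (∀ x : ℝ, 1 < x →
      x ^ x / (x - 1) ^ (x - 1) ≤ Real.exp 1 * x - Real.exp 1 / 2) ∧
    (∀ g c : ℝ, Real.exp 1 / 2 < g → 1 < c →
      c ^ c / (c - 1) ^ (c - 1) = g → g / Real.exp 1 + 1 / 2 ≤ c) := by
  have hrw : ∀ x : ℝ, 1 < x → x ^ x / (x - 1) ^ (x - 1)
      = Real.exp (x * Real.log x - (x - 1) * Real.log (x - 1)) := by
    intro x hx
    rw [Real.rpow_def_of_pos (by linarith), Real.rpow_def_of_pos (by linarith),
      ← Real.exp_sub]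
    congr 1; ring
  -- the exponent function and its strict monotonicity
  set G : ℝ → ℝ := fun x => x * Real.log x - (x - 1) * Real.log (x - 1) with hG
  have hderiv : ∀ x : ℝ, 1 < x →
      HasDerivAt G (Real.log x - Real.log (x - 1)) x := by
    intro x hx
    have h1 : HasDerivAt (fun y : ℝ => y * Real.log y) (Real.log x + 1) x :=
      Real.hasDerivAt_mul_log (by linarith : (0:ℝ) < x).ne'
    have h2 : HasDerivAt (fun y : ℝ => (y - 1) * Real.log (y - 1))
        ((Real.log (x - 1) + 1) * 1) x := by
      have hinner : HasDerivAt (fun y : ℝ => y - 1) 1 x := (hasDerivAt_id x).sub_const 1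
      exact (Real.hasDerivAt_mul_log (by linarith : (0:ℝ) < x - 1).ne').comp x hinner
    have h3 := h1.sub h2
    have h4 : Real.log x - Real.log (x - 1) = Real.log x + 1 - (Real.log (x - 1) + 1) * 1 := by ring
    rw [h4]; exact h3
  have hGmono : StrictMonoOn G (Set.Ioi (1 : ℝ)) := by
    apply strictMonoOn_of_deriv_pos (convex_Ioi 1)
    · intro x hx
      exact ((hderiv x hx).continuousAt).continuousWithinAt
    · intro x hx
      rw [interior_Ioi] at hx
      have hx' : (1:ℝ) < x := hx
      rw [(hderiv x hx').deriv]
      have : Real.log (x - 1) < Real.log x := Real.log_lt_log (by linarith) (by linarith)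
      linarith
  have part2 : ∀ x : ℝ, 1 < x →
      x ^ x / (x - 1) ^ (x - 1) ≤ Real.exp 1 * x - Real.exp 1 / 2 := by
    intro x hx
    rw [hrw x hx]
    have hkey := key_log_ineq x hx
    calc Real.exp (G x) ≤ Real.exp (1 + Real.log (x - 1/2)) := Real.exp_le_exp.2 hkey
      _ = Real.exp 1 * (x - 1/2) := by
          rw [Real.exp_add, Real.exp_log (by linarith)]
      _ = Real.exp 1 * x - Real.exp 1 / 2 := by ring
  refine ⟨?_, part2, ?_⟩
  · intro a ha b hb hab
    simp only
    rw [hrw a ha, hrw b hb]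
    exact Real.exp_lt_exp.2 (hGmono ha hb hab)
  · intro g c hg hc hfc
    have h2 := part2 c hc
    rw [hfc] at h2
    have he : 0 < Real.exp 1 := Real.exp_pos 1
    have : g / Real.exp 1 ≤ c - 1/2 := by
      rw [div_le_iff₀ he]; nlinarith
    linarith
end

section
/- Let s, t, k be positive integers with t ≤ A(s, 2k−2, k), and let F be a family of t graphs, each having exactly n vertices and each being p-almost equitably k-colorable. Then 𝒰(F) ≤ s·⌈(n−p)/k⌉ + t·p. -/
/-- A graph `G` on a finite vertex type has an equitable `k`-coloring if it has a
proper coloring with `k` colors in which the sizes of any two color classes differ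
by at most one. -/
def EquitablyColorable {W : Type*} [Fintype W] (G : SimpleGraph W) (k : ℕ) : Prop :=
  ∃ c : W → Fin k, (∀ u v : W, G.Adj u v → c u ≠ c v) ∧
    ∀ i j : Fin k, (Finset.univ.filter (fun v => c v = i)).card ≤
      (Finset.univ.filter (fun v => c v = j)).card + 1

/-- A graph `G` is `p`-almost equitably `k`-colorable if there is a set `X` of at
most `p` vertices such that the induced subgraph `G \ X` has an equitable
`k`-coloring. -/
def AlmostEquitablyColorable {V : Type*} [Fintype V] [DecidableEq V]
    (G : SimpleGraph V) (p k : ℕ) : Prop :=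
  ∃ X : Finset V, X.card ≤ p ∧
    EquitablyColorable (G.induce (↑(Xᶜ) : Set V)) k

/-- `designNumber s k` is the coding-theoretic quantity `A(s, 2k-2, k)`: the maximum
number of `k`-element subsets of an `s`-element set that pairwise intersect in at
most one element. -/
noncomputable def designNumber (s k : ℕ) : ℕ :=
  sSup {m | ∃ 𝒞 : Finset (Finset (Fin s)), 𝒞.card = m ∧ (∀ C ∈ 𝒞, C.card = k) ∧
    ∀ C ∈ 𝒞, ∀ D ∈ 𝒞, C ≠ D → (C ∩ D).card ≤ 1}

open Finset in
lemma exists_design {s k t : ℕ} (htA : t ≤ designNumber s k) :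
    ∃ C : Fin t → Finset (Fin s), Function.Injective C ∧ (∀ i, (C i).card = k) ∧
      ∀ i j : Fin t, C i ≠ C j → ((C i) ∩ (C j)).card ≤ 1 := by
  classical
  have hmem : designNumber s k ∈ {m | ∃ 𝒞 : Finset (Finset (Fin s)), 𝒞.card = m ∧
      (∀ C ∈ 𝒞, C.card = k) ∧ ∀ C ∈ 𝒞, ∀ D ∈ 𝒞, C ≠ D → (C ∩ D).card ≤ 1} := by
    apply Nat.sSup_mem
    · exact ⟨0, ∅, by simp, by simp, by simp⟩
    · refine ⟨Fintype.card (Finset (Fin s)), ?_⟩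
      rintro m ⟨𝒞, rfl, -⟩
      exact le_of_le_of_eq (Finset.card_le_univ 𝒞) Finset.card_univ
  obtain ⟨𝒞, hc, hk', hint⟩ := hmem
  have ht' : t ≤ 𝒞.card := by rw [hc]; exact htA
  refine ⟨fun i => ((𝒞.equivFin.symm (Fin.castLE ht' i) : 𝒞) : Finset (Fin s)), ?_, ?_, ?_⟩
  · intro a b h
    have := 𝒞.equivFin.symm.injective (Subtype.ext h)
    exact Fin.castLE_injective ht' this
  · intro i; exact hk' _ (𝒞.equivFin.symm (Fin.castLE ht' i)).2
  · intro i j hne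
    exact hint _ (𝒞.equivFin.symm _).2 _ (𝒞.equivFin.symm _).2 hne

open Finset in
lemma exists_slot {n k q p : ℕ} (X : Finset (Fin n)) (hX : X.card ≤ p)
    (c : Fin n → Fin k)
    (heq : ∀ a b : Fin k,
      (Finset.univ.filter (fun v => v ∉ X ∧ c v = a)).card ≤
        (Finset.univ.filter (fun v => v ∉ X ∧ c v = b)).card + 1)
    (hq : n - p ≤ q * k) :
    ∃ g : Fin n → (Fin k × Fin q) ⊕ Fin p, Function.Injective g ∧
      ∀ u j r, g u = Sum.inl (j, r) → u ∉ X ∧ c u = j := by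
  classical
  set S : Fin k → Finset (Fin n) := fun j => univ.filter (fun v => v ∉ X ∧ c v = j) with hS
  set rk : Fin n → ℕ := fun u => ((S (c u)).filter (fun v => v < u)).card with hrk
  have hmemS : ∀ u, u ∉ X → u ∈ S (c u) := fun u hu => by simp [hS, hu]
  have rk_lt : ∀ u, u ∉ X → rk u < (S (c u)).card := by
    intro u hu
    apply card_lt_card
    rw [Finset.ssubset_iff_of_subset (filter_subset _ _)]
    exact ⟨u, hmemS u hu, by simp⟩
  have rk_mono : ∀ u v, u ∉ X → v ∉ X → c u = c v → u < v → rk u < rk v := by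
    intro u v hu hv hc huv
    have hSS : S (c u) = S (c v) := by rw [hc]
    apply card_lt_card
    rw [hSS, Finset.ssubset_iff_of_subset]
    · refine ⟨u, ?_, ?_⟩
      · simp only [mem_filter]
        exact ⟨hSS ▸ hmemS u hu, huv⟩
      · simp only [mem_filter, not_and]
        intro _ h
        exact absurd h (lt_irrefl u)
    · intro w hw
      simp only [mem_filter] at hw ⊢
      exact ⟨hw.1, lt_trans hw.2 huv⟩
  have rk_inj : ∀ u v, u ∉ X → v ∉ X → c u = c v → rk u = rk v → u = v := by
    intro u v hu hv hc h
    rcases lt_trichotomy u v with h1 | h1 | h1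
    · exact absurd h (Nat.ne_of_lt (rk_mono u v hu hv hc h1))
    · exact h1
    · exact absurd h.symm (Nat.ne_of_lt (rk_mono v u hv hu hc.symm h1))
  set B : Finset (Fin n) := univ.filter (fun u => u ∈ X ∨ q ≤ rk u) with hB
  -- card bound
  have hBp : B.card ≤ p := by
    set Ov : Finset (Fin n) := univ.filter (fun u => u ∉ X ∧ q ≤ rk u) with hOv
    have hBeq : B = X ∪ Ov := by
      ext u
      simp only [hB, hOv, mem_filter, mem_univ, true_and, mem_union]
      tauto
    have hOvcard : Ov.card = ∑ j : Fin k, (Ov.filter (fun u => c u = j)).card := by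
      exact Finset.card_eq_sum_card_fiberwise (fun x _ => mem_univ _)
    have hOvj : ∀ j : Fin k, (Ov.filter (fun u => c u = j)).card ≤ (S j).card - q := by
      intro j
      have h1 : (Ov.filter (fun u => c u = j)).card ≤ (Finset.Ico q ((S j).card)).card := by
        apply Finset.card_le_card_of_injOn rk
        · intro u hu
          simp only [Finset.mem_coe, hOv, mem_filter, mem_univ, true_and] at hu
          obtain ⟨⟨hux, hrq⟩, hcj⟩ := hu
          rw [Finset.mem_coe, Finset.mem_Ico]
          exact ⟨hrq, hcj ▸ rk_lt u hux⟩
        · intro u hu v hv huv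
          simp only [Finset.mem_coe, hOv, mem_filter, mem_univ, true_and] at hu hv
          exact rk_inj u v hu.1.1 hv.1.1 (hu.2.trans hv.2.symm) huv
      rwa [Nat.card_Ico] at h1
    have hsumS : ∑ j : Fin k, (S j).card = n - X.card := by
      have h1 : (univ.filter (fun u : Fin n => u ∉ X)).card
          = ∑ j : Fin k, ((univ.filter (fun u : Fin n => u ∉ X)).filter (fun u => c u = j)).card :=
        Finset.card_eq_sum_card_fiberwise (fun x _ => mem_univ _)
      have h2 : ∀ j, (univ.filter (fun u : Fin n => u ∉ X)).filter (fun u => c u = j) = S j := by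
        intro j; rw [Finset.filter_filter]
      have h3 : (univ.filter (fun u : Fin n => u ∉ X)) = Xᶜ := by
        ext u; simp [Finset.mem_compl]
      rw [h3, Finset.card_compl, Fintype.card_fin] at h1
      calc ∑ j : Fin k, (S j).card
          = ∑ j : Fin k, ((Xᶜ).filter (fun u => c u = j)).card :=
            Finset.sum_congr rfl fun j _ => by rw [← h3, h2 j]
        _ = n - X.card := h1.symm
    have hXn : X.card ≤ n := by
      have := Finset.card_le_univ X
      simpa using this
    have hOvp : Ov.card ≤ p - X.card := by
      by_cases hall : ∀ j : Fin k, (S j).card ≤ q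
      · have : Ov.card = 0 := by
          rw [hOvcard]
          apply Finset.sum_eq_zero
          intro j _
          have h1 := hOvj j
          have h2 := hall j
          omega
        omega
      · push_neg at hall
        obtain ⟨j0, hj0⟩ := hall
        have hge : ∀ j : Fin k, q ≤ (S j).card := by
          intro j
          have := heq j0 j
          simp only [hS] at *
          omega
        have hsum2 : (∑ j : Fin k, ((S j).card - q)) + q * k = ∑ j : Fin k, (S j).card := by
          have h4 : ∑ j : Fin k, ((S j).card - q + q) = ∑ j : Fin k, (S j).card :=
            Finset.sum_congr rfl (fun j _ => Nat.sub_add_cancel (hge j))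
          rw [Finset.sum_add_distrib, Finset.sum_const, card_univ, Fintype.card_fin,
            smul_eq_mul] at h4
          rw [mul_comm]
          omega
        have h5 : Ov.card ≤ ∑ j : Fin k, ((S j).card - q) := by
          rw [hOvcard]
          exact Finset.sum_le_sum fun j _ => hOvj j
        rw [hsumS] at hsum2
        -- avoid nonlinear arithmetic: generalize q * k
        have h6 : q * k ≥ n - p := hq
        omega
    calc B.card ≤ X.card + Ov.card := hBeq ▸ Finset.card_union_le X Ov
    _ ≤ p := by omega
  -- construct g
  have hnB : ∀ u, u ∉ B → u ∉ X ∧ rk u < q := by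
    intro u hu
    simp only [hB, mem_filter, mem_univ, true_and, not_or, not_le] at hu
    exact hu
  refine ⟨fun u => if h : u ∈ B then Sum.inr (Fin.castLE hBp (B.equivFin ⟨u, h⟩))
    else Sum.inl (c u, ⟨rk u, (hnB u h).2⟩), ?_, ?_⟩
  · intro u v huv
    simp only at huv
    by_cases hu : u ∈ B <;> by_cases hv : v ∈ B
    · rw [dif_pos hu, dif_pos hv] at huv
      simp only [Sum.inr.injEq] at huv
      have := B.equivFin.injective (Fin.castLE_injective _ huv)
      exact congrArg Subtype.val this
    · rw [dif_pos hu, dif_neg hv] at huv; exact absurd huv (by simp)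
    · rw [dif_neg hu, dif_pos hv] at huv; exact absurd huv (by simp)
    · rw [dif_neg hu, dif_neg hv] at huv
      simp only [Sum.inl.injEq, Prod.mk.injEq, Fin.mk.injEq] at huv
      exact rk_inj u v (hnB u hu).1 (hnB v hv).1 huv.1 huv.2
  · intro u j r hgu
    simp only at hgu
    by_cases hu : u ∈ B
    · rw [dif_pos hu] at hgu; exact absurd hgu (by simp)
    · rw [dif_neg hu] at hgu
      simp only [Sum.inl.injEq, Prod.mk.injEq] at hgu
      exact ⟨(hnB u hu).1, hgu.1⟩

open Finset in
theorem stmt7 {n : ℕ} (s t k p : ℕ) (hs : 0 < s) (ht : 0 < t) (hk : 0 < k)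
    (htA : t ≤ designNumber s k)
    (F : Fin t → SimpleGraph (Fin n))
    (hF : ∀ i, AlmostEquitablyColorable (F i) p k) :
    ∃ (N : ℕ) (U : SimpleGraph (Fin N)),
      N ≤ s * ((n - p + k - 1) / k) + t * p ∧ ∀ i, Nonempty (F i ↪g U) := by
  classical
  set q := (n - p + k - 1) / k with hqdef
  have hqk : n - p ≤ q * k := by
    have h1 : k * q + (n - p + k - 1) % k = n - p + k - 1 := Nat.div_add_mod _ _
    have h2 : (n - p + k - 1) % k < k := Nat.mod_lt _ hk
    rw [mul_comm]
    generalize k * q = a at h1 ⊢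
    omega
  obtain ⟨C, hCinj, hCk, hCint⟩ := exists_design htA
  -- colorings
  have hFc : ∀ i, ∃ X : Finset (Fin n), X.card ≤ p ∧
      EquitablyColorable ((F i).induce (↑(Xᶜ) : Set (Fin n))) k := hF
  choose X hXp hcol using hFc
  have hcol' : ∀ i, ∃ c : (↑((X i)ᶜ) : Set (Fin n)) → Fin k,
      (∀ u v, ((F i).induce (↑((X i)ᶜ) : Set (Fin n))).Adj u v → c u ≠ c v) ∧
      ∀ a b : Fin k, (Finset.univ.filter (fun v => c v = a)).card ≤
        (Finset.univ.filter (fun v => c v = b)).card + 1 := hcol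
  choose col hprop hequ using hcol'
  have hmem' : ∀ i (u : Fin n), u ∈ (↑((X i)ᶜ) : Set (Fin n)) ↔ u ∉ X i := by
    intro i u; simp
  set cext : Fin t → Fin n → Fin k := fun i u =>
    if h : u ∈ (↑((X i)ᶜ) : Set (Fin n)) then col i ⟨u, h⟩ else ⟨0, hk⟩ with hcext
  have hcard : ∀ i (a : Fin k),
      (Finset.univ.filter (fun v : (↑((X i)ᶜ) : Set (Fin n)) => col i v = a)).card =
      (Finset.univ.filter (fun u : Fin n => u ∉ X i ∧ cext i u = a)).card := by
    intro i a
    apply Finset.card_bij (fun (v : (↑((X i)ᶜ) : Set (Fin n))) (_ : v ∈ Finset.univ.filter (fun v => col i v = a)) => (v : Fin n))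
    · intro v hv
      simp only [mem_filter, mem_univ, true_and] at hv ⊢
      have h1 : (v : Fin n) ∈ (↑((X i)ᶜ) : Set (Fin n)) := v.2
      refine ⟨(hmem' i v).mp h1, ?_⟩
      simp only [hcext, dif_pos h1, Subtype.coe_eta]
      exact hv
    · intro v1 h1 v2 h2 h
      exact Subtype.ext h
    · intro u hu
      simp only [mem_filter, mem_univ, true_and] at hu
      have h1 : u ∈ (↑((X i)ᶜ) : Set (Fin n)) := (hmem' i u).mpr hu.1
      have h2 : col i ⟨u, h1⟩ = a := by
        have := hu.2
        simpa only [hcext, dif_pos h1] using this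
      exact ⟨⟨u, h1⟩, by simp [h2], rfl⟩
  have hslot : ∀ i, ∃ g : Fin n → (Fin k × Fin q) ⊕ Fin p, Function.Injective g ∧
      ∀ u j r, g u = Sum.inl (j, r) → u ∉ X i ∧ cext i u = j := by
    intro i
    apply exists_slot (X i) (hXp i) (cext i) ?_ hqk
    intro a b
    rw [← hcard i a, ← hcard i b]
    exact hequ i a b
  choose g hginj hgspec using hslot
  -- blocks
  set blk : Fin t → Fin k → Fin s := fun i j => ((C i).orderIsoOfFin (hCk i) j : Fin s)
    with hblk
  have hblk_mem : ∀ i j, blk i j ∈ C i := fun i j => ((C i).orderIsoOfFin (hCk i) j).2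
  have hblk_inj : ∀ i, Function.Injective (blk i) := by
    intro i a b h
    exact ((C i).orderIsoOfFin (hCk i)).injective (Subtype.ext h)
  -- the embedding maps
  set fI : Fin t → Fin n → (Fin s × Fin q) ⊕ (Fin t × Fin p) := fun i u =>
    Sum.elim (fun jr : Fin k × Fin q => Sum.inl (blk i jr.1, jr.2))
      (fun a : Fin p => Sum.inr (i, a)) (g i u) with hfI
  have hfI_inl : ∀ i u j r, g i u = Sum.inl (j, r) → fI i u = Sum.inl (blk i j, r) := by
    intro i u j r h; simp [hfI, h]
  have hfI_inr : ∀ i u a, g i u = Sum.inr a → fI i u = Sum.inr (i, a) := by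
    intro i u a h; simp [hfI, h]
  have hfI_inj : ∀ i, Function.Injective (fI i) := by
    intro i u v h
    apply hginj i
    rcases hgu : g i u with ⟨j1, r1⟩ | a1 <;> rcases hgv : g i v with ⟨j2, r2⟩ | a2
    · rw [hfI_inl i u j1 r1 hgu, hfI_inl i v j2 r2 hgv] at h
      simp only [Sum.inl.injEq, Prod.mk.injEq] at h
      rw [hblk_inj i h.1, h.2]
    · rw [hfI_inl i u j1 r1 hgu, hfI_inr i v a2 hgv] at h; simp at h
    · rw [hfI_inr i u a1 hgu, hfI_inl i v j2 r2 hgv] at h; simp at h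
    · rw [hfI_inr i u a1 hgu, hfI_inr i v a2 hgv] at h
      simp only [Sum.inr.injEq, Prod.mk.injEq] at h
      rw [h.2]
  -- different colors for adjacent vertices mapped to blocks
  have hcol_ne : ∀ i u v (j1 : Fin k) (r1 : Fin q) j2 r2, (F i).Adj u v →
      g i u = Sum.inl (j1, r1) → g i v = Sum.inl (j2, r2) → j1 ≠ j2 := by
    intro i u v j1 r1 j2 r2 hadj hgu hgv
    obtain ⟨hu, hcu⟩ := hgspec i u j1 r1 hgu
    obtain ⟨hv, hcv⟩ := hgspec i v j2 r2 hgv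
    have hu' : u ∈ (↑((X i)ᶜ) : Set (Fin n)) := (hmem' i u).mpr hu
    have hv' : v ∈ (↑((X i)ᶜ) : Set (Fin n)) := (hmem' i v).mpr hv
    have hne := hprop i ⟨u, hu'⟩ ⟨v, hv'⟩ hadj
    rw [← hcu, ← hcv]
    simpa only [hcext, dif_pos hu', dif_pos hv'] using hne
  -- the key adjacency characterization
  have hkey : ∀ i u v,
      (∃ i' u' v', fI i' u' = fI i u ∧ fI i' v' = fI i v ∧ (F i').Adj u' v') ↔
        (F i).Adj u v := by
    intro i u v
    constructor
    · rintro ⟨i', u', v', h1, h2, hadj⟩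
      by_cases hii : i' = i
      · subst hii
        rwa [hfI_inj i' h1, hfI_inj i' h2] at hadj
      · exfalso
        have hmix : ∀ (w w' : Fin n) (a : Fin p), fI i' w' = fI i w →
            g i' w' = Sum.inr a → False := by
          intro w w' a hh hg
          rw [hfI_inr i' w' a hg] at hh
          rcases hgw : g i w with ⟨j, r⟩ | b
          · rw [hfI_inl i w j r hgw] at hh; simp at hh
          · rw [hfI_inr i w b hgw] at hh
            simp only [Sum.inr.injEq, Prod.mk.injEq] at hh
            exact hii hh.1
        rcases hgu' : g i' u' with ⟨j1, r1⟩ | a1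
        · rcases hgv' : g i' v' with ⟨j2, r2⟩ | a2
          · rw [hfI_inl i' u' j1 r1 hgu'] at h1
            rw [hfI_inl i' v' j2 r2 hgv'] at h2
            rcases hgu : g i u with ⟨ju, ru⟩ | a
            · rcases hgv : g i v with ⟨jv, rv⟩ | b
              · rw [hfI_inl i u ju ru hgu] at h1
                rw [hfI_inl i v jv rv hgv] at h2
                simp only [Sum.inl.injEq, Prod.mk.injEq] at h1 h2
                have hj12 : j1 ≠ j2 := hcol_ne i' u' v' j1 r1 j2 r2 hadj hgu' hgv'
                have hbne : blk i' j1 ≠ blk i' j2 := fun h => hj12 (hblk_inj i' h)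
                have hsub : ({blk i' j1, blk i' j2} : Finset (Fin s)) ⊆ C i ∩ C i' := by
                  intro x hx
                  simp only [mem_insert, mem_singleton] at hx
                  rcases hx with rfl | rfl
                  · exact mem_inter.mpr ⟨by rw [h1.1]; exact hblk_mem i ju, hblk_mem i' j1⟩
                  · exact mem_inter.mpr ⟨by rw [h2.1]; exact hblk_mem i jv, hblk_mem i' j2⟩
                have h2card : 2 ≤ (C i ∩ C i').card := by
                  have := Finset.card_le_card hsub
                  rwa [Finset.card_pair hbne] at this
                have hCne : C i ≠ C i' := fun hEq => hii (hCinj hEq).symm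
                have := hCint i i' hCne
                omega
              · rw [hfI_inr i v b hgv] at h2; simp at h2
            · rw [hfI_inr i u a hgu] at h1; simp at h1
          · exact hmix v v' a2 h2 hgv'
        · exact hmix u u' a1 h1 hgu'
    · intro h
      exact ⟨i, u, v, rfl, rfl, h⟩
  -- the universal graph
  set U' : SimpleGraph ((Fin s × Fin q) ⊕ (Fin t × Fin p)) :=
    { Adj := fun x y => ∃ i u v, fI i u = x ∧ fI i v = y ∧ (F i).Adj u v
      symm := ⟨by rintro x y ⟨i, u, v, h1, h2, h⟩; exact ⟨i, v, u, h2, h1, h.symm⟩⟩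
      loopless := ⟨by
        rintro x ⟨i, u, v, h1, h2, h⟩
        have huv : u = v := hfI_inj i (h1.trans h2.symm)
        exact (F i).irrefl (huv ▸ h)⟩ } with hU'
  have hcardV : Fintype.card ((Fin s × Fin q) ⊕ (Fin t × Fin p)) = s * q + t * p := by
    simp
  set e := Fintype.equivFinOfCardEq hcardV with he
  refine ⟨s * q + t * p, U'.comap ⇑e.symm, le_refl _, fun i => ?_⟩
  refine ⟨⟨⟨fun u => e (fI i u), fun u v h => hfI_inj i (e.injective h)⟩, ?_⟩⟩
  intro a b
  show U'.Adj (e.symm (e (fI i a))) (e.symm (e (fI i b))) ↔ (F i).Adj a b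
  rw [Equiv.symm_apply_apply, Equiv.symm_apply_apply]
  exact hkey i a b
end

section
/- Every k-colorable graph of pathwidth at most p is p·(k−1)-almost equitably k-colorable. -/
/-- `G` has pathwidth at most `p`: it admits a path-decomposition (a sequence of
bags covering all vertices and edges, whose occurrences of each vertex are
contiguous) all of whose bags have at most `p + 1` vertices. -/
def HasPathwidthLE {V : Type*} (G : SimpleGraph V) (p : ℕ) : Prop :=
  ∃ (r : ℕ) (B : Fin r → Finset V),
    (∀ v, ∃ i, v ∈ B i) ∧
    (∀ u v, G.Adj u v → ∃ i, u ∈ B i ∧ v ∈ B i) ∧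
    (∀ v, ∀ i j l : Fin r, i ≤ j → j ≤ l → v ∈ B i → v ∈ B l → v ∈ B j) ∧
    (∀ i, (B i).card ≤ p + 1)


namespace Stmt8Aux

variable {V : Type} [DecidableEq V]

def LL (del : V → ℕ) (Y : Finset V) (τ : ℕ) : Finset V :=
  Y.filter fun v => del v < τ

def SS (ins del : V → ℕ) (Y : Finset V) (τ : ℕ) : Finset V :=
  Y.filter fun v => ins v < τ ∧ τ ≤ del v

def RR (ins : V → ℕ) (Y : Finset V) (τ : ℕ) : Finset V :=
  Y.filter fun v => τ ≤ ins v

def phi {k : ℕ} (ins del : V → ℕ) (Y : Finset V) (c : V → Fin k) (a b : Fin k)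
    (τ : ℕ) : ℕ :=
  ((LL del Y τ).filter fun v => c v = a).card +
    ((RR ins Y τ).filter fun v => c v = b).card

lemma step_facts (ins del : V → ℕ) (Y : Finset V)
    (hord : ∀ v, ins v < del v)
    (hinsinj : ∀ u v : V, ins u = ins v → u = v)
    (hdelinj : ∀ u v : V, del u = del v → u = v)
    (hid : ∀ u v : V, ins u ≠ del v) (τ : ℕ) :
    (LL del Y (τ+1) = LL del Y τ ∧ SS ins del Y (τ+1) = SS ins del Y τ ∧
      RR ins Y (τ+1) = RR ins Y τ)
    ∨ (∃ u ∈ Y, LL del Y (τ+1) = LL del Y τ ∧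
        SS ins del Y (τ+1) = insert u (SS ins del Y τ) ∧ u ∉ SS ins del Y τ ∧
        RR ins Y (τ+1) = (RR ins Y τ).erase u ∧ u ∈ RR ins Y τ)
    ∨ (∃ x ∈ Y, LL del Y (τ+1) = insert x (LL del Y τ) ∧
        x ∉ LL del Y τ ∧ SS ins del Y (τ+1) = (SS ins del Y τ).erase x ∧
        x ∈ SS ins del Y τ ∧ RR ins Y (τ+1) = RR ins Y τ) := by
  by_cases hu : ∃ u ∈ Y, ins u = τ
  · obtain ⟨u, huY, huτ⟩ := hu
    refine Or.inr (Or.inl ⟨u, huY, ?_, ?_, ?_, ?_, ?_⟩)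
    · apply Finset.filter_congr
      intro v hv
      have : del v ≠ τ := fun h => hid u v (huτ.trans h.symm)
      constructor <;> intro <;> omega
    · ext v
      simp only [SS, Finset.mem_filter, Finset.mem_insert]
      by_cases hvu : v = u
      · subst hvu
        have := hord v
        constructor
        · intro _; exact Or.inl rfl
        · intro _; exact ⟨huY, by omega, by omega⟩
      · have h1 : ins v ≠ τ := fun h => hvu (hinsinj v u (h.trans huτ.symm))
        have h2 : del v ≠ τ := fun h => hid u v (huτ.trans h.symm)
        constructor
        · rintro ⟨hY, h3, h4⟩; exact Or.inr ⟨hY, by omega, by omega⟩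
        · rintro (h | ⟨hY, h3, h4⟩)
          · exact absurd h hvu
          · exact ⟨hY, by omega, by omega⟩
    · simp only [SS, Finset.mem_filter]
      rintro ⟨_, h3, _⟩; omega
    · ext v
      simp only [RR, Finset.mem_filter, Finset.mem_erase]
      by_cases hvu : v = u
      · subst hvu
        constructor
        · rintro ⟨_, h⟩; omega
        · rintro ⟨h, _⟩; exact absurd rfl h
      · have h1 : ins v ≠ τ := fun h => hvu (hinsinj v u (h.trans huτ.symm))
        constructor
        · rintro ⟨hY, h3⟩; exact ⟨hvu, hY, by omega⟩
        · rintro ⟨_, hY, h3⟩; exact ⟨hY, by omega⟩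
    · simp only [RR, Finset.mem_filter]; exact ⟨huY, by omega⟩
  · push_neg at hu
    by_cases hx : ∃ x ∈ Y, del x = τ
    · obtain ⟨x, hxY, hxτ⟩ := hx
      refine Or.inr (Or.inr ⟨x, hxY, ?_, ?_, ?_, ?_, ?_⟩)
      · ext v
        simp only [LL, Finset.mem_filter, Finset.mem_insert]
        by_cases hvx : v = x
        · subst hvx
          constructor
          · intro _; exact Or.inl rfl
          · intro _; exact ⟨hxY, by omega⟩
        · have h2 : del v ≠ τ := fun h => hvx (hdelinj v x (h.trans hxτ.symm))
          constructor
          · rintro ⟨hY, h3⟩; exact Or.inr ⟨hY, by omega⟩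
          · rintro (h | ⟨hY, h3⟩)
            · exact absurd h hvx
            · exact ⟨hY, by omega⟩
      · simp only [LL, Finset.mem_filter]
        rintro ⟨_, h3⟩; omega
      · ext v
        simp only [SS, Finset.mem_filter, Finset.mem_erase]
        by_cases hvx : v = x
        · subst hvx
          constructor
          · rintro ⟨_, _, h4⟩; omega
          · rintro ⟨h, _⟩; exact absurd rfl h
        · constructor
          · rintro ⟨hY, h3, h4⟩
            have h2 : del v ≠ τ := fun h => hvx (hdelinj v x (h.trans hxτ.symm))
            have h1 : ins v ≠ τ := hu v hY
            exact ⟨hvx, hY, by omega, by omega⟩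
          · rintro ⟨_, hY, h3, h4⟩
            have h1 : ins v ≠ τ := hu v hY
            have h2 : del v ≠ τ := fun h => hvx (hdelinj v x (h.trans hxτ.symm))
            exact ⟨hY, by omega, by omega⟩
      · simp only [SS, Finset.mem_filter]
        have := hord x
        exact ⟨hxY, by omega, by omega⟩
      · apply Finset.filter_congr
        intro v hv
        have h1 : ins v ≠ τ := hu v hv
        constructor <;> intro <;> omega
    · push_neg at hx
      refine Or.inl ⟨?_, ?_, ?_⟩ <;> apply Finset.filter_congr <;> intro v hv
      · have := hx v hv
        constructor <;> intro <;> omega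
      · have := hx v hv
        have := hu v hv
        constructor <;> rintro ⟨h1, h2⟩ <;> exact ⟨by omega, by omega⟩
      · have := hu v hv
        constructor <;> intro <;> omega

-- appended to part1 (inside namespace)

variable {k : ℕ}

section Steps

variable (ins del : V → ℕ) (Y : Finset V) (c : V → Fin k) (a b : Fin k)
  (hord : ∀ v, ins v < del v)
  (hinsinj : ∀ u v : V, ins u = ins v → u = v)
  (hdelinj : ∀ u v : V, del u = del v → u = v)
  (hid : ∀ u v : V, ins u ≠ del v)

include hord hinsinj hdelinj hid

lemma phi_step_le (τ : ℕ) :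
    phi ins del Y c a b (τ+1) ≤ phi ins del Y c a b τ + 1 := by
  rcases step_facts ins del Y hord hinsinj hdelinj hid τ with
    ⟨h1, _, h3⟩ | ⟨u, _, h1, _, _, h4, _⟩ | ⟨x, _, h1, _, _, _, h5⟩
  · unfold phi; rw [h1, h3]; omega
  · unfold phi; rw [h1, h4]
    have : ((RR ins Y τ).erase u).filter (fun v => c v = b) ⊆
        (RR ins Y τ).filter (fun v => c v = b) :=
      Finset.filter_subset_filter _ (Finset.erase_subset _ _)
    have := Finset.card_le_card this
    omega
  · unfold phi; rw [h1, h5]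
    have : (insert x (LL del Y τ)).filter (fun v => c v = a) ⊆
        insert x ((LL del Y τ).filter (fun v => c v = a)) := by
      intro w hw
      simp only [Finset.mem_filter, Finset.mem_insert] at hw ⊢
      rcases hw with ⟨h | h, hc⟩
      · exact Or.inl h
      · exact Or.inr ⟨h, hc⟩
    have h6 := Finset.card_le_card this
    have h7 := Finset.card_insert_le x ((LL del Y τ).filter (fun v => c v = a))
    omega

lemma phi_step_eq (τ : ℕ)
    (h : (SS ins del Y (τ+1)).card = (SS ins del Y τ).card) :
    phi ins del Y c a b (τ+1) = phi ins del Y c a b τ := by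
  rcases step_facts ins del Y hord hinsinj hdelinj hid τ with
    ⟨h1, _, h3⟩ | ⟨u, _, _, h2, h3, _, _⟩ | ⟨x, _, _, _, h3, h4, _⟩
  · unfold phi; rw [h1, h3]
  · rw [h2, Finset.card_insert_of_notMem h3] at h; omega
  · rw [h3, Finset.card_erase_of_mem h4] at h
    have : 0 < (SS ins del Y τ).card := Finset.card_pos.mpr ⟨x, h4⟩
    omega

lemma phi_step_le' (τ : ℕ)
    (h : (SS ins del Y τ).card < (SS ins del Y (τ+1)).card) :
    phi ins del Y c a b (τ+1) ≤ phi ins del Y c a b τ := by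
  rcases step_facts ins del Y hord hinsinj hdelinj hid τ with
    ⟨_, h2, _⟩ | ⟨u, _, h1, _, _, h4, _⟩ | ⟨x, _, _, _, h3, h4, _⟩
  · rw [h2] at h; omega
  · unfold phi; rw [h1, h4]
    have : ((RR ins Y τ).erase u).filter (fun v => c v = b) ⊆
        (RR ins Y τ).filter (fun v => c v = b) :=
      Finset.filter_subset_filter _ (Finset.erase_subset _ _)
    have := Finset.card_le_card this
    omega
  · rw [h3, Finset.card_erase_of_mem h4] at h; omega

lemma stretch (p : ℕ) (hw : ∀ τ, (SS ins del Y τ).card ≤ p + 1) (τ1 : ℕ)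
    (hgood1 : (SS ins del Y τ1).card ≤ p) :
    ∀ j σ, σ = τ1 + j + 1 →
      (∀ ρ, τ1 < ρ → ρ < σ → (SS ins del Y ρ).card = p + 1) →
      ((SS ins del Y σ).card = p + 1 → phi ins del Y c a b σ ≤ phi ins del Y c a b τ1)
        ∧ phi ins del Y c a b σ ≤ phi ins del Y c a b τ1 + 1 := by
  intro j
  induction j with
  | zero =>
    intro σ hσ _
    subst hσ
    simp only [Nat.add_zero]
    rcases lt_trichotomy ((SS ins del Y τ1).card) ((SS ins del Y (τ1+1)).card) with h | h | h
    · have := phi_step_le' ins del Y c a b hord hinsinj hdelinj hid τ1 h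
      exact ⟨fun _ => this, by omega⟩
    · have := phi_step_eq ins del Y c a b hord hinsinj hdelinj hid τ1 h.symm
      exact ⟨fun _ => by omega, by omega⟩
    · refine ⟨fun hc => ?_, phi_step_le ins del Y c a b hord hinsinj hdelinj hid τ1⟩
      omega
  | succ j ih =>
    intro σ hσ hbad
    set σ' := τ1 + j + 1 with hσ'
    have hσeq : σ = σ' + 1 := by omega
    have hprev := ih σ' rfl (fun ρ h1 h2 => hbad ρ h1 (by omega))
    have hbadσ' : (SS ins del Y σ').card = p + 1 := hbad σ' (by omega) (by omega)
    have hphiσ' : phi ins del Y c a b σ' ≤ phi ins del Y c a b τ1 :=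
      hprev.1 hbadσ'
    subst hσeq
    by_cases hS : (SS ins del Y (σ'+1)).card = p + 1
    · have heq : (SS ins del Y (σ'+1)).card = (SS ins del Y σ').card := by omega
      have := phi_step_eq ins del Y c a b hord hinsinj hdelinj hid σ' heq
      exact ⟨fun _ => by omega, by omega⟩
    · have := phi_step_le ins del Y c a b hord hinsinj hdelinj hid σ'
      exact ⟨fun hc => absurd hc hS, by omega⟩

lemma ivt (p : ℕ) (hw : ∀ τ, (SS ins del Y τ).card ≤ p + 1) :
    ∀ d τ1 τ2, τ2 = τ1 + d → (SS ins del Y τ1).card ≤ p →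
      (SS ins del Y τ2).card ≤ p → ∀ s, phi ins del Y c a b τ1 ≤ s →
      s ≤ phi ins del Y c a b τ2 →
      ∃ τ, τ1 ≤ τ ∧ τ ≤ τ2 ∧ (SS ins del Y τ).card ≤ p ∧
        phi ins del Y c a b τ = s := by
  intro d
  induction d using Nat.strong_induction_on with
  | _ d IH =>
    intro τ1 τ2 hτ2 hg1 hg2 s hs1 hs2
    by_cases heq : phi ins del Y c a b τ1 = s
    · exact ⟨τ1, le_refl _, by omega, hg1, heq⟩
    · have hlt : phi ins del Y c a b τ1 < s := by omega
      have hτlt : τ1 < τ2 := by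
        rcases Nat.lt_or_ge τ1 τ2 with h | h
        · exact h
        · have hx : τ2 = τ1 := by omega
          rw [hx] at hs2
          omega
      have hex : ∃ σ, τ1 < σ ∧ σ ≤ τ2 ∧ (SS ins del Y σ).card ≤ p :=
        ⟨τ2, hτlt, le_refl _, hg2⟩
      classical
      set T := Nat.find hex with hT
      obtain ⟨hT1, hT2, hT3⟩ := Nat.find_spec hex
      have hbad : ∀ ρ, τ1 < ρ → ρ < T → (SS ins del Y ρ).card = p + 1 := by
        intro ρ h1 h2
        have := Nat.find_min hex h2
        push_neg at this
        have h3 := this h1 (by omega)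
        have := hw ρ
        omega
      have hstretch := stretch ins del Y c a b hord hinsinj hdelinj hid p hw τ1 hg1
        (T - τ1 - 1) T (by omega) hbad
      have hφT : phi ins del Y c a b T ≤ s := by
        have := hstretch.2
        omega
      obtain ⟨τ, h1, h2, h3, h4⟩ := IH (τ2 - T) (by omega) T τ2 (by omega) hT3 hg2 s hφT hs2
      exact ⟨τ, by omega, h2, h3, h4⟩

end Steps

lemma mem_LL {del : V → ℕ} {Y : Finset V} {τ : ℕ} {v : V} :
    v ∈ LL del Y τ ↔ v ∈ Y ∧ del v < τ := by
  unfold LL; exact Finset.mem_filter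

lemma mem_SS {ins del : V → ℕ} {Y : Finset V} {τ : ℕ} {v : V} :
    v ∈ SS ins del Y τ ↔ v ∈ Y ∧ (ins v < τ ∧ τ ≤ del v) := by
  unfold SS; exact Finset.mem_filter

lemma mem_RR {ins : V → ℕ} {Y : Finset V} {τ : ℕ} {v : V} :
    v ∈ RR ins Y τ ↔ v ∈ Y ∧ τ ≤ ins v := by
  unfold RR; exact Finset.mem_filter

section Op

variable (G : SimpleGraph V)

lemma oplemma [Fintype V] (p : ℕ) (ins del : V → ℕ)
    (hord : ∀ v, ins v < del v)
    (hadjkey : ∀ u v : V, G.Adj u v → ins v < del u)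
    (hwidth : ∀ τ, (Finset.univ.filter (fun v : V => ins v < τ ∧ τ ≤ del v)).card ≤ p + 1)
    (hinsinj : ∀ u v : V, ins u = ins v → u = v)
    (hdelinj : ∀ u v : V, del u = del v → u = v)
    (hid : ∀ u v : V, ins u ≠ del v)
    (Y : Finset V) (c : V → Fin k)
    (hc : ∀ u v : V, u ∈ Y → v ∈ Y → G.Adj u v → c u ≠ c v)
    (a b : Fin k) (s : ℕ)
    (hs1 : (Y.filter fun v => c v = b).card ≤ s)
    (hs2 : s ≤ (Y.filter fun v => c v = a).card) :
    ∃ (D : Finset V) (c' : V → Fin k), D ⊆ Y ∧ D.card ≤ p ∧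
      (∀ u v : V, u ∈ Y \ D → v ∈ Y \ D → G.Adj u v → c' u ≠ c' v) ∧
      ((Y \ D).filter fun v => c' v = a).card = s ∧
      (∀ v : V, c' v = c v ∨ c' v = Equiv.swap a b (c v)) := by
  classical
  have hwY : ∀ τ, (SS ins del Y τ).card ≤ p + 1 := by
    intro τ
    refine le_trans (Finset.card_le_card ?_) (hwidth τ)
    exact Finset.filter_subset_filter _ (Finset.subset_univ Y)
  set Tmax := Y.sup del + 1 with hTmax
  have hdelmax : ∀ v ∈ Y, del v < Tmax := by
    intro v hv
    have := Finset.le_sup (f := del) hv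
    omega
  have hSS0 : SS ins del Y 0 = ∅ := by
    apply Finset.eq_empty_of_forall_notMem
    intro v hv
    rw [mem_SS] at hv
    omega
  have hLL0 : LL del Y 0 = ∅ := by
    apply Finset.eq_empty_of_forall_notMem
    intro v hv
    rw [mem_LL] at hv
    omega
  have hRR0 : RR ins Y 0 = Y := by
    apply Finset.filter_true_of_mem
    intro v _
    omega
  have hSST : SS ins del Y Tmax = ∅ := by
    apply Finset.eq_empty_of_forall_notMem
    intro v hv
    rw [mem_SS] at hv
    have := hdelmax v hv.1
    omega
  have hLLT : LL del Y Tmax = Y := by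
    apply Finset.filter_true_of_mem
    intro v hv
    exact hdelmax v hv
  have hRRT : RR ins Y Tmax = ∅ := by
    apply Finset.eq_empty_of_forall_notMem
    intro v hv
    rw [mem_RR] at hv
    have h1 := hdelmax v hv.1
    have h2 := hord v
    omega
  have hphi0 : phi ins del Y c a b 0 = (Y.filter fun v => c v = b).card := by
    unfold phi
    rw [hLL0, hRR0]
    simp
  have hphiT : phi ins del Y c a b Tmax = (Y.filter fun v => c v = a).card := by
    unfold phi
    rw [hLLT, hRRT]
    simp
  obtain ⟨τ, -, -, hτgood, hτphi⟩ :=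
    ivt ins del Y c a b hord hinsinj hdelinj hid p hwY Tmax 0 Tmax
      (by omega) (by rw [hSS0]; simp) (by rw [hSST]; simp) s (by omega) (by omega)
  have hcover : ∀ v ∈ Y \ SS ins del Y τ, v ∈ LL del Y τ ∨ v ∈ RR ins Y τ := by
    intro v hv
    rw [Finset.mem_sdiff] at hv
    obtain ⟨hvY, hvS⟩ := hv
    rw [mem_SS] at hvS
    rw [mem_LL, mem_RR]
    rcases Nat.lt_or_ge (del v) τ with h | h
    · exact Or.inl ⟨hvY, h⟩
    · rcases Nat.lt_or_ge (ins v) τ with h2 | h2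
      · exact absurd ⟨hvY, h2, h⟩ hvS
      · exact Or.inr ⟨hvY, h2⟩
  refine ⟨SS ins del Y τ, fun v => if τ ≤ ins v then Equiv.swap a b (c v) else c v,
    Finset.filter_subset _ _, by omega, ?_, ?_, ?_⟩
  · -- properness
    intro u v hu hv hadj
    have huY : u ∈ Y := (Finset.mem_sdiff.mp hu).1
    have hvY : v ∈ Y := (Finset.mem_sdiff.mp hv).1
    rcases hcover u hu with hLu | hRu <;> rcases hcover v hv with hLv | hRv
    · rw [mem_LL] at hLu hLv
      have h1 : ¬ τ ≤ ins u := by have := hord u; omega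
      have h2 : ¬ τ ≤ ins v := by have := hord v; omega
      simp only [if_neg h1, if_neg h2]
      exact hc u v huY hvY hadj
    · rw [mem_LL] at hLu
      rw [mem_RR] at hRv
      have := hadjkey u v hadj
      have := hLu.2
      have := hRv.2
      omega
    · rw [mem_LL] at hLv
      rw [mem_RR] at hRu
      have := hadjkey v u (hadj.symm)
      have := hLv.2
      have := hRu.2
      omega
    · rw [mem_RR] at hRu hRv
      simp only [if_pos hRu.2, if_pos hRv.2]
      exact fun h => hc u v huY hvY hadj ((Equiv.swap a b).injective h)
  · -- class a count
    have hset : ((Y \ SS ins del Y τ).filter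
        fun v => (if τ ≤ ins v then Equiv.swap a b (c v) else c v) = a) =
        ((LL del Y τ).filter fun v => c v = a) ∪
          ((RR ins Y τ).filter fun v => c v = b) := by
      ext w
      simp only [Finset.mem_filter, Finset.mem_union, Finset.mem_sdiff]
      rw [mem_SS, mem_LL, mem_RR]
      constructor
      · rintro ⟨⟨hwY, hwS⟩, hw2⟩
        rcases Nat.lt_or_ge (del w) τ with h | h
        · have h1 : ¬ τ ≤ ins w := by have := hord w; omega
          rw [if_neg h1] at hw2
          exact Or.inl ⟨⟨hwY, h⟩, hw2⟩
        · have h2 : τ ≤ ins w := by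
            rcases Nat.lt_or_ge (ins w) τ with h2 | h2
            · exact absurd ⟨hwY, h2, h⟩ hwS
            · exact h2
          rw [if_pos h2] at hw2
          have hcwb : c w = b := by
            have h3 : Equiv.swap a b (c w) = Equiv.swap a b b := by
              rw [Equiv.swap_apply_right]; exact hw2
            exact (Equiv.swap a b).injective h3
          exact Or.inr ⟨⟨hwY, h2⟩, hcwb⟩
      · rintro (⟨⟨hwY, hdel⟩, hcw⟩ | ⟨⟨hwY, hins⟩, hcw⟩)
        · have h1 : ¬ τ ≤ ins w := by have := hord w; omega
          exact ⟨⟨hwY, fun hh => by omega⟩, by rw [if_neg h1]; exact hcw⟩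
        · exact ⟨⟨hwY, fun hh => by omega⟩,
            by rw [if_pos hins, hcw, Equiv.swap_apply_right]⟩
    rw [hset, Finset.card_union_of_disjoint, ← hτphi]
    · rfl
    · apply Finset.disjoint_filter_filter
      rw [Finset.disjoint_left]
      intro w hw1 hw2
      rw [mem_LL] at hw1
      rw [mem_RR] at hw2
      have := hord w
      omega
  · intro v
    by_cases h : τ ≤ ins v
    · exact Or.inr (by simp only [if_pos h])
    · exact Or.inl (by simp only [if_neg h])

end Op

section Rec

variable (G : SimpleGraph V)

lemma rec_lemma [Fintype V] (p : ℕ) (ins del : V → ℕ)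
    (hord : ∀ v, ins v < del v)
    (hadjkey : ∀ u v : V, G.Adj u v → ins v < del u)
    (hwidth : ∀ τ, (Finset.univ.filter (fun v : V => ins v < τ ∧ τ ≤ del v)).card ≤ p + 1)
    (hinsinj : ∀ u v : V, ins u = ins v → u = v)
    (hdelinj : ∀ u v : V, del u = del v → u = v)
    (hid : ∀ u v : V, ins u ≠ del v) (t : ℕ) :
    ∀ (m : ℕ) (cols : Finset (Fin k)) (Y : Finset V) (c : V → Fin k) (β : ℕ),
      cols.card = m →
      (∀ v ∈ Y, c v ∈ cols) →
      (∀ u v : V, u ∈ Y → v ∈ Y → G.Adj u v → c u ≠ c v) →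
      m * t + p * (m - 1) ≤ Y.card →
      Y.card ≤ m * (t + 1) + β →
      p * (m - 1) ≤ β →
      ∃ (X : Finset V) (c' : V → Fin k), X ⊆ Y ∧ X.card ≤ β ∧
        (∀ u v : V, u ∈ Y \ X → v ∈ Y \ X → G.Adj u v → c' u ≠ c' v) ∧
        (∀ v ∈ Y \ X, c' v ∈ cols) ∧
        (∀ i ∈ cols, t ≤ ((Y \ X).filter fun v => c' v = i).card ∧
          ((Y \ X).filter fun v => c' v = i).card ≤ t + 1) := by
  intro m
  induction m with
  | zero =>
    intro cols Y c β hcard hcin _hprop _hP1 _hP2 _hP3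
    have hcols : cols = ∅ := Finset.card_eq_zero.mp hcard
    subst hcols
    have hY : Y = ∅ := Finset.eq_empty_of_forall_notMem
      (fun v hv => by simpa using hcin v hv)
    subst hY
    refine ⟨∅, c, Finset.empty_subset _, by simp, ?_, ?_, ?_⟩
    · intro u v hu _ _
      simp at hu
    · intro v hv
      simp at hv
    · intro i hi
      simp at hi
  | succ m ih =>
    intro cols Y c β hcard hcin hprop hP1 hP2 hP3
    have hP1' : (m+1)*t + p*m ≤ Y.card := by simpa using hP1
    have hP3' : p*m ≤ β := by simpa using hP3
    by_cases hm : m = 0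
    · -- single color
      subst hm
      obtain ⟨b0, hb0⟩ := Finset.card_eq_one.mp hcard
      subst hb0
      have hallb : ∀ v ∈ Y, c v = b0 := fun v hv => Finset.mem_singleton.mp (hcin v hv)
      obtain ⟨E, hEY, hEcard⟩ := Finset.exists_subset_card_eq (s := Y) (n := Y.card - (t+1)) (by omega)
      have hP2'' : Y.card ≤ (t+1) + β := by simpa using hP2
      have hP1'' : t ≤ Y.card := by simpa using hP1'
      refine ⟨E, c, hEY, by omega, ?_, ?_, ?_⟩
      · intro u v hu hv hadj
        exact hprop u v (Finset.mem_sdiff.mp hu).1 (Finset.mem_sdiff.mp hv).1 hadj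
      · intro v hv
        exact hcin v (Finset.mem_sdiff.mp hv).1
      · intro i hi
        have hib : i = b0 := Finset.mem_singleton.mp hi
        subst hib
        have hfil : (Y \ E).filter (fun v => c v = i) = Y \ E :=
          Finset.filter_true_of_mem (fun v hv => hallb v (Finset.mem_sdiff.mp hv).1)
        rw [hfil, Finset.card_sdiff_of_subset hEY, hEcard]
        constructor <;> omega
    · -- at least two colors
      have hm1 : 1 ≤ m := Nat.one_le_iff_ne_zero.mpr hm
      have hcolsne : cols.Nonempty := Finset.card_pos.mp (by omega)
      obtain ⟨b, hb, hbmin⟩ := Finset.exists_min_image cols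
        (fun i => (Y.filter fun v => c v = i).card) hcolsne
      obtain ⟨a, ha, hamax⟩ := Finset.exists_max_image cols
        (fun i => (Y.filter fun v => c v = i).card) hcolsne
      have hsum : ∑ i ∈ cols, (Y.filter fun v => c v = i).card = Y.card :=
        (Finset.card_eq_sum_card_fiberwise hcin).symm
      have hYlb : (m+1) * (Y.filter fun v => c v = b).card ≤ Y.card := by
        calc (m+1) * (Y.filter fun v => c v = b).card
            = ∑ _i ∈ cols, (Y.filter fun v => c v = b).card := by
              rw [Finset.sum_const, hcard, smul_eq_mul]
          _ ≤ ∑ i ∈ cols, (Y.filter fun v => c v = i).card :=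
              Finset.sum_le_sum (fun i hi => hbmin i hi)
          _ = Y.card := hsum
      have hYub : Y.card ≤ (m+1) * (Y.filter fun v => c v = a).card := by
        calc Y.card = ∑ i ∈ cols, (Y.filter fun v => c v = i).card := hsum.symm
          _ ≤ ∑ _i ∈ cols, (Y.filter fun v => c v = a).card :=
              Finset.sum_le_sum (fun i hi => hamax i hi)
          _ = (m+1) * (Y.filter fun v => c v = a).card := by
              rw [Finset.sum_const, hcard, smul_eq_mul]
      have e1 : (m+1)*t = m*t + t := by ring
      have e2 : (m+1)*(t+1) = m*(t+1) + (t+1) := by ring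
      have e3 : p*m = p*(m-1) + p := by
        cases m with
        | zero => omega
        | succ n =>
          have hn : n + 1 - 1 = n := rfl
          rw [hn]
          ring
      by_cases hcase : t + 1 ≤ (Y.filter fun v => c v = b).card
      · -- CASE I: smallest class already large; freeze it (possibly trimmed)
        have hZY : (Y.filter fun v => c v = b) ⊆ Y := Finset.filter_subset _ _
        obtain ⟨E, hEZ, hEcard⟩ := Finset.exists_subset_card_eq (s := Y.filter fun v => c v = b)
          (n := (Y.filter fun v => c v = b).card - (t+1)) (by omega)
        have hcard' : (cols.erase b).card = m := by
          rw [Finset.card_erase_of_mem hb, hcard]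
          omega
        have hcin' : ∀ v ∈ Y \ (Y.filter fun v => c v = b), c v ∈ cols.erase b := by
          intro v hv
          rw [Finset.mem_sdiff] at hv
          refine Finset.mem_erase.mpr ⟨?_, hcin v hv.1⟩
          intro h
          exact hv.2 (Finset.mem_filter.mpr ⟨hv.1, h⟩)
        have hprop' : ∀ u v : V, u ∈ Y \ (Y.filter fun v => c v = b) →
            v ∈ Y \ (Y.filter fun v => c v = b) → G.Adj u v → c u ≠ c v :=
          fun u v hu hv hadj =>
            hprop u v (Finset.mem_sdiff.mp hu).1 (Finset.mem_sdiff.mp hv).1 hadj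
        have hYZcard : (Y \ (Y.filter fun v => c v = b)).card =
            Y.card - (Y.filter fun v => c v = b).card := Finset.card_sdiff_of_subset hZY
        have e4 : (m+1)*(Y.filter fun v => c v = b).card =
            m*(Y.filter fun v => c v = b).card + (Y.filter fun v => c v = b).card := by ring
        have hextraβ : (m+1)*((Y.filter fun v => c v = b).card - (t+1)) ≤ β := by
          have e8 : (Y.filter fun v => c v = b).card =
              ((Y.filter fun v => c v = b).card - (t+1)) + (t+1) := by omega
          have e7 : (m+1)*(Y.filter fun v => c v = b).card =
              (m+1)*((Y.filter fun v => c v = b).card - (t+1)) + (m+1)*(t+1) := by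
            calc (m+1)*(Y.filter fun v => c v = b).card
                = (m+1)*(((Y.filter fun v => c v = b).card - (t+1)) + (t+1)) := by rw [← e8]
              _ = (m+1)*((Y.filter fun v => c v = b).card - (t+1)) + (m+1)*(t+1) := by ring
          omega
        have hextraleβ : (Y.filter fun v => c v = b).card - (t+1) ≤ β := by
          have := Nat.le_mul_of_pos_left ((Y.filter fun v => c v = b).card - (t+1))
            (show 0 < m + 1 by omega)
          omega
        have hrec1 : m * t + p * (m - 1) ≤ (Y \ (Y.filter fun v => c v = b)).card := by
          rw [hYZcard]
          rcases le_or_gt (Y.filter fun v => c v = b).card (t+p) with h | h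
          · omega
          · have h5 : m*(t+p+1) ≤ m*(Y.filter fun v => c v = b).card :=
              Nat.mul_le_mul_left m (by omega)
            have e5 : m*(t+p+1) = m*t + m*p + m := by ring
            have e6 : m*p = p*m := by ring
            omega
        have hrec2 : (Y \ (Y.filter fun v => c v = b)).card ≤
            m * (t+1) + (β - ((Y.filter fun v => c v = b).card - (t+1))) := by
          rw [hYZcard]
          omega
        have hrec3 : p * (m - 1) ≤ β - ((Y.filter fun v => c v = b).card - (t+1)) := by
          have h9 : (m+1)*(β - ((Y.filter fun v => c v = b).card - (t+1))) +
              (m+1)*((Y.filter fun v => c v = b).card - (t+1)) = (m+1)*β := by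
            rw [← Nat.mul_add, Nat.sub_add_cancel hextraleβ]
          have h10 : m*(p*m) ≤ m*β := Nat.mul_le_mul_left m hP3'
          have h11 : (m+1)*(p*(m-1)) ≤ m*(p*m) := by
            cases m with
            | zero => omega
            | succ n =>
              have hn : n + 1 - 1 = n := rfl
              rw [hn]
              nlinarith
          have h12 : (m+1)*β = m*β + β := by ring
          have h13 : (m+1)*(p*(m-1)) ≤
              (m+1)*(β - ((Y.filter fun v => c v = b).card - (t+1))) := by omega
          exact Nat.le_of_mul_le_mul_left h13 (by omega)
        obtain ⟨X', c'', hX'sub, hX'card, hprop'', hcin'', hclass''⟩ :=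
          ih (cols.erase b) (Y \ (Y.filter fun v => c v = b)) c
            (β - ((Y.filter fun v => c v = b).card - (t+1)))
            hcard' hcin' hprop' hrec1 hrec2 hrec3
        refine ⟨E ∪ X', fun v => if v ∈ (Y.filter fun v => c v = b) then b else c'' v,
          ?_, ?_, ?_, ?_, ?_⟩
        · exact Finset.union_subset (hEZ.trans hZY) (hX'sub.trans Finset.sdiff_subset)
        · refine le_trans (Finset.card_union_le _ _) ?_
          omega
        · intro u v hu hv hadj
          have huY := (Finset.mem_sdiff.mp hu).1
          have hvY := (Finset.mem_sdiff.mp hv).1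
          have huX := (Finset.mem_sdiff.mp hu).2
          have hvX := (Finset.mem_sdiff.mp hv).2
          rw [Finset.mem_union] at huX hvX
          push_neg at huX hvX
          by_cases huZ : u ∈ (Y.filter fun v => c v = b) <;>
            by_cases hvZ : v ∈ (Y.filter fun v => c v = b)
          · have h1 : c u = b := (Finset.mem_filter.mp huZ).2
            have h2 : c v = b := (Finset.mem_filter.mp hvZ).2
            exact absurd (h1.trans h2.symm) (hprop u v huY hvY hadj)
          · simp only [if_pos huZ, if_neg hvZ]
            have hv' : v ∈ (Y \ (Y.filter fun v => c v = b)) \ X' :=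
              Finset.mem_sdiff.mpr ⟨Finset.mem_sdiff.mpr ⟨hvY, hvZ⟩, hvX.2⟩
            exact fun h => (Finset.mem_erase.mp (hcin'' v hv')).1 h.symm
          · simp only [if_neg huZ, if_pos hvZ]
            have hu' : u ∈ (Y \ (Y.filter fun v => c v = b)) \ X' :=
              Finset.mem_sdiff.mpr ⟨Finset.mem_sdiff.mpr ⟨huY, huZ⟩, huX.2⟩
            exact (Finset.mem_erase.mp (hcin'' u hu')).1
          · simp only [if_neg huZ, if_neg hvZ]
            exact hprop'' u v
              (Finset.mem_sdiff.mpr ⟨Finset.mem_sdiff.mpr ⟨huY, huZ⟩, huX.2⟩)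
              (Finset.mem_sdiff.mpr ⟨Finset.mem_sdiff.mpr ⟨hvY, hvZ⟩, hvX.2⟩) hadj
        · intro v hv
          have hvY := (Finset.mem_sdiff.mp hv).1
          have hvX := (Finset.mem_sdiff.mp hv).2
          rw [Finset.mem_union] at hvX
          push_neg at hvX
          by_cases hvZ : v ∈ (Y.filter fun v => c v = b)
          · simp only [if_pos hvZ]; exact hb
          · simp only [if_neg hvZ]
            exact Finset.mem_of_mem_erase (hcin'' v
              (Finset.mem_sdiff.mpr ⟨Finset.mem_sdiff.mpr ⟨hvY, hvZ⟩, hvX.2⟩))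
        · intro i hi
          by_cases hib : i = b
          · rw [hib]
            have hfeq : ((Y \ (E ∪ X')).filter
                (fun v => (if v ∈ (Y.filter fun v => c v = b) then b else c'' v) = b)) =
                (Y.filter fun v => c v = b) \ E := by
              ext w
              simp only [Finset.mem_filter, Finset.mem_sdiff, Finset.mem_union, not_or]
              constructor
              · rintro ⟨⟨hwY, hwE, hwX⟩, hw2⟩
                by_cases hwZ : w ∈ Y ∧ c w = b
                · exact ⟨hwZ, hwE⟩
                · rw [if_neg hwZ] at hw2
                  have hw' : w ∈ (Y \ (Y.filter fun v => c v = b)) \ X' :=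
                    Finset.mem_sdiff.mpr ⟨Finset.mem_sdiff.mpr
                      ⟨hwY, fun (h : w ∈ Y.filter fun v => c v = b) =>
                        hwZ (Finset.mem_filter.mp h)⟩, hwX⟩
                  exact absurd hw2 ((Finset.mem_erase.mp (hcin'' w hw')).1)
              · rintro ⟨⟨hwY, hwc⟩, hwE⟩
                refine ⟨⟨hwY, hwE, ?_⟩, by rw [if_pos (show w ∈ Y ∧ c w = b from ⟨hwY, hwc⟩)]⟩
                intro hwX
                exact (Finset.mem_sdiff.mp (hX'sub hwX)).2 (Finset.mem_filter.mpr ⟨hwY, hwc⟩)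
            rw [hfeq, Finset.card_sdiff_of_subset hEZ, hEcard]
            constructor <;> omega
          · have hie : i ∈ cols.erase b := Finset.mem_erase.mpr ⟨hib, hi⟩
            have hfeq : ((Y \ (E ∪ X')).filter
                (fun v => (if v ∈ (Y.filter fun v => c v = b) then b else c'' v) = i)) =
                ((Y \ (Y.filter fun v => c v = b)) \ X').filter (fun v => c'' v = i) := by
              ext w
              simp only [Finset.mem_filter, Finset.mem_sdiff, Finset.mem_union, not_or]
              constructor
              · rintro ⟨⟨hwY, hwE, hwX⟩, hw2⟩
                by_cases hwZ : w ∈ Y ∧ c w = b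
                · rw [if_pos hwZ] at hw2
                  exact absurd hw2.symm hib
                · rw [if_neg hwZ] at hw2
                  exact ⟨⟨⟨hwY, hwZ⟩, hwX⟩, hw2⟩
              · rintro ⟨⟨⟨hwY, hwZ⟩, hwX⟩, hw2⟩
                have hwE : w ∉ E := fun h => hwZ (Finset.mem_filter.mp (hEZ h))
                exact ⟨⟨hwY, hwE, hwX⟩, by rw [if_neg hwZ]; exact hw2⟩
            rw [hfeq]
            exact hclass'' i hie
      · -- CASE II: extract a class of size t or t+1 by a cut-and-swap
        have hcnta : t ≤ (Y.filter fun v => c v = a).card := by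
          have h1 : (m+1)*t ≤ (m+1)*(Y.filter fun v => c v = a).card := by omega
          exact Nat.le_of_mul_le_mul_left h1 (by omega)
        obtain ⟨s, hst, hst1, hsb, hsa, hA, hB⟩ :
            ∃ s, t ≤ s ∧ s ≤ t+1 ∧ (Y.filter fun v => c v = b).card ≤ s ∧
              s ≤ (Y.filter fun v => c v = a).card ∧
              m*t + p*(m-1) + p + s ≤ Y.card ∧ Y.card ≤ m*(t+1) + β + s := by
          have e2b : m*(t+1) = m*t + m := by ring
          by_cases hbig : (m+1)*(t+1) ≤ Y.card ∧ (m+1)*t + p*m + 1 ≤ Y.card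
          · obtain ⟨hbig1, hbig2⟩ := hbig
            refine ⟨t+1, by omega, le_refl _, by omega, ?_, by omega, by omega⟩
            have h1 : (m+1)*(t+1) ≤ (m+1)*(Y.filter fun v => c v = a).card :=
              le_trans hbig1 hYub
            exact Nat.le_of_mul_le_mul_left h1 (by omega)
          · rw [not_and_or] at hbig
            push_neg at hbig
            refine ⟨t, le_refl _, by omega, by omega, hcnta, by omega, ?_⟩
            rcases hbig with h | h <;> omega
        obtain ⟨D, cmid, hDY, hDp, hpropmid, hclassA, hvals⟩ :=
          oplemma G p ins del hord hadjkey hwidth hinsinj hdelinj hid Y c hprop a b s hsb hsa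
        have hZY' : ((Y \ D).filter fun v => cmid v = a) ⊆ Y \ D := Finset.filter_subset _ _
        have hDβ : D.card ≤ β := by
          have h1 : p*1 ≤ p*m := Nat.mul_le_mul_left p hm1
          omega
        have hswapcols : ∀ x, x ∈ cols → Equiv.swap a b x ∈ cols := by
          intro x hx
          rcases eq_or_ne x a with rfl | hxa
          · rw [Equiv.swap_apply_left]; exact hb
          rcases eq_or_ne x b with rfl | hxb
          · rw [Equiv.swap_apply_right]; exact ha
          · rw [Equiv.swap_apply_of_ne_of_ne hxa hxb]; exact hx
        have hcinmid : ∀ v ∈ (Y \ D) \ ((Y \ D).filter fun v => cmid v = a),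
            cmid v ∈ cols.erase a := by
          intro v hv
          rw [Finset.mem_sdiff] at hv
          refine Finset.mem_erase.mpr
            ⟨fun h => hv.2 (Finset.mem_filter.mpr ⟨hv.1, h⟩), ?_⟩
          have hvY : v ∈ Y := (Finset.mem_sdiff.mp hv.1).1
          rcases hvals v with h | h <;> rw [h]
          · exact hcin v hvY
          · exact hswapcols _ (hcin v hvY)
        have hpropmid' : ∀ u v : V, u ∈ (Y \ D) \ ((Y \ D).filter fun v => cmid v = a) →
            v ∈ (Y \ D) \ ((Y \ D).filter fun v => cmid v = a) → G.Adj u v →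
            cmid u ≠ cmid v :=
          fun u v hu hv hadj =>
            hpropmid u v (Finset.sdiff_subset hu) (Finset.sdiff_subset hv) hadj
        have hYD : (Y \ D).card = Y.card - D.card := Finset.card_sdiff_of_subset hDY
        have hY''card : ((Y \ D) \ ((Y \ D).filter fun v => cmid v = a)).card =
            Y.card - D.card - s := by
          rw [Finset.card_sdiff_of_subset hZY', hYD, hclassA]
        have hDY' : D.card ≤ Y.card := Finset.card_le_card hDY
        have hrec1 : m * t + p * (m-1) ≤
            ((Y \ D) \ ((Y \ D).filter fun v => cmid v = a)).card := by
          rw [hY''card]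
          omega
        have hrec2 : ((Y \ D) \ ((Y \ D).filter fun v => cmid v = a)).card ≤
            m * (t+1) + (β - D.card) := by
          rw [hY''card]
          omega
        have hrec3 : p * (m-1) ≤ β - D.card := by omega
        have hcard'' : (cols.erase a).card = m := by
          rw [Finset.card_erase_of_mem ha, hcard]
          omega
        obtain ⟨X'', c''', hX''sub, hX''card, hprop''', hcin''', hclass'''⟩ :=
          ih (cols.erase a) ((Y \ D) \ ((Y \ D).filter fun v => cmid v = a)) cmid
            (β - D.card) hcard'' hcinmid hpropmid' hrec1 hrec2 hrec3
        refine ⟨D ∪ X'', fun v => if v ∈ ((Y \ D).filter fun v => cmid v = a)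
          then a else c''' v, ?_, ?_, ?_, ?_, ?_⟩
        · refine Finset.union_subset hDY (hX''sub.trans ?_)
          exact Finset.sdiff_subset.trans Finset.sdiff_subset
        · refine le_trans (Finset.card_union_le _ _) ?_
          omega
        · intro u v hu hv hadj
          have huY := (Finset.mem_sdiff.mp hu).1
          have hvY := (Finset.mem_sdiff.mp hv).1
          have huX := (Finset.mem_sdiff.mp hu).2
          have hvX := (Finset.mem_sdiff.mp hv).2
          rw [Finset.mem_union] at huX hvX
          push_neg at huX hvX
          have huYD : u ∈ Y \ D := Finset.mem_sdiff.mpr ⟨huY, huX.1⟩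
          have hvYD : v ∈ Y \ D := Finset.mem_sdiff.mpr ⟨hvY, hvX.1⟩
          by_cases huZ : u ∈ ((Y \ D).filter fun v => cmid v = a) <;>
            by_cases hvZ : v ∈ ((Y \ D).filter fun v => cmid v = a)
          · have h1 : cmid u = a := (Finset.mem_filter.mp huZ).2
            have h2 : cmid v = a := (Finset.mem_filter.mp hvZ).2
            exact absurd (h1.trans h2.symm) (hpropmid u v huYD hvYD hadj)
          · simp only [if_pos huZ, if_neg hvZ]
            have hv' : v ∈ ((Y \ D) \ ((Y \ D).filter fun v => cmid v = a)) \ X'' :=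
              Finset.mem_sdiff.mpr ⟨Finset.mem_sdiff.mpr ⟨hvYD, hvZ⟩, hvX.2⟩
            exact fun h => (Finset.mem_erase.mp (hcin''' v hv')).1 h.symm
          · simp only [if_neg huZ, if_pos hvZ]
            have hu' : u ∈ ((Y \ D) \ ((Y \ D).filter fun v => cmid v = a)) \ X'' :=
              Finset.mem_sdiff.mpr ⟨Finset.mem_sdiff.mpr ⟨huYD, huZ⟩, huX.2⟩
            exact (Finset.mem_erase.mp (hcin''' u hu')).1
          · simp only [if_neg huZ, if_neg hvZ]
            exact hprop''' u v
              (Finset.mem_sdiff.mpr ⟨Finset.mem_sdiff.mpr ⟨huYD, huZ⟩, huX.2⟩)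
              (Finset.mem_sdiff.mpr ⟨Finset.mem_sdiff.mpr ⟨hvYD, hvZ⟩, hvX.2⟩) hadj
        · intro v hv
          have hvY := (Finset.mem_sdiff.mp hv).1
          have hvX := (Finset.mem_sdiff.mp hv).2
          rw [Finset.mem_union] at hvX
          push_neg at hvX
          by_cases hvZ : v ∈ ((Y \ D).filter fun v => cmid v = a)
          · simp only [if_pos hvZ]; exact ha
          · simp only [if_neg hvZ]
            exact Finset.mem_of_mem_erase (hcin''' v (Finset.mem_sdiff.mpr
              ⟨Finset.mem_sdiff.mpr ⟨Finset.mem_sdiff.mpr ⟨hvY, hvX.1⟩, hvZ⟩, hvX.2⟩))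
        · intro i hi
          by_cases hia : i = a
          · rw [hia]
            have hfeq : ((Y \ (D ∪ X'')).filter
                (fun v => (if v ∈ ((Y \ D).filter fun v => cmid v = a) then a
                  else c''' v) = a)) = ((Y \ D).filter fun v => cmid v = a) := by
              ext w
              simp only [Finset.mem_filter, Finset.mem_sdiff, Finset.mem_union, not_or]
              constructor
              · rintro ⟨⟨hwY, hwD, hwX⟩, hw2⟩
                by_cases hwZ : (w ∈ Y ∧ w ∉ D) ∧ cmid w = a
                · exact hwZ
                · rw [if_neg hwZ] at hw2
                  have hw' : w ∈ ((Y \ D) \ ((Y \ D).filter fun v => cmid v = a)) \ X'' :=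
                    Finset.mem_sdiff.mpr ⟨Finset.mem_sdiff.mpr
                      ⟨Finset.mem_sdiff.mpr ⟨hwY, hwD⟩,
                       fun (h : w ∈ (Y \ D).filter fun v => cmid v = a) => hwZ (by
                        have h2 := Finset.mem_filter.mp h
                        exact ⟨Finset.mem_sdiff.mp h2.1, h2.2⟩)⟩, hwX⟩
                  exact absurd hw2 ((Finset.mem_erase.mp (hcin''' w hw')).1)
              · rintro ⟨⟨hwY, hwD⟩, hwc⟩
                refine ⟨⟨hwY, hwD, ?_⟩,
                  by rw [if_pos (show (w ∈ Y ∧ w ∉ D) ∧ cmid w = a from ⟨⟨hwY, hwD⟩, hwc⟩)]⟩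
                intro hwX
                exact (Finset.mem_sdiff.mp (hX''sub hwX)).2
                  (Finset.mem_filter.mpr ⟨Finset.mem_sdiff.mpr ⟨hwY, hwD⟩, hwc⟩)
            rw [hfeq, hclassA]
            constructor <;> omega
          · have hie : i ∈ cols.erase a := Finset.mem_erase.mpr ⟨hia, hi⟩
            have hfeq : ((Y \ (D ∪ X'')).filter
                (fun v => (if v ∈ ((Y \ D).filter fun v => cmid v = a) then a
                  else c''' v) = i)) =
                (((Y \ D) \ ((Y \ D).filter fun v => cmid v = a)) \ X'').filter
                  (fun v => c''' v = i) := by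
              ext w
              simp only [Finset.mem_filter, Finset.mem_sdiff, Finset.mem_union, not_or]
              constructor
              · rintro ⟨⟨hwY, hwD, hwX⟩, hw2⟩
                by_cases hwZ : (w ∈ Y ∧ w ∉ D) ∧ cmid w = a
                · rw [if_pos hwZ] at hw2
                  exact absurd hw2.symm hia
                · rw [if_neg hwZ] at hw2
                  exact ⟨⟨⟨⟨hwY, hwD⟩, hwZ⟩, hwX⟩, hw2⟩
              · rintro ⟨⟨⟨⟨hwY, hwD⟩, hwZ⟩, hwX⟩, hw2⟩
                exact ⟨⟨hwY, hwD, hwX⟩, by rw [if_neg hwZ]; exact hw2⟩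
            rw [hfeq]
            exact hclass''' i hie

end Rec

section Keys

lemma key_lt {M q1 q2 e1 e2 : ℕ} (he1 : e1 < M) (hq : q1 < q2) :
    M*q1 + e1 < M*q2 + e2 := by
  have h1 : M*(q1+1) ≤ M*q2 := Nat.mul_le_mul_left M hq
  have h2 : M*(q1+1) = M*q1 + M := by ring
  omega

lemma key_le_elim {M q1 q2 e1 e2 : ℕ} (he2 : e2 < M) (h : M*q1 + e1 < M*q2 + e2) :
    q1 ≤ q2 := by
  by_contra hc
  push_neg at hc
  have h1 : M*(q2+1) ≤ M*q1 := Nat.mul_le_mul_left M hc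
  have h2 : M*(q2+1) = M*q2 + M := by ring
  omega

lemma key_mod {M q ee : ℕ} (he : ee < M) : (M*q + ee) % M = ee := by
  rw [Nat.mul_add_mod]
  exact Nat.mod_eq_of_lt he

end Keys

section Exists

lemma exists_keys [Fintype V] (G : SimpleGraph V) (p : ℕ)
    (hpw : HasPathwidthLE G p) :
    ∃ ins del : V → ℕ,
      (∀ v, ins v < del v) ∧
      (∀ u v : V, G.Adj u v → ins v < del u) ∧
      (∀ τ, (Finset.univ.filter (fun v : V => ins v < τ ∧ τ ≤ del v)).card ≤ p + 1) ∧
      (∀ u v : V, ins u = ins v → u = v) ∧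
      (∀ u v : V, del u = del v → u = v) ∧
      (∀ u v : V, ins u ≠ del v) := by
  classical
  obtain ⟨r, B, h1, h2, h3, h4⟩ := hpw
  set M := Fintype.card V + 1 with hM
  set e : V ≃ Fin (Fintype.card V) := Fintype.equivFin V with he
  have heM : ∀ v : V, (e v : ℕ) < M := fun v => by
    have := (e v).isLt
    omega
  have hIv : ∀ v : V, (Finset.univ.filter (fun i => v ∈ B i)).Nonempty := by
    intro v
    obtain ⟨i, hi⟩ := h1 v
    exact ⟨i, by simp [hi]⟩
  set f : V → Fin r := fun v => (Finset.univ.filter (fun i => v ∈ B i)).min' (hIv v)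
    with hf
  set g : V → Fin r := fun v => (Finset.univ.filter (fun i => v ∈ B i)).max' (hIv v)
    with hg
  have hfmem : ∀ v, v ∈ B (f v) := fun v =>
    (Finset.mem_filter.mp (Finset.min'_mem _ (hIv v))).2
  have hgmem : ∀ v, v ∈ B (g v) := fun v =>
    (Finset.mem_filter.mp (Finset.max'_mem _ (hIv v))).2
  have hfg : ∀ v, f v ≤ g v := fun v =>
    Finset.min'_le _ _ (Finset.max'_mem _ (hIv v))
  have hfle : ∀ v (i : Fin r), v ∈ B i → f v ≤ i := fun v i hi =>
    Finset.min'_le _ _ (by simp [hi])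
  have hgle : ∀ v (i : Fin r), v ∈ B i → i ≤ g v := fun v i hi =>
    Finset.le_max' _ _ (by simp [hi])
  have hint : ∀ v (i : Fin r), f v ≤ i → i ≤ g v → v ∈ B i := fun v i hi1 hi2 =>
    h3 v (f v) i (g v) hi1 hi2 (hfmem v) (hgmem v)
  refine ⟨fun v => M*(2*(f v : ℕ)+1) + (e v : ℕ),
    fun v => M*(2*(g v : ℕ)+2) + (e v : ℕ), ?_, ?_, ?_, ?_, ?_, ?_⟩
  · intro v
    show M*(2*(f v : ℕ)+1) + (e v : ℕ) < M*(2*(g v : ℕ)+2) + (e v : ℕ)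
    apply key_lt (heM v)
    have := Fin.le_def.mp (hfg v)
    omega
  · intro u v hadj
    obtain ⟨i, hiu, hiv⟩ := h2 u v hadj
    show M*(2*(f v : ℕ)+1) + (e v : ℕ) < M*(2*(g u : ℕ)+2) + (e u : ℕ)
    apply key_lt (heM v)
    have hfv := Fin.le_def.mp (hfle v i hiv)
    have hgu := Fin.le_def.mp (hgle u i hiu)
    omega
  · intro τ
    dsimp only
    rcases Finset.eq_empty_or_nonempty (Finset.univ.filter
      (fun v : V => M*(2*(f v : ℕ)+1) + (e v : ℕ) < τ ∧
        τ ≤ M*(2*(g v : ℕ)+2) + (e v : ℕ))) with hW | hW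
    · rw [hW]
      simp
    · obtain ⟨w, hwW, hwmax⟩ := Finset.exists_max_image _ (fun v => ((f v : ℕ))) hW
      refine le_trans (Finset.card_le_card ?_) (h4 (f w))
      intro v hv
      have hv2 := Finset.mem_filter.mp hv
      have hw2 := Finset.mem_filter.mp hwW
      have hcross : M*(2*(f w : ℕ)+1) + (e w : ℕ) < M*(2*(g v : ℕ)+2) + (e v : ℕ) := by
        have ha := hw2.2.1
        have hb := hv2.2.2
        omega
      have hle := key_le_elim (heM v) hcross
      have hfwgv : (f w : ℕ) ≤ (g v : ℕ) := by omega
      have hfvfw : (f v : ℕ) ≤ (f w : ℕ) := hwmax v hv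
      exact hint v (f w) (Fin.le_def.mpr hfvfw) (Fin.le_def.mpr hfwgv)
  · intro u v h
    dsimp only at h
    have h1' := key_mod (q := 2*(f u : ℕ)+1) (heM u)
    have h2' := key_mod (q := 2*(f v : ℕ)+1) (heM v)
    have : (e u : ℕ) = (e v : ℕ) := by rw [← h1', ← h2', h]
    exact e.injective (Fin.val_injective this)
  · intro u v h
    dsimp only at h
    have h1' := key_mod (q := 2*(g u : ℕ)+2) (heM u)
    have h2' := key_mod (q := 2*(g v : ℕ)+2) (heM v)
    have : (e u : ℕ) = (e v : ℕ) := by rw [← h1', ← h2', h]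
    exact e.injective (Fin.val_injective this)
  · intro u v h
    dsimp only at h
    have h1' := key_mod (q := 2*(f u : ℕ)+1) (heM u)
    have h2' := key_mod (q := 2*(g v : ℕ)+2) (heM v)
    have huv : (e u : ℕ) = (e v : ℕ) := by rw [← h1', ← h2', h]
    have huv' : u = v := e.injective (Fin.val_injective huv)
    subst huv'
    have hmm : M*(2*(f u : ℕ)+1) = M*(2*(g u : ℕ)+2) := by omega
    have h5 : 2*(f u : ℕ)+1 = 2*(g u : ℕ)+2 :=
      Nat.eq_of_mul_eq_mul_left (by omega) hmm
    omega

lemma card_filter_subtype [Fintype V] (X : Finset V) (P : V → Prop) [DecidablePred P] :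
    (Finset.univ.filter fun w : ((↑(Xᶜ) : Set V)) => P w.1).card =
      ((Xᶜ).filter P).card := by
  classical
  apply Finset.card_bij (fun w _ => w.1)
  · intro w hw
    rw [Finset.mem_filter] at hw ⊢
    exact ⟨Finset.mem_coe.mp w.2, hw.2⟩
  · intro w1 _ w2 _ h
    exact Subtype.ext h
  · intro v hv
    rw [Finset.mem_filter] at hv
    exact ⟨⟨v, Finset.mem_coe.mpr hv.1⟩, Finset.mem_filter.mpr ⟨Finset.mem_univ _, hv.2⟩, rfl⟩

end Exists

end Stmt8Aux

theorem stmt8_aux {V : Type} [Fintype V] [DecidableEq V] (G : SimpleGraph V) (p k : ℕ)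
    (hcol : G.Colorable k) (hpw : HasPathwidthLE G p) :
    AlmostEquitablyColorable G (p * (k - 1)) k := by
  classical
  obtain ⟨C⟩ := hcol
  by_cases hk : k = 0
  · subst hk
    refine ⟨∅, by simp, fun w => C w.1, fun u v hadj => C.valid hadj, fun i j => i.elim0⟩
  · have hk1 : 0 < k := Nat.pos_of_ne_zero hk
    by_cases hn : Fintype.card V < p * (k - 1)
    · refine ⟨Finset.univ, ?_, ?_⟩
      · calc Finset.univ.card = Fintype.card V := Finset.card_univ
          _ ≤ p * (k-1) := le_of_lt hn
      · have hempty : ∀ w : ((↑((Finset.univ : Finset V)ᶜ) : Set V)), False := by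
          intro w
          have h := Finset.mem_coe.mp w.2
          exact (Finset.mem_compl.mp h) (Finset.mem_univ _)
        haveI hie : IsEmpty ((↑((Finset.univ : Finset V)ᶜ) : Set V)) := ⟨hempty⟩
        refine ⟨fun _ => ⟨0, hk1⟩, fun u v _ => (hempty u).elim, fun i j => ?_⟩
        have hcu : (Finset.univ : Finset ((↑((Finset.univ : Finset V)ᶜ) : Set V))).card = 0 := by
          rw [Finset.card_univ]
          exact Fintype.card_eq_zero
        refine le_trans (Finset.card_filter_le _ _) ?_
        rw [hcu]
        omega
    · push_neg at hn
      obtain ⟨ins, del, hord, hadjkey, hwidth, hinsinj, hdelinj, hid⟩ :=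
        Stmt8Aux.exists_keys G p hpw
      have hdm := Nat.div_add_mod (Fintype.card V - p*(k-1)) k
      have hmod : (Fintype.card V - p*(k-1)) % k < k := Nat.mod_lt _ (by omega)
      have ekk : k * ((Fintype.card V - p*(k-1))/k + 1) =
          k * ((Fintype.card V - p*(k-1))/k) + k := by ring
      obtain ⟨X, c', hXsub, hXcard, hprop, hcin, hclass⟩ :=
        Stmt8Aux.rec_lemma G p ins del hord hadjkey hwidth hinsinj hdelinj hid
          ((Fintype.card V - p*(k-1))/k) k (Finset.univ : Finset (Fin k))
          (Finset.univ : Finset V) (⇑C) (p*(k-1))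
          (by simp)
          (fun v _ => Finset.mem_univ _)
          (fun u v _ _ hadj => C.valid hadj)
          (by rw [Finset.card_univ]; omega)
          (by rw [Finset.card_univ]; omega)
          (le_refl _)
      have hXc : Xᶜ = Finset.univ \ X := by
        rw [Finset.compl_eq_univ_sdiff]
      refine ⟨X, hXcard, fun w => c' w.1, ?_, ?_⟩
      · intro u v hadj
        apply hprop
        · rw [← hXc]
          exact Finset.mem_coe.mp u.2
        · rw [← hXc]
          exact Finset.mem_coe.mp v.2
        · exact hadj
      · intro i j
        have key : ∀ i : Fin k,
            (Finset.univ.filter fun w : ((↑(Xᶜ) : Set V)) => c' w.1 = i).card =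
            ((Finset.univ \ X).filter fun v => c' v = i).card := by
          intro i
          rw [Stmt8Aux.card_filter_subtype X (fun v => c' v = i), hXc]
        rw [key i, key j]
        have hbi := hclass i (Finset.mem_univ _)
        have hbj := hclass j (Finset.mem_univ _)
        omega


theorem stmt8 {V : Type} [Fintype V] [DecidableEq V] (G : SimpleGraph V) (p k : ℕ)
    (hcol : G.Colorable k) (hpw : HasPathwidthLE G p) :
    AlmostEquitablyColorable G (p * (k - 1)) k := by
  exact stmt8_aux G p k hcol hpw
end

section
/- Every graph of pathwidth at most p is p²-almost equitably (p+1)-colorable. -/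
set_option linter.unusedSectionVars false

open Finset

namespace Stmt9

variable {V : Type} [Fintype V] [DecidableEq V]

/-- An interval representation: each vertex has an interval `[a v, b v] ⊆ ℕ`. -/
structure Cfg (V : Type) where
  a : V → ℕ
  b : V → ℕ
  hab : ∀ v, a v ≤ b v

variable {k : ℕ}

/-- Size of a color class among survivors. -/
def cnt (X : Finset V) (c : V → Fin k) (col : Fin k) : ℕ :=
  (univ.filter fun v => v ∉ X ∧ c v = col).card

lemma cnt_del_one (X : Finset V) (c : V → Fin k) (w : V) (hw : w ∉ X) :
    (∀ col, col ≠ c w → cnt (insert w X) c col = cnt X c col) ∧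
    cnt (insert w X) c (c w) + 1 = cnt X c (c w) := by
  constructor
  · intro col hcol
    unfold cnt
    congr 1
    apply filter_congr
    intro v _
    simp only [mem_insert, not_or]
    constructor
    · rintro ⟨⟨_, h2⟩, h3⟩; exact ⟨h2, h3⟩
    · rintro ⟨h2, h3⟩
      refine ⟨⟨?_, h2⟩, h3⟩
      rintro rfl; exact hcol h3.symm
  · unfold cnt
    have : (univ.filter fun v => v ∉ X ∧ c v = c w)
        = insert w (univ.filter fun v => v ∉ insert w X ∧ c v = c w) := by
      ext v
      simp only [mem_insert, mem_filter, mem_univ, true_and, not_or]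
      constructor
      · rintro ⟨h1, h2⟩
        by_cases hv : v = w
        · exact Or.inl hv
        · exact Or.inr ⟨⟨hv, h1⟩, h2⟩
      · rintro (rfl | ⟨⟨_, h1⟩, h2⟩)
        · exact ⟨hw, rfl⟩
        · exact ⟨h1, h2⟩
    rw [this, card_insert_of_notMem (by simp)]

namespace Cfg

variable (C : Cfg V)

/-- Pairwise same-color classes are families of pairwise disjoint intervals
(over the surviving vertices, i.e. those not in `X`). -/
def Disj (X : Finset V) (c : V → Fin k) : Prop :=
  ∀ u v : V, u ∉ X → v ∉ X → u ≠ v → c u = c v → (C.b u < C.a v ∨ C.b v < C.a u)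


lemma disj_mono {X X' : Finset V} {c : V → Fin k} (h : C.Disj X c) (hs : X ⊆ X') :
    C.Disj X' c := by
  intro u v hu hv huv hc
  exact h u v (fun h' => hu (hs h')) (fun h' => hv (hs h')) huv hc

end Cfg

/-- total count -/
lemma sum_cnt (X : Finset V) (c : V → Fin k) :
    ∑ col : Fin k, cnt X c col = (univ.filter fun v => v ∉ X).card := by
  rw [Finset.card_eq_sum_card_fiberwise (f := c) (t := univ) (fun v _ => mem_univ _)]
  unfold cnt
  congr 1
  ext col
  rw [filter_filter]

lemma swap_eq_fst_iff {i j x : Fin k} (hij : i ≠ j) : Equiv.swap i j x = j ↔ x = i := by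
  rw [Equiv.swap_apply_eq_iff, Equiv.swap_apply_right]

lemma swap_eq_other_iff {i j x col : Fin k} (hi : col ≠ i) (hj : col ≠ j) :
    Equiv.swap i j x = col ↔ x = col := by
  rw [Equiv.swap_apply_eq_iff, Equiv.swap_apply_of_ne_of_ne hi hj]

section Exec

variable (C : Cfg V) (X : Finset V) (c : V → Fin k) (i j : Fin k) (m : ℕ)

/-- survivors of color j born before m -/
def PJ : Finset V := univ.filter fun v => v ∉ X ∧ c v = j ∧ C.a v < m
/-- survivors of color i born at/after m -/
def SI : Finset V := univ.filter fun v => v ∉ X ∧ c v = i ∧ m ≤ C.a v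
/-- j-colored crossers of the cut at m -/
def KJ : Finset V := univ.filter fun v => v ∉ X ∧ c v = j ∧ C.a v < m ∧ m ≤ C.b v

/-- The size of the new `j` class after cutting at `m`, deleting crossers and
swapping colors `i ↔ j` on the suffix. -/
def Aval : ℕ := ((PJ C X c j m) \ (KJ C X c j m)).card + (SI C X c i m).card

/-- the recoloring: swap i and j on the suffix -/
def swapc : V → Fin k := fun v => if m ≤ C.a v then Equiv.swap i j (c v) else c v

/-- the new deleted set -/
def Xcut : Finset V := X ∪ (KJ C X c j m) ∪ (KJ C X c i m)

lemma KJ_subset_PJ : KJ C X c j m ⊆ PJ C X c j m := by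
  intro v hv; simp only [KJ, PJ, mem_filter] at *; tauto

lemma KJ_card_le_one (hd : C.Disj X c) : (KJ C X c j m).card ≤ 1 := by
  rw [card_le_one]
  intro u hu v hv
  simp only [KJ, mem_filter, mem_univ, true_and] at hu hv
  by_contra huv
  rcases hd u v hu.1 hv.1 huv (hu.2.1.trans hv.2.1.symm) with h | h <;> omega

lemma Xcut_sub : X ⊆ Xcut C X c i j m := by
  intro v hv; simp [Xcut, mem_union, hv]

lemma Xcut_diff (hij : i ≠ j) :
    ((Xcut C X c i j m) \ X) = (KJ C X c j m) ∪ (KJ C X c i m) := by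
  ext v
  simp only [Xcut, mem_sdiff, mem_union, KJ, mem_filter, mem_univ, true_and]
  constructor
  · rintro ⟨(h | h) | h, h2⟩
    · exact absurd h h2
    · exact Or.inl h
    · exact Or.inr h
  · rintro (h | h)
    · exact ⟨Or.inl (Or.inr h), h.1⟩
    · exact ⟨Or.inr h, h.1⟩

lemma Xcut_diff_card (hij : i ≠ j) :
    ((Xcut C X c i j m) \ X).card = (KJ C X c j m).card + (KJ C X c i m).card := by
  rw [Xcut_diff C X c i j m hij, card_union_of_disjoint]
  rw [disjoint_left]
  intro v hv hv'
  simp only [KJ, mem_filter, mem_univ, true_and] at hv hv'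
  rw [hv.2.1] at hv'
  exact hij.symm hv'.2.1

/-- splitting a class at a cut point -/
lemma cnt_split (x : Fin k) :
    cnt X c x = (PJ C X c x m).card + (SI C X c x m).card := by
  unfold cnt PJ SI
  rw [← card_union_of_disjoint]
  · congr 1
    ext v
    simp only [mem_union, mem_filter, mem_univ, true_and]
    constructor
    · rintro ⟨h1, h2⟩
      rcases lt_or_ge (C.a v) m with h | h
      · exact Or.inl ⟨h1, h2, h⟩
      · exact Or.inr ⟨h1, h2, h⟩
    · rintro (⟨h1, h2, _⟩ | ⟨h1, h2, _⟩) <;> exact ⟨h1, h2⟩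
  · rw [disjoint_left]
    intro v hv hv'
    simp only [mem_filter, mem_univ, true_and] at hv hv'
    omega

lemma exec_cnt_j (hij : i ≠ j) :
    cnt (Xcut C X c i j m) (swapc C c i j m) j = Aval C X c i j m := by
  unfold cnt Aval
  rw [← card_union_of_disjoint (by
    rw [disjoint_left]
    intro v hv hv'
    simp only [PJ, SI, mem_sdiff, mem_filter, mem_univ, true_and] at hv hv'
    omega)]
  congr 1
  ext v
  simp only [Xcut, swapc, PJ, SI, KJ, mem_union, mem_sdiff, mem_filter, mem_univ,
    true_and, not_or]
  by_cases hm : m ≤ C.a v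
  · rw [if_pos hm, swap_eq_fst_iff hij]
    constructor
    · rintro ⟨⟨⟨h1, _⟩, _⟩, h2⟩
      exact Or.inr ⟨h1, h2, hm⟩
    · rintro (⟨⟨_, _, h⟩, _⟩ | ⟨h1, h2, _⟩)
      · omega
      · exact ⟨⟨⟨h1, by rintro ⟨_, _, h, _⟩; omega⟩, by rintro ⟨_, _, h, _⟩; omega⟩, h2⟩
  · rw [if_neg hm]
    push_neg at hm
    constructor
    · rintro ⟨⟨⟨h1, hP⟩, _⟩, h2⟩
      exact Or.inl ⟨⟨h1, h2, hm⟩, hP⟩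
    · rintro (⟨⟨h1, h2, _⟩, hP⟩ | ⟨_, _, h⟩)
      · refine ⟨⟨⟨h1, hP⟩, ?_⟩, h2⟩
        rintro ⟨_, hh, _, _⟩
        rw [h2] at hh
        exact hij hh.symm
      · omega

lemma Xcut_symm : Xcut C X c i j m = Xcut C X c j i m := by
  unfold Xcut
  rw [union_right_comm]

lemma swapc_symm : swapc C c i j m = swapc C c j i m := by
  funext v
  unfold swapc
  rw [Equiv.swap_comm]

lemma exec_cnt_i (hij : i ≠ j) :
    cnt (Xcut C X c i j m) (swapc C c i j m) i = Aval C X c j i m := by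
  rw [Xcut_symm, swapc_symm]
  exact exec_cnt_j C X c j i m hij.symm

lemma exec_cnt_other (col : Fin k) (hi : col ≠ i) (hj : col ≠ j) :
    cnt (Xcut C X c i j m) (swapc C c i j m) col = cnt X c col := by
  unfold cnt
  congr 1
  ext v
  simp only [Xcut, swapc, KJ, mem_union, mem_filter, mem_univ, true_and, not_or]
  have hswap : (if m ≤ C.a v then Equiv.swap i j (c v) else c v) = col ↔ c v = col := by
    split_ifs
    · exact swap_eq_other_iff hi hj
    · exact Iff.rfl
  rw [hswap]
  constructor
  · rintro ⟨⟨⟨h1, _⟩, _⟩, h2⟩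
    exact ⟨h1, h2⟩
  · rintro ⟨h1, h2⟩
    refine ⟨⟨⟨h1, ?_⟩, ?_⟩, h2⟩
    · rintro ⟨_, hh, _, _⟩
      rw [h2] at hh; exact hj hh
    · rintro ⟨_, hh, _, _⟩
      rw [h2] at hh; exact hi hh

lemma exec_mass (hij : i ≠ j) :
    cnt (Xcut C X c i j m) (swapc C c i j m) i
      + cnt (Xcut C X c i j m) (swapc C c i j m) j
      + ((Xcut C X c i j m) \ X).card
    = cnt X c i + cnt X c j := by
  rw [exec_cnt_i C X c i j m hij, exec_cnt_j C X c i j m hij,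
    Xcut_diff_card C X c i j m hij]
  unfold Aval
  have e1 := card_sdiff_add_card_eq_card (KJ_subset_PJ C X c j m)
  have e2 := card_sdiff_add_card_eq_card (KJ_subset_PJ C X c i m)
  have e3 := cnt_split C X c m i
  have e4 := cnt_split C X c m j
  omega

lemma exec_disj (hd : C.Disj X c) : C.Disj (Xcut C X c i j m) (swapc C c i j m) := by
  intro u v hu hv huv hc
  have hXu : u ∉ X := fun h => hu (mem_union_left _ (mem_union_left _ h))
  have hXv : v ∉ X := fun h => hv (mem_union_left _ (mem_union_left _ h))
  simp only [swapc] at hc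
  -- helper: a pair-colored prefix vertex surviving the cut dies before m
  have hkey : ∀ w : V, w ∉ Xcut C X c i j m → C.a w < m → (c w = i ∨ c w = j) →
      C.b w < m := by
    intro w hw haw hcw
    by_contra hbw
    push_neg at hbw
    have hXw : w ∉ X := fun h => hw (mem_union_left _ (mem_union_left _ h))
    rcases hcw with hcw | hcw
    · exact hw (mem_union_right _ (by
        simp only [KJ, mem_filter, mem_univ, true_and]
        exact ⟨hXw, hcw, haw, hbw⟩))
    · exact hw (mem_union_left _ (mem_union_right _ (by
        simp only [KJ, mem_filter, mem_univ, true_and]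
        exact ⟨hXw, hcw, haw, hbw⟩)))
  by_cases hu' : m ≤ C.a u <;> by_cases hv' : m ≤ C.a v
  · -- both suffix
    rw [if_pos hu', if_pos hv'] at hc
    exact hd u v hXu hXv huv (Equiv.injective _ hc)
  · -- u suffix, v prefix
    rw [if_pos hu', if_neg hv'] at hc
    push_neg at hv'
    by_cases hcv : c v = i ∨ c v = j
    · exact Or.inr (lt_of_lt_of_le (hkey v hv hv' hcv) hu')
    · push_neg at hcv
      have : c u = c v := by
        have h1 : c u = Equiv.swap i j (c v) := by
          rw [← hc, Equiv.swap_apply_self]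
        rw [h1, Equiv.swap_apply_of_ne_of_ne hcv.1 hcv.2]
      exact hd u v hXu hXv huv this
  · -- u prefix, v suffix
    rw [if_neg hu', if_pos hv'] at hc
    push_neg at hu'
    by_cases hcu : c u = i ∨ c u = j
    · exact Or.inl (lt_of_lt_of_le (hkey u hu hu' hcu) hv')
    · push_neg at hcu
      have : c u = c v := by
        have h1 : Equiv.swap i j (c u) = c v := by
          rw [hc, Equiv.swap_apply_self]
        rw [← h1, Equiv.swap_apply_of_ne_of_ne hcu.1 hcu.2]
      exact hd u v hXu hXv huv this
  · -- both prefix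
    rw [if_neg hu', if_neg hv'] at hc
    exact hd u v hXu hXv huv hc

end Exec

section Walk

variable (C : Cfg V) (X : Finset V) (c : V → Fin k) (i j : Fin k)

/-- the set of cut positions -/
def cuts : Finset ℕ :=
  insert 0 (insert ((univ.sup C.b) + 1)
    ((univ.filter fun v => v ∉ X ∧ (c v = i ∨ c v = j))|>.image fun v => C.b v + 1))

lemma cuts_zero : 0 ∈ cuts C X c i j := by simp [cuts]

lemma cuts_top : (univ.sup C.b) + 1 ∈ cuts C X c i j := by simp [cuts]

lemma Aval_zero : Aval C X c i j 0 = cnt X c i := by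
  unfold Aval PJ SI KJ cnt
  have h1 : (univ.filter fun v => v ∉ X ∧ c v = j ∧ C.a v < 0) = ∅ := by
    apply filter_false_of_mem
    intro v _
    rintro ⟨_, _, h⟩
    exact absurd h (Nat.not_lt_zero _)
  rw [h1, empty_sdiff]
  simp only [card_empty, zero_add]
  congr 1
  apply filter_congr
  intro v _
  simp only [Nat.zero_le, and_true]

lemma Aval_top : Aval C X c i j ((univ.sup C.b) + 1) = cnt X c j := by
  unfold Aval PJ SI KJ cnt
  have hb : ∀ v : V, C.b v < univ.sup C.b + 1 := by
    intro v; exact Nat.lt_succ_of_le (Finset.le_sup (mem_univ v))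
  have ha : ∀ v : V, C.a v < univ.sup C.b + 1 := by
    intro v; exact lt_of_le_of_lt (C.hab v) (hb v)
  have h2 : (univ.filter fun v => v ∉ X ∧ c v = i ∧ (univ.sup C.b + 1) ≤ C.a v) = ∅ := by
    apply filter_false_of_mem; intro v _
    push_neg; intro _ _; exact ha v
  have h3 : (univ.filter fun v => v ∉ X ∧ c v = j ∧ C.a v < (univ.sup C.b + 1) ∧ (univ.sup C.b + 1) ≤ C.b v) = ∅ := by
    apply filter_false_of_mem; intro v _
    push_neg; intro _ _ _; exact hb v
  rw [h2, h3]
  simp only [sdiff_empty, card_empty, add_zero]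
  congr 1
  apply filter_congr; intro v _
  constructor
  · rintro ⟨h1', h2', _⟩; exact ⟨h1', h2'⟩
  · rintro ⟨h1', h2'⟩; exact ⟨h1', h2', ha v⟩

/-- at a cut, the total number of crossers of the two colors is at most 1 -/
lemma KJ_zero_of_death (hd : C.Disj X c) (v : V) (hv : v ∉ X) (hcv : c v = j) :
    KJ C X c j (C.b v + 1) = ∅ := by
  rw [eq_empty_iff_forall_notMem]
  intro z hz
  simp only [KJ, mem_filter, mem_univ, true_and] at hz
  obtain ⟨hz1, hz2, hz3, hz4⟩ := hz
  have hzv : z ≠ v := by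
    intro h; subst h; omega
  have h1 := C.hab v
  have h2 := C.hab z
  rcases hd z v hz1 hv hzv (hz2.trans hcv.symm) with h | h <;> omega

lemma cuts_cost (hd : C.Disj X c) (hij : i ≠ j) (m : ℕ) (hm : m ∈ cuts C X c i j) :
    (KJ C X c j m).card + (KJ C X c i m).card ≤ 1 := by
  simp only [cuts, mem_insert, mem_image, mem_filter, mem_univ, true_and] at hm
  have hempty : ∀ (x : Fin k) (m' : ℕ), (∀ v : V, ¬(v ∉ X ∧ c v = x ∧ C.a v < m' ∧ m' ≤ C.b v)) →
      (KJ C X c x m').card = 0 := by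
    intro x m' h
    rw [card_eq_zero, eq_empty_iff_forall_notMem]
    intro z hz
    simp only [KJ, mem_filter, mem_univ, true_and] at hz
    exact h z hz
  rcases hm with rfl | rfl | ⟨v, ⟨hv1, hv2⟩, rfl⟩
  · have := hempty j 0 (by intro v; push_neg; intro _ _ h; omega)
    have := hempty i 0 (by intro v; push_neg; intro _ _ h; omega)
    omega
  · have hb : ∀ v : V, C.b v < univ.sup C.b + 1 := by
      intro v; exact Nat.lt_succ_of_le (Finset.le_sup (mem_univ v))
    have := hempty j _ (by intro v; push_neg; intro _ _ _; exact hb v)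
    have := hempty i _ (by intro v; push_neg; intro _ _ _; exact hb v)
    omega
  · rcases hv2 with hv2 | hv2
    · have h1 : (KJ C X c i (C.b v + 1)).card = 0 := by
        rw [card_eq_zero]; exact KJ_zero_of_death C X c i hd v hv1 hv2
      have h2 := KJ_card_le_one C X c j (C.b v + 1) hd
      omega
    · have h1 : (KJ C X c j (C.b v + 1)).card = 0 := by
        rw [card_eq_zero]; exact KJ_zero_of_death C X c j hd v hv1 hv2
      have h2 := KJ_card_le_one C X c i (C.b v + 1) hd
      omega

/-- step bound between consecutive cuts -/
lemma Aval_step (hd : C.Disj X c) (hij : i ≠ j) (m₁ m₂ : ℕ)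
    (h1 : m₁ ∈ cuts C X c i j) (h2 : m₂ ∈ cuts C X c i j) (hlt : m₁ < m₂)
    (hbetween : ∀ x ∈ cuts C X c i j, ¬(m₁ < x ∧ x < m₂)) :
    Aval C X c i j m₂ ≤ Aval C X c i j m₁ + 2 ∧
    Aval C X c i j m₁ ≤ Aval C X c i j m₂ + 2 := by
  have hbirth : ∀ x : Fin k, x = i ∨ x = j →
      (univ.filter fun v => v ∉ X ∧ c v = x ∧ m₁ ≤ C.a v ∧ C.a v < m₂).card ≤ 1 := by
    intro x hx
    rw [card_le_one]
    intro u hu v hv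
    simp only [mem_filter, mem_univ, true_and] at hu hv
    by_contra huv
    have hcutmem : ∀ w : V, w ∉ X → c w = x → C.b w + 1 ∈ cuts C X c i j := by
      intro w hw hcw
      simp only [cuts, mem_insert, mem_image, mem_filter, mem_univ, true_and]
      right; right
      refine ⟨w, ⟨hw, ?_⟩, rfl⟩
      rcases hx with rfl | rfl
      · exact Or.inl hcw
      · exact Or.inr hcw
    have habu := C.hab u
    have habv := C.hab v
    rcases hd u v hu.1 hv.1 huv (hu.2.1.trans hv.2.1.symm) with h | h
    · exact hbetween _ (hcutmem u hu.1 hu.2.1) ⟨by omega, by omega⟩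
    · exact hbetween _ (hcutmem v hv.1 hv.2.1) ⟨by omega, by omega⟩
  have e1 : Aval C X c i j m₂ + (KJ C X c j m₂).card
      = (PJ C X c j m₂).card + (SI C X c i m₂).card := by
    unfold Aval
    have := card_sdiff_add_card_eq_card (KJ_subset_PJ C X c j m₂)
    omega
  have e2 : Aval C X c i j m₁ + (KJ C X c j m₁).card
      = (PJ C X c j m₁).card + (SI C X c i m₁).card := by
    unfold Aval
    have := card_sdiff_add_card_eq_card (KJ_subset_PJ C X c j m₁)
    omega
  have e3 : (PJ C X c j m₂).card = (PJ C X c j m₁).card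
      + (univ.filter fun v => v ∉ X ∧ c v = j ∧ m₁ ≤ C.a v ∧ C.a v < m₂).card := by
    rw [← card_union_of_disjoint (by
      rw [disjoint_left]
      intro v hv hv'
      simp only [PJ, mem_filter, mem_univ, true_and] at hv hv'
      omega)]
    congr 1
    ext v
    simp only [PJ, mem_union, mem_filter, mem_univ, true_and]
    constructor
    · rintro ⟨hv1, hv2, hv3⟩
      rcases lt_or_ge (C.a v) m₁ with h | h
      · exact Or.inl ⟨hv1, hv2, h⟩
      · exact Or.inr ⟨hv1, hv2, h, hv3⟩
    · rintro (⟨hv1, hv2, h⟩ | ⟨hv1, hv2, h, h'⟩)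
      · exact ⟨hv1, hv2, by omega⟩
      · exact ⟨hv1, hv2, h'⟩
  have e4 : (SI C X c i m₁).card = (SI C X c i m₂).card
      + (univ.filter fun v => v ∉ X ∧ c v = i ∧ m₁ ≤ C.a v ∧ C.a v < m₂).card := by
    rw [← card_union_of_disjoint (by
      rw [disjoint_left]
      intro v hv hv'
      simp only [SI, mem_filter, mem_univ, true_and] at hv hv'
      omega)]
    congr 1
    ext v
    simp only [SI, mem_union, mem_filter, mem_univ, true_and]
    constructor
    · rintro ⟨hv1, hv2, hv3⟩
      rcases le_or_gt m₂ (C.a v) with h | h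
      · exact Or.inl ⟨hv1, hv2, h⟩
      · exact Or.inr ⟨hv1, hv2, hv3, h⟩
    · rintro (⟨hv1, hv2, h⟩ | ⟨hv1, hv2, h, h'⟩)
      · exact ⟨hv1, hv2, by omega⟩
      · exact ⟨hv1, hv2, h⟩
  have k1 := KJ_card_le_one C X c j m₁ hd
  have k2 := KJ_card_le_one C X c j m₂ hd
  have b1 := hbirth j (Or.inr rfl)
  have b2 := hbirth i (Or.inl rfl)
  omega

end Walk

/-- discrete IVT over a finite set of positions -/
lemma ivt_fin (S : Finset ℕ) (f : ℕ → ℕ)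
    (step : ∀ m₁ ∈ S, ∀ m₂ ∈ S, m₁ < m₂ → (∀ x ∈ S, ¬(m₁ < x ∧ x < m₂)) →
      f m₂ ≤ f m₁ + 2 ∧ f m₁ ≤ f m₂ + 2)
    (m0 mN : ℕ) (h0 : m0 ∈ S) (hN : mN ∈ S) (h0N : m0 ≤ mN) (T : ℕ)
    (hT1 : min (f m0) (f mN) ≤ T + 1) (hT2 : T ≤ max (f m0) (f mN)) :
    ∃ m ∈ S, f m = T ∨ f m = T + 1 := by
  -- strong induction on mN - m0
  obtain ⟨d, hd⟩ : ∃ d, mN - m0 ≤ d := ⟨mN - m0, le_rfl⟩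
  induction d generalizing m0 with
  | zero =>
    -- m0 = mN
    have : m0 = mN := by omega
    subst this
    refine ⟨m0, h0, ?_⟩
    simp only [min_self] at hT1
    simp only [max_self] at hT2
    omega
  | succ d ih =>
    by_cases hc0 : f m0 = T ∨ f m0 = T + 1
    · exact ⟨m0, h0, hc0⟩
    by_cases hcN : f mN = T ∨ f mN = T + 1
    · exact ⟨mN, hN, hcN⟩
    push_neg at hc0 hcN
    -- endpoints straddle the window
    have hne : m0 ≠ mN := by
      intro h; subst h
      simp only [min_self] at hT1
      simp only [max_self] at hT2
      omega
    have hlt : m0 < mN := lt_of_le_of_ne h0N hne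
    -- next cut after m0
    have hfilt : (S.filter fun x => m0 < x).Nonempty := ⟨mN, by simp [hN, hlt]⟩
    set m' := (S.filter fun x => m0 < x).min' hfilt with hm'
    have hm'mem : m' ∈ S ∧ m0 < m' := by
      have := (S.filter fun x => m0 < x).min'_mem hfilt
      simp only [mem_filter] at this
      exact this
    have hm'le : m' ≤ mN := by
      apply Finset.min'_le
      simp [hN, hlt]
    have hbet : ∀ x ∈ S, ¬(m0 < x ∧ x < m') := by
      rintro x hx ⟨hx1, hx2⟩
      have : m' ≤ x := Finset.min'_le _ _ (by simp [hx, hx1])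
      omega
    have hstep := step m0 h0 m' hm'mem.1 hm'mem.2 hbet
    by_cases hcm : f m' = T ∨ f m' = T + 1
    · exact ⟨m', hm'mem.1, hcm⟩
    push_neg at hcm
    -- straddling: one endpoint ≤ T-1, other ≥ T+2
    rcases le_or_gt (f m0) (T + 1) with hlo | hhi
    · -- f m0 ≤ T - 1, so f mN ≥ T + 2
      have h1 : f mN ≥ T + 2 := by
        rcases le_or_gt (f mN) (T+1) with h | h
        · simp only [max_def] at hT2; split_ifs at hT2 <;> omega
        · omega
      have h2 : f m' ≤ T + 1 := by omega
      apply ih m' hm'mem.1 hm'le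
      · omega
      · simp only [max_def]; split_ifs <;> omega
      · omega
    · -- f m0 ≥ T + 2, f mN ≤ T - 1
      have h1 : f mN ≤ T + 1 := by
        simp only [min_def] at hT1; split_ifs at hT1 <;> omega
      have h2 : f m' ≥ T := by omega
      apply ih m' hm'mem.1 hm'le
      · simp only [min_def]; split_ifs <;> omega
      · simp only [max_def]; split_ifs <;> omega
      · omega

section Round

variable (C : Cfg V)

/-- delete one junk vertex from a nonempty class -/
lemma junk (X : Finset V) (c : V → Fin k) (hd : C.Disj X c) (col : Fin k)
    (h : 0 < cnt X c col) :
    ∃ X' : Finset V, X ⊆ X' ∧ (X' \ X).card = 1 ∧ C.Disj X' c ∧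
      cnt X' c col + 1 = cnt X c col ∧
      (∀ col', col' ≠ col → cnt X' c col' = cnt X c col') := by
  rw [cnt, card_pos] at h
  obtain ⟨w, hw⟩ := h.exists_mem
  simp only [mem_filter, mem_univ, true_and] at hw
  obtain ⟨hw1, hw2⟩ := hw
  refine ⟨insert w X, subset_insert _ _, ?_, ?_, ?_, ?_⟩
  · have : insert w X \ X = {w} := by
      ext v
      simp only [mem_sdiff, mem_insert, mem_singleton]
      constructor
      · rintro ⟨rfl | h1, h2⟩
        · rfl
        · exact absurd h1 h2
      · rintro rfl; exact ⟨Or.inl rfl, hw1⟩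
    rw [this, card_singleton]
  · exact C.disj_mono hd (subset_insert _ _)
  · have := (cnt_del_one X c w hw1).2
    rw [hw2] at this
    omega
  · intro col' hcol'
    have := (cnt_del_one X c w hw1).1 col'
    rw [hw2] at this
    exact this (by exact hcol')

/-- The main round lemma: we can set class `j` to any value `T` in (almost) the
range between `cnt i` and `cnt j`, at a cost of at most 2 deletions, not touching
any other color class. -/
lemma round (X : Finset V) (c : V → Fin k) (hd : C.Disj X c) (i j : Fin k) (hij : i ≠ j)
    (T : ℕ) (hT1 : min (cnt X c i) (cnt X c j) ≤ T + 1)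
    (hT2 : T ≤ max (cnt X c i) (cnt X c j)) :
    ∃ (X' : Finset V) (c' : V → Fin k), X ⊆ X' ∧ (X' \ X).card ≤ 2 ∧ C.Disj X' c' ∧
      cnt X' c' j = T ∧ (∀ col, col ≠ i → col ≠ j → cnt X' c' col = cnt X c col) ∧
      cnt X' c' i + cnt X' c' j + (X' \ X).card = cnt X c i + cnt X c j := by
  obtain ⟨m, hmcuts, hcase⟩ := ivt_fin (cuts C X c i j) (Aval C X c i j)
    (fun m₁ hm₁ m₂ hm₂ hlt hb => Aval_step C X c i j hd hij m₁ m₂ hm₁ hm₂ hlt hb)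
    0 ((univ.sup C.b) + 1) (cuts_zero C X c i j) (cuts_top C X c i j) (Nat.zero_le _) T
    (by rw [Aval_zero, Aval_top]; exact hT1)
    (by rw [Aval_zero, Aval_top]; exact hT2)
  have hcost := cuts_cost C X c i j hd hij m hmcuts
  have hcutcard := Xcut_diff_card C X c i j m hij
  have hsub := Xcut_sub C X c i j m
  have hdisj1 := exec_disj C X c i j m hd
  have hj1 := exec_cnt_j C X c i j m hij
  have hoth1 := exec_cnt_other C X c i j m
  have hmass1 := exec_mass C X c i j m hij
  rcases hcase with hA | hA
  · exact ⟨Xcut C X c i j m, swapc C c i j m, hsub, by omega, hdisj1,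
      by rw [hj1, hA], fun col h1 h2 => hoth1 col h1 h2, hmass1⟩
  · -- delete one extra vertex from the new j class
    have hpos : 0 < cnt (Xcut C X c i j m) (swapc C c i j m) j := by
      rw [hj1, hA]; omega
    obtain ⟨X₂, hsub2, hcard2, hdisj2, hcnt2, hoth2⟩ :=
      junk C (Xcut C X c i j m) (swapc C c i j m) hdisj1 j hpos
    have hc1 : X.card ≤ (Xcut C X c i j m).card := card_le_card hsub
    have hc2 : (Xcut C X c i j m).card ≤ X₂.card := card_le_card hsub2
    have hs1 : ((Xcut C X c i j m) \ X).card = (Xcut C X c i j m).card - X.card :=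
      card_sdiff_of_subset hsub
    have hs2 : (X₂ \ (Xcut C X c i j m)).card = X₂.card - (Xcut C X c i j m).card :=
      card_sdiff_of_subset hsub2
    have hs3 : (X₂ \ X).card = X₂.card - X.card := card_sdiff_of_subset (hsub.trans hsub2)
    refine ⟨X₂, swapc C c i j m, hsub.trans hsub2, by omega, hdisj2, ?_, ?_, ?_⟩
    · rw [hj1, hA] at hcnt2
      omega
    · intro col h1 h2
      rw [hoth2 col h2]
      exact hoth1 col h1 h2
    · have hi2 : cnt X₂ (swapc C c i j m) i = cnt (Xcut C X c i j m) (swapc C c i j m) i :=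
        hoth2 i hij
      rw [hj1, hA] at hcnt2
      omega

/-- iterated junk deletion from classes within a set `S` of colors -/
lemma junk_iter (r : ℕ) : ∀ (X : Finset V) (c : V → Fin k) (S : Finset (Fin k)),
    C.Disj X c → r ≤ ∑ col ∈ S, cnt X c col →
    ∃ X' : Finset V, X ⊆ X' ∧ (X' \ X).card = r ∧ C.Disj X' c ∧
      (∀ col, col ∉ S → cnt X' c col = cnt X c col) ∧
      (∑ col ∈ S, cnt X' c col) + r = ∑ col ∈ S, cnt X c col := by
  induction r with
  | zero =>
    intro X c S hd _
    exact ⟨X, subset_rfl, by simp, hd, fun _ _ => rfl, by simp⟩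
  | succ r ih =>
    intro X c S hd hsum
    have hex : ∃ col ∈ S, 0 < cnt X c col := by
      by_contra h
      push_neg at h
      have : ∑ col ∈ S, cnt X c col = 0 := sum_eq_zero (fun col hcol => by
        have := h col hcol; omega)
      omega
    obtain ⟨col, hcolS, hcolpos⟩ := hex
    obtain ⟨X₁, hsub, hcard, hd1, hcnt, hoth⟩ := junk C X c hd col hcolpos
    have hsumeq : (∑ col' ∈ S, cnt X₁ c col') + 1 = ∑ col' ∈ S, cnt X c col' := by
      rw [← sum_erase_add S _ hcolS, ← sum_erase_add S (cnt X c) hcolS]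
      have he : ∑ col' ∈ S.erase col, cnt X₁ c col' = ∑ col' ∈ S.erase col, cnt X c col' :=
        sum_congr rfl (fun col' h => hoth col' (ne_of_mem_erase h))
      omega
    obtain ⟨X₂, hsub2, hcard2, hd2, hoth2, hsum2⟩ := ih X₁ c S hd1 (by omega)
    have hc1 : X.card ≤ X₁.card := card_le_card hsub
    have hc2 : X₁.card ≤ X₂.card := card_le_card hsub2
    have hs1 : (X₁ \ X).card = X₁.card - X.card := card_sdiff_of_subset hsub
    have hs2 : (X₂ \ X₁).card = X₂.card - X₁.card := card_sdiff_of_subset hsub2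
    have hs3 : (X₂ \ X).card = X₂.card - X.card := card_sdiff_of_subset (hsub.trans hsub2)
    refine ⟨X₂, hsub.trans hsub2, by omega, hd2, ?_, by omega⟩
    intro col' hcol'
    rw [hoth2 col' hcol', hoth col' (by rintro rfl; exact hcol' hcolS)]

/-- The balancing induction: given the invariant, we can finish all unfixed
classes to their targets. -/
lemma rounds (q : ℕ) (hq : 1 ≤ q) (τ : Fin k → ℕ) (hτ : ∀ col, τ col = q ∨ τ col = q + 1) :
    ∀ (U : Finset (Fin k)) (X : Finset V) (c : V → Fin k), C.Disj X c →
      (∀ col, col ∉ U → cnt X c col = τ col) →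
      ((∑ col ∈ U, cnt X c col) = (∑ col ∈ U, τ col) + 2 * (U.card - 1)) →
      U.Nonempty →
      ∃ (X' : Finset V) (c' : V → Fin k), X ⊆ X' ∧ (X' \ X).card = 2 * (U.card - 1) ∧
        C.Disj X' c' ∧ (∀ col, cnt X' c' col = τ col) := by
  intro U
  induction U using Finset.strongInduction with
  | _ U ih =>
  intro X c hd hfix hinv hne
  by_cases hcard1 : U.card = 1
  · obtain ⟨j, rfl⟩ := card_eq_one.mp hcard1
    refine ⟨X, c, subset_rfl, by simp, hd, ?_⟩
    intro col
    by_cases hcol : col = j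
    · subst hcol
      simp only [sum_singleton, card_singleton] at hinv
      omega
    · exact hfix col (by simp [hcol])
  have h2u : 2 ≤ U.card := by
    have := card_pos.mpr hne
    omega
  -- minimum class
  obtain ⟨imin, himinU, himin⟩ := U.exists_min_image (cnt X c) hne
  have hsumτ_le : ∑ col ∈ U, τ col ≤ U.card * (q + 1) := by
    calc ∑ col ∈ U, τ col ≤ ∑ _col ∈ U, (q + 1) :=
          sum_le_sum (fun col _ => by rcases hτ col with h | h <;> omega)
    _ = U.card * (q + 1) := by rw [sum_const, smul_eq_mul]
  have hsumτ_ge : U.card * q ≤ ∑ col ∈ U, τ col := by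
    calc U.card * q = ∑ _col ∈ U, q := by rw [sum_const, smul_eq_mul]
    _ ≤ ∑ col ∈ U, τ col := sum_le_sum (fun col _ => by rcases hτ col with h | h <;> omega)
  -- min class is at most q + 2
  have hA : cnt X c imin ≤ q + 2 := by
    by_contra hcon
    push_neg at hcon
    have hge : ∑ _col ∈ U, (q + 3) ≤ ∑ col ∈ U, cnt X c col :=
      sum_le_sum (fun col hcol => le_trans hcon (himin col hcol))
    rw [sum_const, smul_eq_mul] at hge
    have hq3 : U.card * (q + 3) = U.card * (q + 1) + 2 * U.card := by ring
    omega
  -- choice of the class j to finish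
  have hj : ∃ j ∈ U, τ j ≤ cnt X c j ∧ cnt X c imin ≤ τ j + 1 := by
    have hj0 : ∃ j ∈ U, τ j ≤ cnt X c j := by
      by_contra hcon
      push_neg at hcon
      have : ∑ col ∈ U, cnt X c col < ∑ col ∈ U, τ col :=
        sum_lt_sum_of_nonempty hne (fun col hcol => hcon col hcol)
      omega
    by_cases hmin : cnt X c imin ≤ q + 1
    · obtain ⟨j0, hj0U, hj0c⟩ := hj0
      refine ⟨j0, hj0U, hj0c, ?_⟩
      rcases hτ j0 with h | h <;> omega
    · push_neg at hmin
      have hj1 : ∃ j ∈ U, τ j = q + 1 := by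
        by_contra hcon
        push_neg at hcon
        have hτq : ∑ col ∈ U, τ col = U.card * q := by
          rw [← smul_eq_mul, ← sum_const]
          exact sum_congr rfl (fun col hcol => by
            rcases hτ col with h | h
            · exact h
            · exact absurd h (hcon col hcol))
        have hge : ∑ _col ∈ U, (q + 2) ≤ ∑ col ∈ U, cnt X c col :=
          sum_le_sum (fun col hcol => le_trans hmin (himin col hcol))
        rw [sum_const, smul_eq_mul] at hge
        have hq2 : U.card * (q + 2) = U.card * q + 2 * U.card := by ring
        omega
      obtain ⟨j1, hj1U, hj1τ⟩ := hj1
      refine ⟨j1, hj1U, ?_, by omega⟩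
      have := himin j1 hj1U
      omega
  obtain ⟨j, hjU, hjτ, hjbr⟩ := hj
  -- partner
  have hpart : ∃ i ∈ U, i ≠ j ∧ min (cnt X c i) (cnt X c j) ≤ τ j + 1 := by
    by_cases hij : imin = j
    · have hUe : (U.erase j).Nonempty := by
        rw [← card_pos, card_erase_of_mem hjU]
        omega
      obtain ⟨i, hi⟩ := hUe
      refine ⟨i, mem_of_mem_erase hi, ne_of_mem_erase hi, ?_⟩
      subst hij
      exact le_trans (min_le_right _ _) hjbr
    · exact ⟨imin, himinU, hij, le_trans (min_le_left _ _) hjbr⟩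
  obtain ⟨i, hiU, hine, hbr⟩ := hpart
  have hT2 : τ j ≤ max (cnt X c i) (cnt X c j) := le_trans hjτ (le_max_right _ _)
  obtain ⟨X₁, c₁, hsub1, hcard1', hd1, hcnt1j, hoth1, hmass1⟩ :=
    round C X c hd i j hine (τ j) hbr hT2
  -- sum bookkeeping over U
  have hiUe : i ∈ U.erase j := mem_erase.mpr ⟨hine, hiU⟩
  have hsplit : ∀ f : Fin k → ℕ,
      ∑ col ∈ U, f col = ∑ col ∈ (U.erase j).erase i, f col + f i + f j := by
    intro f
    rw [← sum_erase_add U f hjU, ← sum_erase_add (U.erase j) f hiUe]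
  have hrest : ∑ col ∈ (U.erase j).erase i, cnt X₁ c₁ col
      = ∑ col ∈ (U.erase j).erase i, cnt X c col := by
    refine sum_congr rfl (fun col hcol => ?_)
    have h1 : col ≠ i := ne_of_mem_erase hcol
    have h2 : col ≠ j := ne_of_mem_erase (mem_of_mem_erase hcol)
    exact hoth1 col h1 h2
  have hsU1 := hsplit (cnt X₁ c₁)
  have hsU0 := hsplit (cnt X c)
  have hsum1 : (∑ col ∈ U, cnt X₁ c₁ col) + (X₁ \ X).card = ∑ col ∈ U, cnt X c col := by
    omega
  -- sum over U.erase j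
  have hsUe1 : ∑ col ∈ U.erase j, cnt X₁ c₁ col + cnt X₁ c₁ j = ∑ col ∈ U, cnt X₁ c₁ col :=
    sum_erase_add U _ hjU
  have hsUe0 : ∑ col ∈ U.erase j, τ col + τ j = ∑ col ∈ U, τ col :=
    sum_erase_add U _ hjU
  have hτeq : ∑ col ∈ U.erase j, τ col ≥ (U.card - 1) * q := by
    have h1 : (U.erase j).card * q ≤ ∑ col ∈ U.erase j, τ col := by
      calc (U.erase j).card * q = ∑ _col ∈ U.erase j, q := by rw [sum_const, smul_eq_mul]
      _ ≤ _ := sum_le_sum (fun col _ => by rcases hτ col with h | h <;> omega)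
    rw [card_erase_of_mem hjU] at h1
    exact h1
  have hUcard : (U.erase j).card = U.card - 1 := card_erase_of_mem hjU
  have huq : 1 ≤ (U.card - 1) * q := by
    have h1 : 1 ≤ U.card - 1 := by omega
    exact Nat.one_le_iff_ne_zero.mpr (by positivity)
  -- junk away the remaining deletions
  have havailneed : 2 - (X₁ \ X).card ≤ ∑ col ∈ U.erase j, cnt X₁ c₁ col := by
    omega
  obtain ⟨X₂, hsub2, hcard2, hd2, hoth2, hsum2⟩ :=
    junk_iter C (2 - (X₁ \ X).card) X₁ c₁ (U.erase j) hd1 havailneed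
  -- apply induction hypothesis on U.erase j
  have hssub : U.erase j ⊂ U := erase_ssubset hjU
  have hfix2 : ∀ col, col ∉ U.erase j → cnt X₂ c₁ col = τ col := by
    intro col hcol
    by_cases hcolj : col = j
    · subst hcolj
      rw [hoth2 col (notMem_erase _ _)]
      exact hcnt1j
    · have hcolU : col ∉ U := by
        intro h
        exact hcol (mem_erase.mpr ⟨hcolj, h⟩)
      rw [hoth2 col hcol, hoth1 col (by rintro rfl; exact hcolU hiU) hcolj]
      exact hfix col hcolU
  have hinv2 : ∑ col ∈ U.erase j, cnt X₂ c₁ col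
      = ∑ col ∈ U.erase j, τ col + 2 * ((U.erase j).card - 1) := by
    rw [hUcard]
    omega
  have hne2 : (U.erase j).Nonempty := by
    rw [← card_pos, hUcard]
    omega
  obtain ⟨X₃, c₃, hsub3, hcard3, hd3, hfin⟩ := ih (U.erase j) hssub X₂ c₁ hd2 hfix2 hinv2 hne2
  -- assemble
  have hc1 : X.card ≤ X₁.card := card_le_card hsub1
  have hc2 : X₁.card ≤ X₂.card := card_le_card hsub2
  have hc3 : X₂.card ≤ X₃.card := card_le_card hsub3
  have hs1 : (X₁ \ X).card = X₁.card - X.card := card_sdiff_of_subset hsub1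
  have hs2 : (X₂ \ X₁).card = X₂.card - X₁.card := card_sdiff_of_subset hsub2
  have hs3 : (X₃ \ X₂).card = X₃.card - X₂.card := card_sdiff_of_subset hsub3
  have hs4 : (X₃ \ X).card = X₃.card - X.card := card_sdiff_of_subset ((hsub1.trans hsub2).trans hsub3)
  rw [hUcard] at hcard3
  refine ⟨X₃, c₃, (hsub1.trans hsub2).trans hsub3, by omega, hd3, hfin⟩

end Round

/-- greedy base coloring -/
lemma exists_disj_coloring (C : Cfg V) (k : ℕ) (hk : 1 ≤ k)
    (halive : ∀ m : ℕ, (univ.filter fun v => C.a v ≤ m ∧ m ≤ C.b v).card ≤ k) :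
    ∃ c : V → Fin k, C.Disj (∅ : Finset V) c := by
  suffices H : ∀ s : Finset V, ∃ c : V → Fin k, ∀ u ∈ s, ∀ v ∈ s, u ≠ v → c u = c v →
      (C.b u < C.a v ∨ C.b v < C.a u) by
    obtain ⟨c, hc⟩ := H univ
    exact ⟨c, fun u v _ _ huv hcv => hc u (mem_univ u) v (mem_univ v) huv hcv⟩
  intro s
  induction s using Finset.strongInduction with
  | _ s ih =>
  rcases s.eq_empty_or_nonempty with rfl | hne
  · exact ⟨fun _ => ⟨0, hk⟩, by simp⟩
  obtain ⟨v0, hv0, hmax⟩ := s.exists_max_image C.a hne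
  obtain ⟨c, hc⟩ := ih (s.erase v0) (erase_ssubset hv0)
  set Bl := (s.erase v0).filter (fun u => C.a v0 ≤ C.b u) with hBl
  have hBlcard : Bl.card < k := by
    have hsub : insert v0 Bl ⊆ univ.filter (fun v => C.a v ≤ C.a v0 ∧ C.a v0 ≤ C.b v) := by
      intro u hu
      rcases mem_insert.mp hu with rfl | hu
      · simp only [mem_filter, mem_univ, true_and]
        exact ⟨le_rfl, C.hab u⟩
      · simp only [hBl, mem_filter] at hu
        simp only [mem_filter, mem_univ, true_and]
        exact ⟨hmax u (mem_of_mem_erase hu.1), hu.2⟩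
    have h1 : (insert v0 Bl).card ≤ k := le_trans (card_le_card hsub) (halive (C.a v0))
    have h2 : v0 ∉ Bl := fun h => (notMem_erase v0 s) (mem_filter.mp h).1
    rw [card_insert_of_notMem h2] at h1
    omega
  have hfree : ∃ col : Fin k, col ∉ Bl.image c := by
    by_contra h
    push_neg at h
    have hs1 : (univ : Finset (Fin k)) ⊆ Bl.image c := fun col _ => h col
    have hs2 := card_le_card hs1
    rw [card_univ, Fintype.card_fin] at hs2
    have hs3 := card_image_le (f := c) (s := Bl)
    omega
  obtain ⟨col, hcol⟩ := hfree
  refine ⟨Function.update c v0 col, ?_⟩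
  intro u hu v hv huv hcv
  by_cases hu0 : u = v0 <;> by_cases hv0' : v = v0
  · exact absurd (hu0.trans hv0'.symm) huv
  · rw [hu0] at hcv ⊢
    rw [Function.update_self, Function.update_of_ne hv0'] at hcv
    have hvs : v ∈ s.erase v0 := mem_erase.mpr ⟨hv0', hv⟩
    have hnBl : v ∉ Bl := by
      intro h
      exact hcol (by rw [hcv]; exact mem_image_of_mem c h)
    rw [hBl, mem_filter] at hnBl
    push_neg at hnBl
    exact Or.inr (hnBl hvs)
  · rw [hv0'] at hcv ⊢
    rw [Function.update_self, Function.update_of_ne hu0] at hcv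
    have hus : u ∈ s.erase v0 := mem_erase.mpr ⟨hu0, hu⟩
    have hnBl : u ∉ Bl := by
      intro h
      exact hcol (by rw [← hcv]; exact mem_image_of_mem c h)
    rw [hBl, mem_filter] at hnBl
    push_neg at hnBl
    exact Or.inl (hnBl hus)
  · rw [Function.update_of_ne hu0, Function.update_of_ne hv0'] at hcv
    exact hc u (mem_erase.mpr ⟨hu0, hu⟩) v (mem_erase.mpr ⟨hv0', hv⟩) huv hcv

/-- a birth of color x inside a gap between consecutive cuts forces no x-crosser
at the left cut -/
lemma birth_forcing (C : Cfg V) (X : Finset V) (c : V → Fin k) (i j : Fin k)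
    (hd : C.Disj X c) (x : Fin k) (hx : x = i ∨ x = j) (m₁ m₂ : ℕ)
    (hbetween : ∀ y ∈ cuts C X c i j, ¬(m₁ < y ∧ y < m₂))
    (hbirth : 0 < (univ.filter fun v => v ∉ X ∧ c v = x ∧ m₁ ≤ C.a v ∧ C.a v < m₂).card) :
    (KJ C X c x m₁).card = 0 := by
  rw [card_pos] at hbirth
  obtain ⟨w, hw⟩ := hbirth
  simp only [mem_filter, mem_univ, true_and] at hw
  rw [card_eq_zero, eq_empty_iff_forall_notMem]
  intro z hz
  simp only [KJ, mem_filter, mem_univ, true_and] at hz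
  have hzw : z ≠ w := by
    intro h
    subst h
    omega
  have hcut : C.b z + 1 ∈ cuts C X c i j := by
    simp only [cuts, mem_insert, mem_image, mem_filter, mem_univ, true_and]
    right; right
    refine ⟨z, ⟨hz.1, ?_⟩, rfl⟩
    rcases hx with rfl | rfl
    · exact Or.inl hz.2.1
    · exact Or.inr hz.2.1
  have habz := C.hab z
  have habw := C.hab w
  rcases hd z w hz.1 hw.1 hzw (hz.2.1.trans hw.2.1.symm) with h | h
  · exact hbetween _ hcut ⟨by omega, by omega⟩
  · omega

/-- refined step bound on the difference of the two new class sizes, for p = 1 -/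
lemma Dstep (C : Cfg V) (X : Finset V) (c : V → Fin k) (i j : Fin k)
    (hd : C.Disj X c) (hij : i ≠ j) (m₁ m₂ : ℕ)
    (h1 : m₁ ∈ cuts C X c i j) (h2 : m₂ ∈ cuts C X c i j) (hlt : m₁ < m₂)
    (hbetween : ∀ y ∈ cuts C X c i j, ¬(m₁ < y ∧ y < m₂)) :
    Aval C X c i j m₂ + Aval C X c j i m₁ ≤ Aval C X c i j m₁ + Aval C X c j i m₂ + 3 ∧
    Aval C X c i j m₁ + Aval C X c j i m₂ ≤ Aval C X c i j m₂ + Aval C X c j i m₁ + 3 := by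
  have ekey : ∀ x : Fin k, Aval C X c i j m₁ + 0 = Aval C X c i j m₁ := fun _ => rfl
  -- abbreviations
  have e1 : Aval C X c i j m₂ + (KJ C X c j m₂).card
      = (PJ C X c j m₂).card + (SI C X c i m₂).card := by
    unfold Aval
    have := card_sdiff_add_card_eq_card (KJ_subset_PJ C X c j m₂)
    omega
  have e2 : Aval C X c i j m₁ + (KJ C X c j m₁).card
      = (PJ C X c j m₁).card + (SI C X c i m₁).card := by
    unfold Aval
    have := card_sdiff_add_card_eq_card (KJ_subset_PJ C X c j m₁)
    omega
  have e3 : Aval C X c j i m₂ + (KJ C X c i m₂).card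
      = (PJ C X c i m₂).card + (SI C X c j m₂).card := by
    unfold Aval
    have := card_sdiff_add_card_eq_card (KJ_subset_PJ C X c i m₂)
    omega
  have e4 : Aval C X c j i m₁ + (KJ C X c i m₁).card
      = (PJ C X c i m₁).card + (SI C X c j m₁).card := by
    unfold Aval
    have := card_sdiff_add_card_eq_card (KJ_subset_PJ C X c i m₁)
    omega
  -- births decompositions
  have hdecP : ∀ x : Fin k, (PJ C X c x m₂).card = (PJ C X c x m₁).card
      + (univ.filter fun v => v ∉ X ∧ c v = x ∧ m₁ ≤ C.a v ∧ C.a v < m₂).card := by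
    intro x
    rw [← card_union_of_disjoint (by
      rw [disjoint_left]
      intro v hv hv'
      simp only [PJ, mem_filter, mem_univ, true_and] at hv hv'
      omega)]
    congr 1
    ext v
    simp only [PJ, mem_union, mem_filter, mem_univ, true_and]
    constructor
    · rintro ⟨hv1, hv2, hv3⟩
      rcases lt_or_ge (C.a v) m₁ with h | h
      · exact Or.inl ⟨hv1, hv2, h⟩
      · exact Or.inr ⟨hv1, hv2, h, hv3⟩
    · rintro (⟨hv1, hv2, h⟩ | ⟨hv1, hv2, h, h'⟩)
      · exact ⟨hv1, hv2, by omega⟩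
      · exact ⟨hv1, hv2, h'⟩
  have hdecS : ∀ x : Fin k, (SI C X c x m₁).card = (SI C X c x m₂).card
      + (univ.filter fun v => v ∉ X ∧ c v = x ∧ m₁ ≤ C.a v ∧ C.a v < m₂).card := by
    intro x
    rw [← card_union_of_disjoint (by
      rw [disjoint_left]
      intro v hv hv'
      simp only [SI, mem_filter, mem_univ, true_and] at hv hv'
      omega)]
    congr 1
    ext v
    simp only [SI, mem_union, mem_filter, mem_univ, true_and]
    constructor
    · rintro ⟨hv1, hv2, hv3⟩
      rcases le_or_gt m₂ (C.a v) with h | h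
      · exact Or.inl ⟨hv1, hv2, h⟩
      · exact Or.inr ⟨hv1, hv2, hv3, h⟩
    · rintro (⟨hv1, hv2, h⟩ | ⟨hv1, hv2, h, h'⟩)
      · exact ⟨hv1, hv2, by omega⟩
      · exact ⟨hv1, hv2, h⟩
  have e5 := hdecP j
  have e6 := hdecP i
  have e7 := hdecS i
  have e8 := hdecS j
  have k1 := KJ_card_le_one C X c j m₁ hd
  have k2 := KJ_card_le_one C X c j m₂ hd
  have k3 := KJ_card_le_one C X c i m₁ hd
  have k4 := KJ_card_le_one C X c i m₂ hd
  have hbound : ∀ x : Fin k, x = i ∨ x = j →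
      (univ.filter fun v => v ∉ X ∧ c v = x ∧ m₁ ≤ C.a v ∧ C.a v < m₂).card ≤ 1 := by
    intro x hx
    rw [card_le_one]
    intro u hu v hv
    simp only [mem_filter, mem_univ, true_and] at hu hv
    by_contra huv
    have hcutmem : ∀ w : V, w ∉ X → c w = x → C.b w + 1 ∈ cuts C X c i j := by
      intro w hw hcw
      simp only [cuts, mem_insert, mem_image, mem_filter, mem_univ, true_and]
      refine Or.inr (Or.inr ⟨w, ⟨hw, ?_⟩, rfl⟩)
      rcases hx with rfl | rfl
      · exact Or.inl hcw
      · exact Or.inr hcw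
    have habu := C.hab u
    have habv := C.hab v
    rcases hd u v hu.1 hv.1 huv (hu.2.1.trans hv.2.1.symm) with h | h
    · exact hbetween _ (hcutmem u hu.1 hu.2.1) ⟨by omega, by omega⟩
    · exact hbetween _ (hcutmem v hv.1 hv.2.1) ⟨by omega, by omega⟩
  have hb1 := hbound j (Or.inr rfl)
  have hb2 := hbound i (Or.inl rfl)
  by_cases hbJ : 0 < (univ.filter fun v => v ∉ X ∧ c v = j ∧ m₁ ≤ C.a v ∧ C.a v < m₂).card
  · have hfJ := birth_forcing C X c i j hd j (Or.inr rfl) m₁ m₂ hbetween hbJ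
    by_cases hbI : 0 < (univ.filter fun v => v ∉ X ∧ c v = i ∧ m₁ ≤ C.a v ∧ C.a v < m₂).card
    · have hfI := birth_forcing C X c i j hd i (Or.inl rfl) m₁ m₂ hbetween hbI
      omega
    · omega
  · by_cases hbI : 0 < (univ.filter fun v => v ∉ X ∧ c v = i ∧ m₁ ≤ C.a v ∧ C.a v < m₂).card
    · have hfI := birth_forcing C X c i j hd i (Or.inl rfl) m₁ m₂ hbetween hbI
      omega
    · omega

/-- window IVT for the difference walk -/
lemma ivt_fin3 (S : Finset ℕ) (f g : ℕ → ℕ)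
    (step : ∀ m₁ ∈ S, ∀ m₂ ∈ S, m₁ < m₂ → (∀ y ∈ S, ¬(m₁ < y ∧ y < m₂)) →
      f m₂ + g m₁ ≤ f m₁ + g m₂ + 3 ∧ f m₁ + g m₂ ≤ f m₂ + g m₁ + 3)
    (m0 mN : ℕ) (h0 : m0 ∈ S) (hN : mN ∈ S) (h0N : m0 ≤ mN)
    (hstart : f m0 + 2 ≤ g m0) (hend : g mN + 2 ≤ f mN) :
    ∃ m ∈ S, f m ≤ g m + 1 ∧ g m ≤ f m + 1 := by
  obtain ⟨d, hd⟩ : ∃ d, mN - m0 ≤ d := ⟨mN - m0, le_rfl⟩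
  induction d generalizing m0 with
  | zero =>
    have : m0 = mN := by omega
    subst this
    omega
  | succ d ih =>
    have hne : m0 ≠ mN := by
      intro h
      subst h
      omega
    have hlt : m0 < mN := lt_of_le_of_ne h0N hne
    have hfilt : (S.filter fun x => m0 < x).Nonempty := ⟨mN, by simp [hN, hlt]⟩
    set m' := (S.filter fun x => m0 < x).min' hfilt with hm'
    have hm'mem : m' ∈ S ∧ m0 < m' := by
      have := (S.filter fun x => m0 < x).min'_mem hfilt
      simp only [mem_filter] at this
      exact this
    have hm'le : m' ≤ mN := by
      apply Finset.min'_le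
      simp [hN, hlt]
    have hbet : ∀ x ∈ S, ¬(m0 < x ∧ x < m') := by
      rintro x hx ⟨hx1, hx2⟩
      have : m' ≤ x := Finset.min'_le _ _ (by simp [hx, hx1])
      omega
    have hstep := step m0 h0 m' hm'mem.1 hm'mem.2 hbet
    by_cases hwin : f m' ≤ g m' + 1 ∧ g m' ≤ f m' + 1
    · exact ⟨m', hm'mem.1, hwin⟩
    push_neg at hwin
    have hm'start : f m' + 2 ≤ g m' := by
      rcases le_or_gt (f m' + 2) (g m') with h | h
      · exact h
      · omega
    exact ih m' hm'mem.1 hm'le hm'start (by omega)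

/-- extraction of the interval structure from a path decomposition -/
lemma extract (G : SimpleGraph V) (p : ℕ) (hpw : HasPathwidthLE G p) :
    ∃ C : Cfg V,
      (∀ u v, G.Adj u v → ¬(C.b u < C.a v ∨ C.b v < C.a u)) ∧
      (∀ m : ℕ, (univ.filter fun v => C.a v ≤ m ∧ m ≤ C.b v).card ≤ p + 1) := by
  obtain ⟨r, B, hcov, hedge, hcont, hcard⟩ := hpw
  have hne : ∀ v : V, (univ.filter fun i : Fin r => v ∈ B i).Nonempty := by
    intro v
    obtain ⟨i, hi⟩ := hcov v
    exact ⟨i, by simp [hi]⟩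
  set av : V → Fin r := fun v => ((univ.filter fun i : Fin r => v ∈ B i).min' (hne v)) with hav
  set bv : V → Fin r := fun v => ((univ.filter fun i : Fin r => v ∈ B i).max' (hne v)) with hbv
  have hmema : ∀ v, v ∈ B (av v) := by
    intro v
    have := (univ.filter fun i : Fin r => v ∈ B i).min'_mem (hne v)
    simpa [hav] using this
  have hmemb : ∀ v, v ∈ B (bv v) := by
    intro v
    have := (univ.filter fun i : Fin r => v ∈ B i).max'_mem (hne v)
    simpa [hbv] using this
  have hle : ∀ v (i : Fin r), v ∈ B i → av v ≤ i ∧ i ≤ bv v := by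
    intro v i hi
    constructor
    · exact Finset.min'_le _ _ (by simp [hi])
    · exact Finset.le_max' _ _ (by simp [hi])
  refine ⟨⟨fun v => (av v).val, fun v => (bv v).val, fun v => (hle v (av v) (hmema v)).2⟩,
    ?_, ?_⟩
  · intro u v huv
    obtain ⟨idx, hu, hv⟩ := hedge u v huv
    rintro (h | h)
    · have h1 := (hle u idx hu).2
      have h2 := (hle v idx hv).1
      simp only [Fin.le_def] at h1 h2
      simp only at h
      omega
    · have h1 := (hle v idx hv).2
      have h2 := (hle u idx hu).1
      simp only [Fin.le_def] at h1 h2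
      simp only at h
      omega
  · intro m
    by_cases hm : m < r
    · have hsub : (univ.filter fun v => (av v).val ≤ m ∧ m ≤ (bv v).val) ⊆ B ⟨m, hm⟩ := by
        intro v hv
        simp only [mem_filter, mem_univ, true_and] at hv
        exact hcont v (av v) ⟨m, hm⟩ (bv v) (by simp [Fin.le_def, hv.1])
          (by simp [Fin.le_def, hv.2]) (hmema v) (hmemb v)
      exact le_trans (card_le_card hsub) (hcard _)
    · have hempty : (univ.filter fun v => (av v).val ≤ m ∧ m ≤ (bv v).val) = ∅ := by
        apply filter_false_of_mem
        intro v _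
        rintro ⟨_, h2⟩
        have := (bv v).isLt
        omega
      rw [hempty]
      simp

/-- packaging a disjoint balanced coloring into the target statement -/
lemma package (G : SimpleGraph V) (p : ℕ) (C : Cfg V)
    (hadj : ∀ u v, G.Adj u v → ¬(C.b u < C.a v ∨ C.b v < C.a u))
    (X : Finset V) (c : V → Fin (p + 1)) (hd : C.Disj X c)
    (hbal : ∀ col col' : Fin (p + 1), cnt X c col ≤ cnt X c col' + 1)
    (hX : X.card ≤ p ^ 2) :
    AlmostEquitablyColorable G (p ^ 2) (p + 1) := by
  refine ⟨X, hX, fun w => c w.val, ?_, ?_⟩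
  · intro u v huv hcc
    have hGuv : G.Adj u.val v.val := huv
    have hne : (u : V) ≠ v := G.ne_of_adj hGuv
    have hu : (u : V) ∉ X := Finset.mem_compl.mp (Finset.mem_coe.mp u.2)
    have hv : (v : V) ∉ X := Finset.mem_compl.mp (Finset.mem_coe.mp v.2)
    exact hadj _ _ hGuv (hd u v hu hv hne hcc)
  · intro col col'
    have hcount : ∀ col0 : Fin (p + 1),
        (univ.filter fun w : ↥((↑(Xᶜ) : Set V)) => c w.val = col0).card = cnt X c col0 := by
      intro col0
      unfold cnt
      apply card_bij (fun (w : ↥((↑(Xᶜ) : Set V))) _ => w.val)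
      · intro w hw
        simp only [mem_filter, mem_univ, true_and] at hw ⊢
        exact ⟨Finset.mem_compl.mp (Finset.mem_coe.mp w.2), hw⟩
      · intro w1 _ w2 _ h
        exact Subtype.ext h
      · intro v hv
        simp only [mem_filter, mem_univ, true_and] at hv
        exact ⟨⟨v, Finset.mem_coe.mpr (Finset.mem_compl.mpr hv.1)⟩, by simp [hv.2], rfl⟩
    rw [hcount col, hcount col']
    exact hbal col col'

/-- the trivial case: few vertices -/
lemma trivial_case (G : SimpleGraph V) (p : ℕ) (hn : Fintype.card V ≤ p ^ 2 + p + 1) :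
    AlmostEquitablyColorable G (p ^ 2) (p + 1) := by
  obtain ⟨X, hXsub, hXcard⟩ := Finset.exists_subset_card_eq (s := (univ : Finset V))
    (n := min (p ^ 2) (Fintype.card V)) (by rw [card_univ]; omega)
  refine ⟨X, by omega, ?_⟩
  have hcardW : Fintype.card ↥((↑(Xᶜ) : Set V)) ≤ p + 1 := by
    have h1 : Fintype.card ↥((↑(Xᶜ) : Set V)) = (Xᶜ).card := Fintype.card_coe _
    have h2 : (Xᶜ).card = Fintype.card V - X.card := Finset.card_compl X
    omega
  let e := Fintype.equivFin ↥((↑(Xᶜ) : Set V))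
  let f : ↥((↑(Xᶜ) : Set V)) ↪ Fin (p + 1) :=
    e.toEmbedding.trans (Fin.castLEEmb hcardW)
  refine ⟨f, ?_, ?_⟩
  · intro u v huv hcc
    have hGuv : G.Adj u.val v.val := huv
    have hne : (u : V) ≠ v := G.ne_of_adj hGuv
    exact hne (congrArg Subtype.val (f.injective hcc))
  · intro col col'
    have hone : (univ.filter fun w => f w = col).card ≤ 1 := by
      rw [card_le_one]
      intro a ha b hb
      simp only [mem_filter] at ha hb
      exact f.injective (ha.2.trans hb.2.symm)
    omega

/-- the case p = 1 -/
lemma p1_case (G : SimpleGraph V) (C : Cfg V)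
    (hadj : ∀ u v, G.Adj u v → ¬(C.b u < C.a v ∨ C.b v < C.a u))
    (halive : ∀ m : ℕ, (univ.filter fun v => C.a v ≤ m ∧ m ≤ C.b v).card ≤ 2) :
    AlmostEquitablyColorable G (1 ^ 2) (1 + 1) := by
  obtain ⟨c0, hc0⟩ := exists_disj_coloring C 2 (by norm_num) halive
  by_cases hbal : ∀ col col' : Fin 2, cnt ∅ c0 col ≤ cnt ∅ c0 col' + 1
  · exact package G 1 C hadj ∅ c0 hc0 hbal (by simp)
  push_neg at hbal
  obtain ⟨j, i, hgt⟩ := hbal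
  have hij : i ≠ j := by
    intro h
    rw [h] at hgt
    omega
  -- D(0) = cnt i - cnt j ≤ -2, D(M) = cnt j - cnt i ≥ 2
  obtain ⟨m, hmcuts, hwin⟩ := ivt_fin3 (cuts C ∅ c0 i j)
    (Aval C ∅ c0 i j) (Aval C ∅ c0 j i)
    (fun m₁ hm₁ m₂ hm₂ hlt hb => Dstep C ∅ c0 i j hc0 hij m₁ m₂ hm₁ hm₂ hlt hb)
    0 ((univ.sup C.b) + 1) (cuts_zero C ∅ c0 i j) (cuts_top C ∅ c0 i j) (Nat.zero_le _)
    (by rw [Aval_zero, Aval_zero]; omega)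
    (by rw [Aval_top, Aval_top]; omega)
  have hcost := cuts_cost C ∅ c0 i j hc0 hij m hmcuts
  have hcutcard := Xcut_diff_card C ∅ c0 i j m hij
  have hdisj1 := exec_disj C ∅ c0 i j m hc0
  have hj1 := exec_cnt_j C ∅ c0 i j m hij
  have hi1 := exec_cnt_i C ∅ c0 i j m hij
  -- every color of Fin 2 is i or j
  have hcols : ∀ col : Fin 2, col = i ∨ col = j := by
    intro col
    have h1 := col.isLt
    have h2 := i.isLt
    have h3 := j.isLt
    have h4 : i.val ≠ j.val := fun h => hij (Fin.ext h)
    rcases eq_or_ne col.val i.val with h | h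
    · exact Or.inl (Fin.ext h)
    · refine Or.inr (Fin.ext ?_)
      omega
  apply package G 1 C hadj (Xcut C ∅ c0 i j m) (swapc C c0 i j m) hdisj1
  · intro col col'
    rcases hcols col with rfl | rfl <;> rcases hcols col' with rfl | rfl <;> omega
  · have hXe : (Xcut C ∅ c0 i j m) \ ∅ = Xcut C ∅ c0 i j m := by simp
    rw [hXe] at hcutcard
    omega

/-- the main case, for p ≠ 1 -/
lemma main_case (G : SimpleGraph V) (p : ℕ) (hp1 : p ≠ 1)
    (hn : p ^ 2 + p + 1 < Fintype.card V)
    (C : Cfg V)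
    (hadj : ∀ u v, G.Adj u v → ¬(C.b u < C.a v ∨ C.b v < C.a u))
    (halive : ∀ m : ℕ, (univ.filter fun v => C.a v ≤ m ∧ m ≤ C.b v).card ≤ p + 1) :
    AlmostEquitablyColorable G (p ^ 2) (p + 1) := by
  have hk : 1 ≤ p + 1 := Nat.succ_pos p
  obtain ⟨c0, hc0⟩ := exists_disj_coloring C (p + 1) hk halive
  set n := Fintype.card V with hn'
  have hple : 2 * p ≤ p * p + 1 := by nlinarith
  have hp2 : p ^ 2 = p * p := by ring
  have hNk : p + 1 ≤ n - 2 * p := by omega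
  set N := n - 2 * p with hN
  set q := N / (p + 1) with hq
  set rem := N % (p + 1) with hrem
  have hq1 : 1 ≤ q := (Nat.one_le_div_iff (by omega)).mpr hNk
  have hremlt : rem < p + 1 := Nat.mod_lt _ (by omega)
  set τ : Fin (p + 1) → ℕ := fun col => if col.val < rem then q + 1 else q with hτdef
  have hτ : ∀ col, τ col = q ∨ τ col = q + 1 := by
    intro col
    simp only [hτdef]
    split_ifs
    · exact Or.inr rfl
    · exact Or.inl rfl
  have hfinlt : (univ.filter fun col : Fin (p + 1) => col.val < rem).card = rem := by
    have hbij : (univ.filter fun col : Fin (p + 1) => col.val < rem).card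
        = (univ : Finset (Fin rem)).card := by
      apply card_bij (fun (col : Fin (p + 1)) h => (⟨col.val, (mem_filter.mp h).2⟩ : Fin rem))
      · intro col h
        exact mem_univ _
      · intro a ha b hb h
        exact Fin.ext (by simpa using congrArg Fin.val h)
      · intro b _
        refine ⟨⟨b.val, lt_trans b.isLt hremlt⟩, by simp [b.isLt], rfl⟩
    rw [hbij, card_univ, Fintype.card_fin]
  have hsumτ : ∑ col : Fin (p + 1), τ col = N := by
    have h1 : ∀ col : Fin (p + 1), τ col = q + (if col.val < rem then 1 else 0) := by
      intro col
      simp only [hτdef]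
      split_ifs <;> omega
    rw [sum_congr rfl (fun col _ => h1 col), sum_add_distrib, sum_const, card_univ,
      Fintype.card_fin, smul_eq_mul]
    have h2 : (∑ col : Fin (p + 1), if col.val < rem then 1 else 0)
        = ∑ col ∈ (univ.filter fun col : Fin (p + 1) => col.val < rem), 1 :=
      (sum_filter _ _).symm
    rw [h2, sum_const, smul_eq_mul, mul_one, hfinlt]
    have hdm := Nat.div_add_mod N (p + 1)
    rw [← hq, ← hrem] at hdm
    exact hdm
  have hinv : ∑ col ∈ (univ : Finset (Fin (p + 1))), cnt (∅ : Finset V) c0 col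
      = ∑ col ∈ univ, τ col + 2 * ((univ : Finset (Fin (p + 1))).card - 1) := by
    rw [sum_cnt]
    have hfe : (univ.filter fun v : V => v ∉ (∅ : Finset V)) = univ := by simp
    rw [hfe, card_univ, card_univ, Fintype.card_fin, hsumτ]
    omega
  obtain ⟨X, c, _, hXcard, hXdisj, hXcnt⟩ := rounds C q hq1 τ hτ univ ∅ c0 hc0
    (by intro col hcol; exact absurd (mem_univ col) hcol) hinv univ_nonempty
  have hXcard' : X.card ≤ p ^ 2 := by
    have hxe : (X \ ∅).card = X.card := by simp
    rw [card_univ, Fintype.card_fin] at hXcard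
    have h2p : 2 * p ≤ p * p ∨ p = 0 := by
      rcases Nat.lt_or_ge p 2 with h | h
      · interval_cases p
        · exact Or.inr rfl
        · exact absurd rfl hp1
      · exact Or.inl (by nlinarith)
    omega
  exact package G p C hadj X c hXdisj
    (fun col col' => by
      rw [hXcnt col, hXcnt col']
      rcases hτ col with h | h <;> rcases hτ col' with h' | h' <;> omega) hXcard'

end Stmt9

theorem stmt9 {V : Type} [Fintype V] [DecidableEq V] (G : SimpleGraph V) (p : ℕ)
    (hpw : HasPathwidthLE G p) :
    AlmostEquitablyColorable G (p ^ 2) (p + 1) := by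
  classical
  by_cases hn : Fintype.card V ≤ p ^ 2 + p + 1
  · exact Stmt9.trivial_case G p hn
  push_neg at hn
  obtain ⟨C, hadj, halive⟩ := Stmt9.extract G p hpw
  by_cases hp1 : p = 1
  · subst hp1
    exact Stmt9.p1_case G C hadj halive
  · exact Stmt9.main_case G p hp1 hn C hadj halive
end
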